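/- arXiv:0910.1909 — 4 statements merged into one kernel-verified Lean document; each statement's English description precedes it below -/
import Mathlib

section
/- Every element of the orthogonal group O(n) over the reals is a product of two involutions (and hence is conjugate in O(n) to its own inverse). -/
open Matrix Module LinearMap
open scoped RealInnerProductSpace

set_option linter.unusedSectionVars false
set_option maxHeartbeats 1600000

section aux
variable {E : Type*} [NormedAddCommGroup E] [InnerProductSpace ℝ E] [FiniteDimensional ℝ E]

lemma my_restrict_mul (f g : E →ₗ[ℝ] E) {W : Submodule ℝ E}
    (hf : ∀ x ∈ W, f x ∈ W) (hg : ∀ x ∈ W, g x ∈ W) :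
    (f.restrict hf) * (g.restrict hg) = (f * g).restrict (fun x hx => hf _ (hg x hx)) := by
  ext x
  simp [LinearMap.restrict_apply, Module.End.mul_apply]

lemma my_adjoint_restrict (f : E →ₗ[ℝ] E) {W : Submodule ℝ E}
    (hf : ∀ x ∈ W, f x ∈ W) (hf' : ∀ x ∈ W, LinearMap.adjoint f x ∈ W) :
    LinearMap.adjoint (f.restrict hf) = (LinearMap.adjoint f).restrict hf' := by
  symm
  rw [LinearMap.eq_adjoint_iff]
  intro x y
  simp only [Submodule.coe_inner, LinearMap.restrict_coe_apply]
  exact LinearMap.adjoint_inner_left f _ _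


lemma my_base (f : E →ₗ[ℝ] E) (μ : ℝ) (hdim : finrank ℝ E ≤ 2)
    (h1 : LinearMap.adjoint f * f = 1) (h2 : f + LinearMap.adjoint f = μ • 1) :
    ∃ b : E →ₗ[ℝ] E, LinearMap.adjoint b = b ∧ b * b = 1 ∧
      b * f * b = LinearMap.adjoint f := by
  have hfadj : LinearMap.adjoint f = μ • 1 - f := by
    rw [← h2]; abel
  set Y : E →ₗ[ℝ] E := f - (μ/2) • 1 with hYdef
  have hYadj : LinearMap.adjoint Y = -Y := by
    rw [hYdef, ← LinearMap.star_eq_adjoint]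
    rw [star_sub, star_smul, LinearMap.star_eq_adjoint, hfadj]
    simp only [star_trivial, star_one]
    module
  have hf2 : f * f = μ • f - 1 := by
    have := h1
    rw [hfadj] at this
    rw [sub_mul, smul_mul_assoc, one_mul] at this
    linear_combination (norm := module) -this
  have hY2 : Y * Y = (μ^2/4 - 1) • (1 : E →ₗ[ℝ] E) := by
    rw [hYdef]
    simp only [sub_mul, mul_sub, smul_mul_assoc, mul_smul_comm, one_mul, mul_one, smul_smul]
    rw [hf2]
    match_scalars <;> ring
  by_cases hE : Subsingleton E
  · exact ⟨1, Subsingleton.elim _ _, Subsingleton.elim _ _, Subsingleton.elim _ _⟩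
  have : Nontrivial E := not_subsingleton_iff_nontrivial.mp hE
  have hYY : ∀ x : E, Y (Y x) = (μ^2/4 - 1) • x := by
    intro x
    have h2' : (Y * Y) x = (μ^2/4 - 1) • x := by rw [hY2]; simp
    simpa using h2'
  have hnorm : ∀ x : E, ‖Y x‖^2 = (1 - μ^2/4) * ‖x‖^2 := by
    intro x
    have h := LinearMap.adjoint_inner_right Y (Y x) x
    rw [hYadj] at h
    have h3 : ⟪Y (Y x), x⟫ = (μ^2/4 - 1) * ⟪x, x⟫ := by
      rw [hYY, real_inner_smul_left]
    have h4 : ⟪Y x, (-Y) x⟫ = -⟪Y x, Y x⟫ := by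
      simp only [LinearMap.neg_apply, inner_neg_right]
    have hiv : ⟪Y x, Y x⟫ = (1 - μ^2/4) * ⟪x, x⟫ := by
      rw [h4, h3] at h
      linarith
    rw [← real_inner_self_eq_norm_sq, ← real_inner_self_eq_norm_sq, hiv]
  have hμ4 : μ^2 ≤ 4 := by
    obtain ⟨x, hx⟩ := exists_ne (0 : E)
    have h := hnorm x
    have hx0 : 0 < ‖x‖ := norm_pos_iff.mpr hx
    have hx' : 0 < ‖x‖^2 := by positivity
    nlinarith [sq_nonneg ‖Y x‖]
  by_cases hcase : μ^2 = 4
  · have hY0 : Y = 0 := by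
      ext x
      have h := hnorm x
      rw [hcase] at h
      have : ‖Y x‖^2 = 0 := by rw [h]; ring
      simpa [pow_eq_zero_iff] using this
    have hfval : f = (μ/2) • 1 := by
      have h0 : f - (μ/2) • 1 = 0 := hY0
      linear_combination (norm := module) h0
    refine ⟨1, ?_, ?_, ?_⟩
    · rw [← LinearMap.star_eq_adjoint, star_one]
    · rw [one_mul]
    · rw [one_mul, mul_one, hfadj, hfval]
      match_scalars <;> ring
  -- now μ² < 4
  have hlt : μ^2 < 4 := lt_of_le_of_ne hμ4 hcase
  set c : ℝ := Real.sqrt (1 - μ^2/4) with hcdef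
  have hc2 : c^2 = 1 - μ^2/4 := Real.sq_sqrt (by nlinarith)
  have hcpos : 0 < c := Real.sqrt_pos.mpr (by nlinarith)
  obtain ⟨e₀, he₀⟩ := exists_ne (0 : E)
  set e : E := ‖e₀‖⁻¹ • e₀ with hedef
  have he : ‖e‖ = 1 := norm_smul_inv_norm he₀
  set u : E := c⁻¹ • Y e with hudef
  have hYe : Y e = c • u := by
    rw [hudef, smul_smul, mul_inv_cancel₀ hcpos.ne', one_smul]
  have hu : ‖u‖ = 1 := by
    rw [hudef, norm_smul]
    have h1' : ‖Y e‖^2 = c^2 := by rw [hnorm, he, ← hc2]; ring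
    have h2' : ‖Y e‖ = c := by
      nlinarith [norm_nonneg (Y e), hcpos]
    rw [h2', Real.norm_eq_abs, abs_of_pos (inv_pos.mpr hcpos)]
    exact inv_mul_cancel₀ hcpos.ne'
  have hYu : Y u = -(c • e) := by
    rw [hudef, _root_.map_smul, hYY, smul_smul]
    have : c⁻¹ * (μ^2/4 - 1) = -c := by
      field_simp
      nlinarith
    rw [this, neg_smul]
  have hue : ⟪e, u⟫ = 0 := by
    have h := LinearMap.adjoint_inner_left Y e e
    rw [hYadj] at h
    simp only [LinearMap.neg_apply, inner_neg_left] at h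
    have h2' : ⟪Y e, e⟫ = 0 := by
      have := real_inner_comm (Y e) e
      linarith [h, this.symm ▸ h]
    rw [hudef, real_inner_comm, inner_smul_left]
    simp [h2']
  have hue' : ⟪u, e⟫ = 0 := by rw [real_inner_comm]; exact hue
  have horth : Orthonormal ℝ ![e, u] := by
    rw [orthonormal_iff_ite]
    intro i j
    fin_cases i <;> fin_cases j <;>
      simp [he, hu, hue, hue', real_inner_self_eq_norm_sq]
  have hli := horth.linearIndependent
  have hrank2 : finrank ℝ E = 2 := by
    have hge := hli.fintype_card_le_finrank
    simp only [Fintype.card_fin] at hge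
    omega
  have hcard : Fintype.card (Fin 2) = finrank ℝ E := by simp [hrank2]
  set L : Submodule ℝ E := ℝ ∙ e with hLdef
  set P : E →ₗ[ℝ] E := ((L.subtypeL ∘L Submodule.orthogonalProjectionOnto L : E →L[ℝ] E) : E →ₗ[ℝ] E)
    with hPdef
  have hsym : P.IsSymmetric := L.starProjection_isSymmetric
  have hPapp : ∀ x : E, P x = (Submodule.orthogonalProjectionOnto L x : E) := fun x => rfl
  have hPe : P e = e := by
    rw [hPapp, ← Submodule.starProjection_apply, Submodule.starProjection_eq_self_iff]
    exact Submodule.mem_span_singleton_self e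
  have hPu : P u = 0 := by
    rw [hPapp]
    have : u ∈ Lᗮ := Submodule.mem_orthogonal_singleton_iff_inner_right.mpr hue
    rw [Submodule.orthogonalProjectionOnto_apply_of_mem_orthogonal this]
    simp
  have hPP : P * P = P := by
    ext x
    simp only [Module.End.mul_apply]
    rw [hPapp, hPapp]
    exact Submodule.starProjection_eq_self_iff.mpr ((Submodule.orthogonalProjectionOnto L x).2)
  set b : E →ₗ[ℝ] E := (2:ℝ) • P - 1 with hbdef
  have hPadj : LinearMap.adjoint P = P := ((LinearMap.isSymmetric_iff_isSelfAdjoint P).mp hsym)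
  have hbadj : LinearMap.adjoint b = b := by
    rw [hbdef, ← LinearMap.star_eq_adjoint, star_sub, star_smul, star_one,
      LinearMap.star_eq_adjoint, hPadj]
    simp
  have hbb : b * b = 1 := by
    rw [hbdef]
    simp only [sub_mul, mul_sub, smul_mul_assoc, mul_smul_comm, one_mul, mul_one, smul_smul]
    rw [hPP]
    match_scalars <;> ring
  have hbe : b e = e := by
    rw [hbdef]
    simp only [LinearMap.sub_apply, LinearMap.smul_apply, Module.End.one_apply, hPe]
    match_scalars; ring
  have hbu : b u = -u := by
    rw [hbdef]
    simp only [LinearMap.sub_apply, LinearMap.smul_apply, Module.End.one_apply, hPu]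
    match_scalars; ring
  have hanti : b * Y = -(Y * b) := by
    set B := basisOfLinearIndependentOfCardEqFinrank hli hcard with hBdef
    have hBcoe : ∀ i, B i = ![e, u] i := fun i => by
      rw [hBdef, coe_basisOfLinearIndependentOfCardEqFinrank]
    apply B.ext
    intro i
    simp only [Module.End.mul_apply, LinearMap.neg_apply, hBcoe]
    fin_cases i
    · show b (Y e) = -(Y (b e))
      rw [hYe, _root_.map_smul, hbu, hbe, hYe]
      simp
    · show b (Y u) = -(Y (b u))
      rw [hYu, _root_.map_neg, _root_.map_smul, hbe, hbu, _root_.map_neg, hYu]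
      simp
  refine ⟨b, hbadj, hbb, ?_⟩
  have hf_eq : f = Y + (μ/2) • 1 := by rw [hYdef]; abel
  have hexp : b * f * b = (b * Y) * b + (μ/2) • (b * b) := by
    rw [hf_eq]
    simp only [mul_add, add_mul, mul_smul_comm, smul_mul_assoc, mul_one, one_mul]
  rw [hexp, hanti, hbb, neg_mul, mul_assoc, hbb, mul_one, hfadj, hf_eq]
  module


lemma my_glue {W : Submodule ℝ E} {f : E →ₗ[ℝ] E}
    (hfW : ∀ x ∈ W, f x ∈ W) (hfW' : ∀ x ∈ Wᗮ, f x ∈ Wᗮ)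
    (hgW : ∀ x ∈ W, LinearMap.adjoint f x ∈ W)
    (hgW' : ∀ x ∈ Wᗮ, LinearMap.adjoint f x ∈ Wᗮ)
    {b₁ : W →ₗ[ℝ] W} {b₂ : Wᗮ →ₗ[ℝ] Wᗮ}
    (hb₁a : LinearMap.adjoint b₁ = b₁) (hb₁b : b₁ * b₁ = 1)
    (hb₁f : b₁ * f.restrict hfW * b₁ = (LinearMap.adjoint f).restrict hgW)
    (hb₂a : LinearMap.adjoint b₂ = b₂) (hb₂b : b₂ * b₂ = 1)
    (hb₂f : b₂ * f.restrict hfW' * b₂ = (LinearMap.adjoint f).restrict hgW') :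
    ∃ b : E →ₗ[ℝ] E, LinearMap.adjoint b = b ∧ b * b = 1 ∧
      b * f * b = LinearMap.adjoint f := by
  set p₁ : E →ₗ[ℝ] W := ((Submodule.orthogonalProjectionOnto W : E →L[ℝ] W) : E →ₗ[ℝ] W) with hp₁def
  set p₂ : E →ₗ[ℝ] Wᗮ := ((Submodule.orthogonalProjectionOnto Wᗮ : E →L[ℝ] Wᗮ) : E →ₗ[ℝ] Wᗮ) with hp₂def
  set b : E →ₗ[ℝ] E := W.subtype ∘ₗ (b₁ ∘ₗ p₁) + Wᗮ.subtype ∘ₗ (b₂ ∘ₗ p₂) with hbdef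
  have hp₁W : ∀ w : W, p₁ ↑w = w := fun w => Submodule.orthogonalProjectionOnto_mem_subspace_eq_self w
  have hp₁W' : ∀ w : Wᗮ, p₁ ↑w = 0 := fun w =>
    Submodule.orthogonalProjectionOnto_apply_of_mem_orthogonal w.2
  have hp₂W' : ∀ w : Wᗮ, p₂ ↑w = w := fun w => Submodule.orthogonalProjectionOnto_mem_subspace_eq_self w
  have hp₂W : ∀ w : W, p₂ ↑w = 0 := fun w =>
    Submodule.orthogonalProjectionOnto_apply_of_mem_orthogonal
      (W.le_orthogonal_orthogonal w.2)
  have hdecomp : ∀ x : E, ((p₁ x : E) + (p₂ x : E)) = x := fun x =>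
    W.starProjection_add_starProjection_orthogonal x
  have hbapp : ∀ x : E, b x = ↑(b₁ (p₁ x)) + ↑(b₂ (p₂ x)) := fun x => rfl
  have hperp : ∀ (w : W) (z : Wᗮ), ⟪(w : E), (z : E)⟫ = 0 := fun w z => z.2 w w.2
  have hperp' : ∀ (z : Wᗮ) (w : W), ⟪(z : E), (w : E)⟫ = 0 := fun z w => by
    rw [real_inner_comm]; exact hperp w z
  -- b is self-adjoint
  have hkey : ∀ x y : E, ⟪b x, y⟫ = ⟪b₁ (p₁ x), p₁ y⟫ + ⟪b₂ (p₂ x), p₂ y⟫ := by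
    intro x y
    conv_lhs => rw [hbapp, ← hdecomp y]
    rw [inner_add_left, inner_add_right, inner_add_right]
    rw [hperp (b₁ (p₁ x)) (p₂ y), hperp' (b₂ (p₂ x)) (p₁ y)]
    rw [Submodule.coe_inner, Submodule.coe_inner]
    ring
  have hb₁sym : ∀ v w : W, ⟪b₁ v, w⟫ = ⟪v, b₁ w⟫ := by
    intro v w
    have h := LinearMap.adjoint_inner_left b₁ w v
    rw [hb₁a] at h
    exact h
  have hb₂sym : ∀ v w : Wᗮ, ⟪b₂ v, w⟫ = ⟪v, b₂ w⟫ := by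
    intro v w
    have h := LinearMap.adjoint_inner_left b₂ w v
    rw [hb₂a] at h
    exact h
  have hbadj : LinearMap.adjoint b = b := by
    symm
    rw [LinearMap.eq_adjoint_iff]
    intro x y
    rw [hkey x y]
    have h2 : ⟪x, b y⟫ = ⟪b y, x⟫ := real_inner_comm _ _
    rw [h2, hkey y x, hb₁sym, hb₂sym,
      real_inner_comm (b₁ (p₁ y)) (p₁ x), real_inner_comm (b₂ (p₂ y)) (p₂ x)]
  -- projections of b
  have hp₁b : ∀ x : E, p₁ (b x) = b₁ (p₁ x) := by
    intro x
    rw [hbapp, _root_.map_add, hp₁W, hp₁W', add_zero]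
  have hp₂b : ∀ x : E, p₂ (b x) = b₂ (p₂ x) := by
    intro x
    rw [hbapp, _root_.map_add, hp₂W, hp₂W', zero_add]
  have hbb : b * b = 1 := by
    ext x
    rw [Module.End.mul_apply, Module.End.one_apply, hbapp (b x), hp₁b, hp₂b]
    have e₁ : b₁ (b₁ (p₁ x)) = p₁ x := by
      have := congrArg (fun g => g (p₁ x)) hb₁b
      simpa using this
    have e₂ : b₂ (b₂ (p₂ x)) = p₂ x := by
      have := congrArg (fun g => g (p₂ x)) hb₂b
      simpa using this
    rw [e₁, e₂, hdecomp]
  refine ⟨b, hbadj, hbb, ?_⟩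
  ext x
  have hfsplit : f (b x) = ↑((f.restrict hfW) (b₁ (p₁ x))) + ↑((f.restrict hfW') (b₂ (p₂ x))) := by
    rw [hbapp, _root_.map_add, LinearMap.restrict_coe_apply, LinearMap.restrict_coe_apply]
  have hp₁fb : p₁ (f (b x)) = (f.restrict hfW) (b₁ (p₁ x)) := by
    rw [hfsplit, _root_.map_add, hp₁W, hp₁W', add_zero]
  have hp₂fb : p₂ (f (b x)) = (f.restrict hfW') (b₂ (p₂ x)) := by
    rw [hfsplit, _root_.map_add, hp₂W, hp₂W', zero_add]
  rw [Module.End.mul_apply, Module.End.mul_apply, hbapp (f (b x)), hp₁fb, hp₂fb]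
  have e₁ : b₁ ((f.restrict hfW) (b₁ (p₁ x))) = ((LinearMap.adjoint f).restrict hgW) (p₁ x) := by
    have := congrArg (fun g => g (p₁ x)) hb₁f
    simpa using this
  have e₂ : b₂ ((f.restrict hfW') (b₂ (p₂ x))) =
      ((LinearMap.adjoint f).restrict hgW') (p₂ x) := by
    have := congrArg (fun g => g (p₂ x)) hb₂f
    simpa using this
  rw [e₁, e₂, LinearMap.restrict_coe_apply, LinearMap.restrict_coe_apply,
    ← _root_.map_add, hdecomp]

end aux

lemma my_key (k : ℕ) :
    ∀ (E : Type) (_ : NormedAddCommGroup E) (_ : InnerProductSpace ℝ E)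
      (_ : FiniteDimensional ℝ E), finrank ℝ E ≤ k → ∀ f : E →ₗ[ℝ] E,
      LinearMap.adjoint f * f = 1 →
      ∃ b : E →ₗ[ℝ] E, LinearMap.adjoint b = b ∧ b * b = 1 ∧
        b * f * b = LinearMap.adjoint f := by
  induction k with
  | zero =>
    intro E _ _ _ hd f hf
    have h0 : finrank ℝ E = 0 := Nat.le_zero.mp hd
    have : Subsingleton E := finrank_zero_iff.mp h0
    exact ⟨1, Subsingleton.elim _ _, Subsingleton.elim _ _, Subsingleton.elim _ _⟩
  | succ k ih =>
    intro E _ _ _ hd f hf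
    by_cases hE : Subsingleton E
    · exact ⟨1, Subsingleton.elim _ _, Subsingleton.elim _ _, Subsingleton.elim _ _⟩
    have hnt : Nontrivial E := not_subsingleton_iff_nontrivial.mp hE
    set g : E →ₗ[ℝ] E := LinearMap.adjoint f with hgdef
    have hfg : f * g = 1 := mul_eq_one_comm.mpr hf
    have hfgx : ∀ x : E, f (g x) = x := fun x => by
      have := congrArg (fun h => h x) hfg; simpa using this
    have hgfx : ∀ x : E, g (f x) = x := fun x => by
      have := congrArg (fun h => h x) hf; simpa using this
    set S : E →ₗ[ℝ] E := f + g with hSdef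
    have hS : S.IsSymmetric := by
      intro x y
      simp only [hSdef, LinearMap.add_apply, inner_add_left, inner_add_right]
      rw [LinearMap.adjoint_inner_left f y x]
      rw [← LinearMap.adjoint_inner_right f x y]
      ring
    have hev := hS.hasEigenvalue_iSup_of_finiteDimensional
    obtain ⟨v, hv⟩ := hev.exists_hasEigenvector
    set μ : ℝ := (⨆ x : { x : E // x ≠ 0 }, RCLike.re ⟪S x, x⟫ / ‖(x : E)‖ ^ 2 : ℝ) with hμdef
    have hSv : S v = μ • v := hv.apply_eq_smul
    have hv0 : v ≠ 0 := hv.right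
    have hgv : g v = μ • v - f v := by
      have h : f v + g v = μ • v := hSv
      exact eq_sub_of_add_eq' h
    set W : Submodule ℝ E := Submodule.span ℝ {v, f v} with hWdef
    have hvW : v ∈ W := Submodule.subset_span (Set.mem_insert _ _)
    have hfvW : f v ∈ W := Submodule.subset_span (Set.mem_insert_of_mem _ rfl)
    have hffv : f (f v) = μ • f v - v := by
      have h := congrArg f hgv
      rw [hfgx, _root_.map_sub, _root_.map_smul] at h
      linear_combination (norm := module) h
    have hgfv : g (f v) = v := hgfx v
    have hW_f : ∀ x ∈ W, f x ∈ W := by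
      have hle : W.map f ≤ W := by
        rw [hWdef, Submodule.map_span, Submodule.span_le]
        rintro y ⟨x, hx, rfl⟩
        rcases Set.mem_insert_iff.mp hx with h | h
        · subst h; exact hfvW
        · rw [Set.mem_singleton_iff] at h; subst h
          rw [hffv]
          exact Submodule.sub_mem _ (Submodule.smul_mem _ _ hfvW) hvW
      exact fun x hx => hle (Submodule.mem_map_of_mem hx)
    have hW_g : ∀ x ∈ W, g x ∈ W := by
      have hle : W.map g ≤ W := by
        rw [hWdef, Submodule.map_span, Submodule.span_le]
        rintro y ⟨x, hx, rfl⟩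
        rcases Set.mem_insert_iff.mp hx with h | h
        · subst h; rw [hgv]
          exact Submodule.sub_mem _ (Submodule.smul_mem _ _ hvW) hfvW
        · rw [Set.mem_singleton_iff] at h; subst h
          rw [hgfv]; exact hvW
      exact fun x hx => hle (Submodule.mem_map_of_mem hx)
    have hW'_f : ∀ x ∈ Wᗮ, f x ∈ Wᗮ := by
      intro x hx
      rw [Submodule.mem_orthogonal]
      intro u hu
      rw [← LinearMap.adjoint_inner_left f x u]
      exact hx _ (hW_g u hu)
    have hW'_g : ∀ x ∈ Wᗮ, g x ∈ Wᗮ := by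
      intro x hx
      rw [Submodule.mem_orthogonal]
      intro u hu
      rw [hgdef, LinearMap.adjoint_inner_right f u x]
      exact hx _ (hW_f u hu)
    have hSW : ∀ x ∈ W, S x = μ • x := by
      have hle : W ≤ Module.End.eigenspace S μ := by
        rw [hWdef, Submodule.span_le]
        rintro x hx
        rcases Set.mem_insert_iff.mp hx with h | h
        · subst h; exact Module.End.mem_eigenspace_iff.mpr hSv
        · rw [Set.mem_singleton_iff] at h; subst h
          apply Module.End.mem_eigenspace_iff.mpr
          have hc : S (f v) = f (S v) := by
            simp only [hSdef, LinearMap.add_apply, _root_.map_add]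
            rw [hfgx, hgfx]
          rw [hc, hSv, _root_.map_smul]
      exact fun x hx => Module.End.mem_eigenspace_iff.mp (hle hx)
    have hdimW : finrank ℝ W ≤ 2 := by
      classical
      refine le_trans (finrank_span_le_card _) ?_
      rw [Set.toFinset_insert, Set.toFinset_singleton]
      exact le_trans (Finset.card_insert_le _ _) (by simp)
    have hWpos : 0 < finrank ℝ W :=
      Module.finrank_pos_iff_exists_ne_zero.mpr
        ⟨⟨v, hvW⟩, by simp [Submodule.mk_eq_zero, hv0]⟩
    have hfrk : finrank ℝ W + finrank ℝ Wᗮ = finrank ℝ E :=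
      Submodule.finrank_add_finrank_orthogonal W
    have hd' : finrank ℝ Wᗮ ≤ k := by omega
    have hadj₁ : LinearMap.adjoint (f.restrict hW_f) = g.restrict hW_g :=
      my_adjoint_restrict f hW_f hW_g
    have h1W : LinearMap.adjoint (f.restrict hW_f) * f.restrict hW_f = 1 := by
      rw [hadj₁, my_restrict_mul g f hW_g hW_f]
      ext x
      simp [LinearMap.restrict_apply, hgfx]
    have h2W : f.restrict hW_f + LinearMap.adjoint (f.restrict hW_f) = μ • 1 := by
      rw [hadj₁]
      ext x
      have hx : S (x : E) = μ • (x : E) := hSW x x.2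
      simp only [LinearMap.add_apply, LinearMap.smul_apply, Module.End.one_apply,
        Submodule.coe_add, SetLike.val_smul, LinearMap.restrict_coe_apply]
      simpa [hSdef] using hx
    obtain ⟨b₁, hb₁a, hb₁b, hb₁f⟩ := my_base (f.restrict hW_f) μ hdimW h1W h2W
    rw [hadj₁] at hb₁f
    have hadj₂ : LinearMap.adjoint (f.restrict hW'_f) = g.restrict hW'_g :=
      my_adjoint_restrict f hW'_f hW'_g
    have h1W' : LinearMap.adjoint (f.restrict hW'_f) * f.restrict hW'_f = 1 := by
      rw [hadj₂, my_restrict_mul g f hW'_g hW'_f]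
      ext x
      simp [LinearMap.restrict_apply, hgfx]
    obtain ⟨b₂, hb₂a, hb₂b, hb₂f⟩ :=
      ih ↥Wᗮ inferInstance inferInstance inferInstance hd' (f.restrict hW'_f) h1W'
    rw [hadj₂] at hb₂f
    exact my_glue hW_f hW'_f hW_g hW'_g hb₁a hb₁b hb₁f hb₂a hb₂b hb₂f

/-- Every element of the orthogonal group `O(n)` over `ℝ` is a product of two
involutions of `O(n)` (hence conjugate in `O(n)` to its own inverse). -/
theorem orthogonal_strongly_real (n : ℕ) (A : Matrix (Fin n) (Fin n) ℝ)
    (hA : Aᵀ * A = 1) :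
    ∃ B C : Matrix (Fin n) (Fin n) ℝ,
      Bᵀ * B = 1 ∧ Cᵀ * C = 1 ∧ B * B = 1 ∧ C * C = 1 ∧ A = B * C := by
  have hconj : ∀ M : Matrix (Fin n) (Fin n) ℝ, Mᴴ = Mᵀ := fun M => by
    ext i j; simp [Matrix.conjTranspose_apply]
  have hmul : ∀ M N : Matrix (Fin n) (Fin n) ℝ,
      Matrix.toEuclideanLin (M * N) = Matrix.toEuclideanLin M * Matrix.toEuclideanLin N := by
    intro M N
    simp only [Matrix.toEuclideanLin_eq_toLin]
    rw [Matrix.toLin_mul (PiLp.basisFun 2 ℝ (Fin n)) (PiLp.basisFun 2 ℝ (Fin n))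
      (PiLp.basisFun 2 ℝ (Fin n))]
    rfl
  have hone : Matrix.toEuclideanLin (1 : Matrix (Fin n) (Fin n) ℝ) = 1 := by
    simp only [Matrix.toEuclideanLin_eq_toLin]
    rw [Matrix.toLin_one]
    rfl
  set f := Matrix.toEuclideanLin A with hfdef
  have hadj : ∀ M : Matrix (Fin n) (Fin n) ℝ,
      LinearMap.adjoint (Matrix.toEuclideanLin M) = Matrix.toEuclideanLin Mᵀ := fun M => by
    rw [← hconj, Matrix.toEuclideanLin_conjTranspose_eq_adjoint]
  have hf : LinearMap.adjoint f * f = 1 := by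
    rw [hfdef, hadj, ← hmul, hA, hone]
  obtain ⟨b, hba, hbb, hbf⟩ := my_key n (EuclideanSpace ℝ (Fin n))
    inferInstance inferInstance inferInstance (by simp) f hf
  set B := Matrix.toEuclideanLin.symm b with hBdef
  have hB : Matrix.toEuclideanLin B = b := Matrix.toEuclideanLin.apply_symm_apply b
  have hinj : Function.Injective (Matrix.toEuclideanLin
      (𝕜 := ℝ) (m := Fin n) (n := Fin n)) := Matrix.toEuclideanLin.injective
  have hBsym : Bᵀ = B := by
    apply hinj
    rw [← hadj, hB, hba]
  have hBB : B * B = 1 := by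
    apply hinj
    rw [hmul, hB, hbb, hone]
  have hBAB : B * A * B = Aᵀ := by
    apply hinj
    rw [hmul, hmul, hB, ← hfdef, ← hadj, hbf]
  refine ⟨B, B * A, ?_, ?_, hBB, ?_, ?_⟩
  · rw [hBsym, hBB]
  · have hCsym : (B * A)ᵀ = B * A := by
      rw [Matrix.transpose_mul, hBsym, ← hBAB]
      rw [Matrix.mul_assoc, Matrix.mul_assoc, hBB, Matrix.mul_one]
    rw [hCsym]
    calc (B * A) * (B * A) = (B * A * B) * A := by noncomm_ring
    _ = 1 := by rw [hBAB, hA]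
  · calc (B * A) * (B * A) = (B * A * B) * A := by noncomm_ring
    _ = 1 := by rw [hBAB, hA]
  · rw [← Matrix.mul_assoc, hBB, Matrix.one_mul]
end

section
/- An element T ∈ SO(n) is conjugate in SO(n) to its inverse if and only if either n ≢ 2 (mod 4), or T has 1 or −1 as an eigenvalue. -/
open Matrix

namespace Matrix.PosSemidef
open scoped MatrixOrder

noncomputable def sqrt {n : ℕ} {A : Matrix (Fin n) (Fin n) ℝ} (_hA : A.PosSemidef) :
    Matrix (Fin n) (Fin n) ℝ := CFC.sqrt A

lemma posSemidef_sqrt {n : ℕ} {A : Matrix (Fin n) (Fin n) ℝ} (hA : A.PosSemidef) :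
    hA.sqrt.PosSemidef := (CFC.sqrt_nonneg A).posSemidef

lemma sqrt_mul_self {n : ℕ} {A : Matrix (Fin n) (Fin n) ℝ} (hA : A.PosSemidef) :
    hA.sqrt * hA.sqrt = A := CFC.sqrt_mul_sqrt_self A hA.nonneg

lemma eq_of_sq_eq_sq {n : ℕ} {A B : Matrix (Fin n) (Fin n) ℝ} (hA : A.PosSemidef)
    (hB : B.PosSemidef) (h : A ^ 2 = B ^ 2) : A = B := by
  rw [← CFC.sqrt_sq A hA.nonneg, h, CFC.sqrt_sq B hB.nonneg]

end Matrix.PosSemidef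
namespace SOnAux
variable {n : ℕ}

abbrev M (n : ℕ) := Matrix (Fin n) (Fin n) ℝ

lemma real_transpose_eq_conjTranspose (A : M n) : Aᴴ = Aᵀ :=
  Matrix.conjTranspose_eq_transpose_of_trivial A

/-- orthogonal X commuting with a psd matrix commutes with its sqrt -/
lemma orth_commute_sqrt {B X : M n} (hB : B.PosSemidef)
    (hX : Xᵀ * X = 1) (hXB : X * B = B * X) : X * hB.sqrt = hB.sqrt * X := by
  have hXX : X * Xᵀ = 1 := mul_eq_one_comm.mp hX
  have hP : (X * hB.sqrt * Xᴴ).PosSemidef := hB.posSemidef_sqrt.mul_mul_conjTranspose_same X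
  rw [real_transpose_eq_conjTranspose] at hP
  have hsq : (X * hB.sqrt * Xᵀ) ^ 2 = hB.sqrt ^ 2 := by
    have h1 : (X * hB.sqrt * Xᵀ) ^ 2 = X * (hB.sqrt * hB.sqrt) * Xᵀ := by
      rw [pow_two]
      calc X * hB.sqrt * Xᵀ * (X * hB.sqrt * Xᵀ)
          = X * hB.sqrt * (Xᵀ * X) * (hB.sqrt * Xᵀ) := by simp only [mul_assoc]
        _ = X * (hB.sqrt * hB.sqrt) * Xᵀ := by rw [hX]; simp only [mul_one, mul_assoc]
    rw [h1, hB.sqrt_mul_self, pow_two, hB.sqrt_mul_self, hXB, mul_assoc, hXX, mul_one]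
  have := hP.eq_of_sq_eq_sq hB.posSemidef_sqrt hsq
  calc X * hB.sqrt = X * hB.sqrt * Xᵀ * X := by rw [mul_assoc, hX, mul_one]
    _ = hB.sqrt * X := by rw [this]

end SOnAux
namespace SOnAux
variable {n : ℕ}

lemma skew_commute_sqrt {N : M n} (hN : Nᵀ = -N) (hNi : IsUnit N.det)
    (hB : (Nᵀ * N).PosSemidef) : N * hB.sqrt = hB.sqrt * N := by
  set Sg := hB.sqrt with hG
  have hGG : Sg * Sg = Nᵀ * N := hB.sqrt_mul_self
  have hBneg : Nᵀ * N = -(N * N) := by rw [hN]; simp [neg_mul]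
  have hNB : N * (Nᵀ * N) = (Nᵀ * N) * N := by
    rw [hBneg]; simp only [neg_mul, mul_neg, neg_inj, mul_assoc]
  have hP1 : (N * Sg * Nᴴ).PosSemidef := hB.posSemidef_sqrt.mul_mul_conjTranspose_same N
  rw [real_transpose_eq_conjTranspose] at hP1
  have hP2 : (Sg ^ 3).PosSemidef := hB.posSemidef_sqrt.pow 3
  have hNNT : N * Nᵀ = Nᵀ * N := by rw [hN]; simp [neg_mul, mul_neg]
  have hsq : (N * Sg * Nᵀ) ^ 2 = (Sg ^ 3) ^ 2 := by
    have e1 : (N * Sg * Nᵀ) ^ 2 = N * (Sg * (Nᵀ * N) * Sg) * Nᵀ := by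
      rw [pow_two]; simp only [mul_assoc]
    have e2 : Sg * (Nᵀ * N) * Sg = (Nᵀ * N) * (Nᵀ * N) := by
      rw [← hGG]; simp only [mul_assoc]
    have e3 : N * ((Nᵀ * N) * (Nᵀ * N)) * Nᵀ = (Nᵀ*N) * (Nᵀ*N) * (Nᵀ*N) := by
      rw [hBneg, hN]; noncomm_ring
    have e4 : (Sg ^ 3) ^ 2 = ((Sg*Sg) * (Sg*Sg)) * (Sg*Sg) := by noncomm_ring
    rw [e1, e2, e3, e4, hGG]
  have heq : N * Sg * Nᵀ = Sg ^ 3 := hP1.eq_of_sq_eq_sq hP2 hsq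
  have heq2 : N * Sg * N = N * N * Sg := by
    have : Sg ^ 3 = (Nᵀ * N) * Sg := by rw [pow_succ, pow_two, hGG]
    rw [this, hBneg] at heq
    rw [hN] at heq
    simp only [mul_neg, neg_mul, neg_inj] at heq
    exact heq
  have hNunit : IsUnit N := (Matrix.isUnit_iff_isUnit_det N).mpr hNi
  obtain ⟨Ni, hNiN, hNNi⟩ : ∃ Ni, Ni * N = 1 ∧ N * Ni = 1 := by
    rcases hNunit with ⟨u, rfl⟩
    exact ⟨↑u⁻¹, u.inv_mul, u.mul_inv⟩
  have := congrArg (fun X => Ni * X) heq2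
  have h2 : Sg * N = N * Sg := by
    simpa only [← mul_assoc, hNiN, one_mul] using this
  exact h2.symm

end SOnAux
namespace SOnAux
variable {n : ℕ}

lemma det_nonneg_of_commute_complexStructure {J X : M n} (hJ : J * J = -1)
    (hXJ : X * J = J * X) : 0 ≤ X.det := by
  classical
  set f : ℝ →+* ℂ := algebraMap ℝ ℂ with hf
  set Jc : Matrix (Fin n) (Fin n) ℂ := J.map f with hJc
  set Xc : Matrix (Fin n) (Fin n) ℂ := X.map f with hXc
  have hJc2 : Jc * Jc = -1 := by
    rw [hJc, ← Matrix.map_mul, hJ]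
    ext i j
    simp [Matrix.map_apply, Matrix.one_apply, apply_ite f]
  have hXJc : Xc * Jc = Jc * Xc := by rw [hJc, hXc, ← Matrix.map_mul, ← Matrix.map_mul, hXJ]
  set A : Matrix (Fin n) (Fin n) ℂ := Complex.I • Jc with hA
  have hA2 : A * A = 1 := by
    rw [hA, smul_mul_smul_comm, hJc2, Complex.I_mul_I]
    simp
  have hXA : Xc * A = A * Xc := by
    rw [hA, mul_smul_comm, smul_mul_assoc, hXJc]
  set P : Matrix (Fin n) (Fin n) ℂ := 1 + A with hP
  set Q : Matrix (Fin n) (Fin n) ℂ := 1 - A with hQ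
  have hPQ : P * Q = 0 := by
    rw [hP, hQ, mul_sub, add_mul, add_mul, hA2]; noncomm_ring
  have hQP : Q * P = 0 := by
    rw [hP, hQ, sub_mul, mul_add, mul_add, hA2]; noncomm_ring
  have hPP : P * P = P + P := by
    rw [hP, mul_add, add_mul, add_mul, hA2]; noncomm_ring
  have hQQ : Q * Q = Q + Q := by
    rw [hQ, mul_sub, sub_mul, sub_mul, hA2]; noncomm_ring
  have hPX : P * Xc = Xc * P := by
    simp only [hP, add_mul, mul_add, one_mul, mul_one, hXA]
  have hQX : Q * Xc = Xc * Q := by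
    simp only [hQ, sub_mul, mul_sub, one_mul, mul_one, hXA]
  have key : (P * Xc + Q) * (Q * Xc + P) = (4 : ℂ) • Xc := by
    have expand : (P * Xc + Q) * (Q * Xc + P)
        = P * Xc * (Q * Xc) + P * Xc * P + Q * (Q * Xc) + Q * P := by noncomm_ring
    rw [expand, hQP, add_zero]
    have t1 : P * Xc * (Q * Xc) = Xc * (P * Q) * Xc := by
      rw [hPX]; simp only [mul_assoc]
    have t2 : P * Xc * P = Xc * (P * P) := by rw [hPX, mul_assoc]
    have t3 : Q * (Q * Xc) = (Q * Q) * Xc := by rw [mul_assoc]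
    rw [t1, t2, t3, hPQ, hPP, hQQ, mul_zero, zero_mul, zero_add]
    have t4 : (Q + Q) * Xc = Xc * (Q + Q) := by rw [add_mul, mul_add, hQX]
    rw [t4, ← mul_add]
    have t5 : P + P + (Q + Q) = (4:ℂ) • (1 : Matrix (Fin n) (Fin n) ℂ) := by
      rw [hP, hQ]
      match_scalars <;> ring
    rw [t5, mul_smul_comm, mul_one]
  -- conjugation
  set c : ℂ →+* ℂ := (starRingEnd ℂ) with hc
  have hmA : c.mapMatrix A = -A := by
    ext i j
    simp [hA, RingHom.mapMatrix_apply, Matrix.map_apply, hJc, hf, hc,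
      Complex.conj_ofReal, Matrix.smul_apply]
  have hmX : c.mapMatrix Xc = Xc := by
    ext i j
    simp [hXc, RingHom.mapMatrix_apply, Matrix.map_apply, hf, hc, Complex.conj_ofReal]
  have hmapPXQ : c.mapMatrix (P * Xc + Q) = Q * Xc + P := by
    rw [map_add, _root_.map_mul, hmX, hP, hQ, map_add, map_sub, _root_.map_one, hmA]
    noncomm_ring
  set z : ℂ := (P * Xc + Q).det with hz
  have hdetprod : z * (starRingEnd ℂ) z = (4 : ℂ) ^ n * Xc.det := by
    have h1 : (starRingEnd ℂ) z = (Q * Xc + P).det := by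
      rw [hz, ← hc, RingHom.map_det, hmapPXQ]
    rw [h1, hz, ← Matrix.det_mul, key, Matrix.det_smul]
    simp [Fintype.card_fin]
  have hdetXc : Xc.det = (X.det : ℂ) := by
    rw [hXc, ← RingHom.mapMatrix_apply, ← RingHom.map_det, hf]
    simp
  have hfinal : (4:ℝ) ^ n * X.det = Complex.normSq z := by
    have h2 := hdetprod
    rw [Complex.mul_conj, hdetXc] at h2
    have h4 : (((4:ℝ)^n * X.det : ℝ) : ℂ) = ((Complex.normSq z : ℝ) : ℂ) := by
      push_cast
      rw [← h2]
    exact_mod_cast h4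
  nlinarith [Complex.normSq_nonneg z, pow_pos (by norm_num : (0:ℝ) < 4) n, hfinal]

end SOnAux
namespace SOnAux

lemma exists_extension_matrix {m r : ℕ} (hr : r ≤ m) (v : Fin r → (Fin m → ℝ))
    (hv : ∀ i j : Fin r, v i ⬝ᵥ v j = if i = j then 1 else 0) :
    ∃ Q : M m, Qᵀ * Q = 1 ∧ ∀ (j : Fin r) (i : Fin m), Q i (Fin.castLE hr j) = v j i := by
  classical
  set E := EuclideanSpace ℝ (Fin m)
  set v' : Fin m → E := fun i => if h : (i : ℕ) < r then WithLp.toLp 2 (v ⟨i, h⟩ : Fin m → ℝ) else 0 with hv'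
  set s : Set (Fin m) := {i | (i : ℕ) < r} with hs
  have hinner : ∀ x y : E, (inner ℝ x y : ℝ) = (x : Fin m → ℝ) ⬝ᵥ (y : Fin m → ℝ) := by
    intro x y
    rw [PiLp.inner_apply]
    apply Finset.sum_congr rfl
    intro k _
    simp [starRingEnd_apply, star_trivial, mul_comm]
  have hortho : Orthonormal ℝ (s.restrict v') := by
    rw [orthonormal_iff_ite]
    rintro ⟨i, hi⟩ ⟨j, hj⟩
    have hi' : (i : ℕ) < r := hi
    have hj' : (j : ℕ) < r := hj
    rw [hinner]
    simp only [Set.restrict, Set.domRestrict, hv', dif_pos hi', dif_pos hj', WithLp.ofLp_toLp]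
    rw [hv]
    have hiff : ((⟨(i:ℕ), hi'⟩ : Fin r) = ⟨(j:ℕ), hj'⟩) ↔ ((⟨i, hi⟩ : s) = ⟨j, hj⟩) := by
      constructor
      · intro h
        have hval : (i : ℕ) = (j : ℕ) := congrArg (fun t : Fin r => (t : ℕ)) h
        exact Subtype.ext (Fin.ext hval)
      · intro h
        have hij : i = j := Subtype.mk_eq_mk.mp h
        subst hij; rfl
    exact if_congr hiff rfl rfl
  have hcard : Module.finrank ℝ E = Fintype.card (Fin m) := by
    simp [E]
  obtain ⟨b, hb⟩ := hortho.exists_orthonormalBasis_extension_of_card_eq hcard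
  refine ⟨Matrix.of (fun i j => (b j : Fin m → ℝ) i), ?_, ?_⟩
  · ext i j
    have := b.orthonormal
    rw [orthonormal_iff_ite] at this
    have h2 := this i j
    rw [hinner] at h2
    simp only [Matrix.mul_apply, Matrix.transpose_apply, Matrix.of_apply, Matrix.one_apply]
    rw [← h2]
    simp [dotProduct]
  · intro j i
    have hmem : (Fin.castLE hr j) ∈ s := by
      simp only [hs, Set.mem_setOf_eq, Fin.coe_castLE]
      exact j.isLt
    have hbe := hb _ hmem
    simp only [Matrix.of_apply]
    rw [hbe]
    simp only [hv', Fin.coe_castLE, dif_pos j.isLt]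

lemma conj_entry {m : ℕ} (Q X : M m) (i j : Fin m) :
    (Qᵀ * X * Q) i j = (fun k => Q k i) ⬝ᵥ (X *ᵥ (fun k => Q k j)) := by
  simp only [Matrix.mul_apply, Matrix.transpose_apply, dotProduct, Matrix.mulVec,
    Finset.sum_mul, Finset.mul_sum, dotProduct]
  rw [Finset.sum_comm]
  apply Finset.sum_congr rfl
  intro a _
  apply Finset.sum_congr rfl
  intro b _
  ring

end SOnAux
namespace SOnAux

lemma one_apply_comm {m : ℕ} (a b : Fin m) : (1 : M m) a b = (1 : M m) b a := by
  simp [Matrix.one_apply, eq_comm]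

lemma jlemma : ∀ (m : ℕ) (J C : Matrix (Fin m) (Fin m) ℝ), J * J = -1 → Jᵀ = -J →
    Cᵀ = C → C * J = J * C →
    ∃ S : Matrix (Fin m) (Fin m) ℝ,
      Sᵀ * S = 1 ∧ S * C = C * S ∧ S * J = -(J * S) ∧ S.det = (-1 : ℝ)^(m/2) ∧ m % 2 = 0 := by
  intro m
  induction m using Nat.strong_induction_on with
  | _ m ih =>
  intro J C hJ2 hJT hCT hCJ
  have hdetJ : (J.det)^2 = (-1:ℝ)^m := by
    rw [sq, ← Matrix.det_mul, hJ2]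
    have h : (-1 : Matrix (Fin m) (Fin m) ℝ) = (-1 : ℝ) • (1 : Matrix (Fin m) (Fin m) ℝ) := by
      simp
    rw [h, Matrix.det_smul, Matrix.det_one, mul_one, Fintype.card_fin]
  have hme : m % 2 = 0 := by
    rcases Nat.even_or_odd m with h | h
    · exact Nat.even_iff.mp h
    · exfalso
      rw [Odd.neg_one_pow h] at hdetJ
      nlinarith [sq_nonneg J.det]
  rcases Nat.eq_zero_or_pos m with hm0 | hmpos
  · subst hm0
    refine ⟨1, by simp, by rw [Matrix.mul_one, Matrix.one_mul], ?_, by simp, rfl⟩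
    ext i j
    exact i.elim0
  have hm2 : 2 ≤ m := by omega
  obtain ⟨k, rfl⟩ : ∃ k, m = k + 2 := ⟨m - 2, by omega⟩
  -- eigenvector of C
  have hCh : C.IsHermitian := by
    show Cᴴ = C
    rw [← real_transpose_eq_conjTranspose] at hCT
    exact hCT
  set μ : ℝ := hCh.eigenvalues 0 with hμ
  set vv : Fin (k+2) → ℝ := ⇑(hCh.eigenvectorBasis 0) with hvvdef
  have hCv : C *ᵥ vv = μ • vv := hCh.mulVec_eigenvectorBasis 0
  have hvv : vv ⬝ᵥ vv = 1 := by
    have h := hCh.eigenvectorBasis.orthonormal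
    rw [orthonormal_iff_ite] at h
    have h2 := h 0 0
    rw [if_pos rfl] at h2
    rw [← h2, hvvdef]
    rw [PiLp.inner_apply]
    apply Finset.sum_congr rfl
    intro a _
    simp [starRingEnd_apply, star_trivial, sq]
  set ww : Fin (k+2) → ℝ := J *ᵥ vv with hwwdef
  have hJTJ : Jᵀ * J = 1 := by
    rw [hJT, neg_mul, hJ2, neg_neg]
  have hww : ww ⬝ᵥ ww = 1 := by
    rw [hwwdef, dotProduct_mulVec, vecMul_mulVec, hJTJ, Matrix.vecMul_one, hvv]
  have hvw : vv ⬝ᵥ ww = 0 := by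
    have h1 : vv ⬝ᵥ ww = (Jᵀ *ᵥ vv) ⬝ᵥ vv := by
      rw [hwwdef, dotProduct_mulVec, ← Matrix.mulVec_transpose]
    rw [hJT, Matrix.neg_mulVec] at h1
    have h2 : vv ⬝ᵥ ww = -(ww ⬝ᵥ vv) := by
      rw [h1, hwwdef]
      simp [dotProduct_comm]
    have h3 : ww ⬝ᵥ vv = vv ⬝ᵥ ww := dotProduct_comm _ _
    rw [h3] at h2
    linarith
  have hwv : ww ⬝ᵥ vv = 0 := by rw [dotProduct_comm, hvw]
  have hCw : C *ᵥ ww = μ • ww := by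
    rw [hwwdef, Matrix.mulVec_mulVec, hCJ, ← Matrix.mulVec_mulVec, hCv, Matrix.mulVec_smul]
  have hJw : J *ᵥ ww = -vv := by
    rw [hwwdef, Matrix.mulVec_mulVec, hJ2, Matrix.neg_mulVec, Matrix.one_mulVec]
  -- extend to an orthonormal basis
  have hr : 2 ≤ k + 2 := by omega
  obtain ⟨Q, hQ, hQcol⟩ := exists_extension_matrix hr ![vv, ww] (by
    intro i j
    fin_cases i <;> fin_cases j <;>
      simp [hvv, hww, hvw, hwv])
  have hQQT : Q * Qᵀ = 1 := mul_eq_one_comm.mp hQ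
  set c0 : Fin (k+2) := Fin.castLE hr 0 with hc0
  set c1 : Fin (k+2) := Fin.castLE hr 1 with hc1
  have hu0 : (fun a => Q a c0) = vv := by
    funext i
    have := hQcol 0 i
    simpa [hc0] using this
  have hu1 : (fun a => Q a c1) = ww := by
    funext i
    have := hQcol 1 i
    simpa using this
  have hdotu : ∀ i j : Fin (k+2), (fun a => Q a i) ⬝ᵥ (fun a => Q a j) = (1 : M (k+2)) i j := by
    intro i j
    have : (Qᵀ * Q) i j = (1 : M (k+2)) i j := by rw [hQ]
    rw [← this]
    simp [Matrix.mul_apply, dotProduct, Matrix.transpose_apply]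
  have hc01 : c0 ≠ c1 := by
    intro h
    have := congrArg Fin.val h
    simp [hc0, hc1] at this
  -- conjugated matrices
  set J1 : M (k+2) := Qᵀ * J * Q with hJ1def
  set C1 : M (k+2) := Qᵀ * C * Q with hC1def
  have hQJQ : ∀ X Y : M (k+2), (Qᵀ * X * Q) * (Qᵀ * Y * Q) = Qᵀ * (X * Y) * Q := by
    intro X Y
    calc (Qᵀ * X * Q) * (Qᵀ * Y * Q) = Qᵀ * X * (Q * Qᵀ) * (Y * Q) := by
          simp only [mul_assoc]
      _ = Qᵀ * (X * Y) * Q := by rw [hQQT, mul_one]; simp only [mul_assoc]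
  have hJ1J1 : J1 * J1 = -1 := by
    rw [hJ1def, hQJQ, hJ2]
    calc Qᵀ * (-1) * Q = -(Qᵀ * Q) := by rw [mul_neg, mul_one, neg_mul]
      _ = -1 := by rw [hQ]
  have hJ1T : J1ᵀ = -J1 := by
    have h : (Qᵀ * J * Q)ᵀ = Qᵀ * Jᵀ * Q := by
      simp [Matrix.transpose_mul, mul_assoc]
    rw [hJ1def, h, hJT]
    noncomm_ring
  have hC1T : C1ᵀ = C1 := by
    have h : (Qᵀ * C * Q)ᵀ = Qᵀ * Cᵀ * Q := by
      simp [Matrix.transpose_mul, mul_assoc]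
    rw [hC1def, h, hCT]
  have hC1J1 : C1 * J1 = J1 * C1 := by
    rw [hC1def, hJ1def, hQJQ, hQJQ, hCJ]
  -- entry facts
  have hJ1c0 : ∀ i, J1 i c0 = (1 : M (k+2)) i c1 := by
    intro i
    rw [hJ1def, conj_entry, hu0]
    have : J *ᵥ vv = ww := rfl
    rw [this, ← hu1, hdotu]
  have hJ1c1 : ∀ i, J1 i c1 = -((1 : M (k+2)) i c0) := by
    intro i
    rw [hJ1def, conj_entry, hu1, hJw]
    rw [show (-vv : Fin (k+2) → ℝ) = (fun a => -(Q a c0)) from by rw [← hu0]; rfl]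
    have : (fun a => Q a i) ⬝ᵥ (fun a => -(Q a c0)) = -((fun a => Q a i) ⬝ᵥ (fun a => Q a c0)) := by
      simp [dotProduct, Finset.sum_neg_distrib, mul_neg]
    rw [this, hdotu]
  have hC1c0 : ∀ i, C1 i c0 = μ * (1 : M (k+2)) i c0 := by
    intro i
    rw [hC1def, conj_entry, hu0, hCv]
    rw [dotProduct_smul, ← hu0, hdotu]
    rfl
  have hC1c1 : ∀ i, C1 i c1 = μ * (1 : M (k+2)) i c1 := by
    intro i
    rw [hC1def, conj_entry, hu1, hCw]
    rw [dotProduct_smul, ← hu1, hdotu]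
    rfl
  have hJ1r0 : ∀ j, J1 c0 j = -((1 : M (k+2)) c1 j) := by
    intro j
    have h1 : J1 c0 j = -(J1ᵀ c0 j) := by rw [hJ1T]; simp
    rw [h1, Matrix.transpose_apply, hJ1c0, one_apply_comm]
  have hJ1r1 : ∀ j, J1 c1 j = (1 : M (k+2)) c0 j := by
    intro j
    have h1 : J1 c1 j = -(J1ᵀ c1 j) := by rw [hJ1T]; simp
    rw [h1, Matrix.transpose_apply, hJ1c1, neg_neg, one_apply_comm]
  have hC1r0 : ∀ j, C1 c0 j = μ * (1 : M (k+2)) c0 j := by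
    intro j
    have h1 : C1 c0 j = C1ᵀ c0 j := by rw [hC1T]
    rw [h1, Matrix.transpose_apply, hC1c0, one_apply_comm]
  have hC1r1 : ∀ j, C1 c1 j = μ * (1 : M (k+2)) c1 j := by
    intro j
    have h1 : C1 c1 j = C1ᵀ c1 j := by rw [hC1T]
    rw [h1, Matrix.transpose_apply, hC1c1, one_apply_comm]
  -- block decomposition
  set σ : Fin 2 ⊕ Fin k ≃ Fin (k+2) := finSumFinEquiv.trans (finCongr (by omega)) with hσdef
  have hσ0 : σ (Sum.inl 0) = c0 := by
    apply Fin.ext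
    simp [hσdef, hc0]
  have hσ1 : σ (Sum.inl 1) = c1 := by
    apply Fin.ext
    simp [hσdef, hc1]
  have hσinr : ∀ j : Fin k, ((σ (Sum.inr j)) : ℕ) = 2 + j := by
    intro j
    simp [hσdef]
    omega
  have hσinr_ne_c0 : ∀ j : Fin k, σ (Sum.inr j) ≠ c0 := by
    intro j h
    have := congrArg Fin.val h
    rw [hσinr j] at this
    have h1 : (c0 : ℕ) = 0 := rfl
    omega
  have hσinr_ne_c1 : ∀ j : Fin k, σ (Sum.inr j) ≠ c1 := by
    intro j h
    have := congrArg Fin.val h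
    rw [hσinr j] at this
    have h1 : (c1 : ℕ) = 1 := rfl
    omega
  set J0 : Matrix (Fin 2) (Fin 2) ℝ := !![0,-1;1,0] with hJ0def
  set J2 : Matrix (Fin k) (Fin k) ℝ := J1.submatrix (σ ∘ Sum.inr) (σ ∘ Sum.inr) with hJ2def
  set C2 : Matrix (Fin k) (Fin k) ℝ := C1.submatrix (σ ∘ Sum.inr) (σ ∘ Sum.inr) with hC2def
  have hJb : J1.submatrix σ σ = Matrix.fromBlocks J0 0 0 J2 := by
    ext i j
    rcases i with i | i <;> rcases j with j | j
    · fin_cases i <;> fin_cases j <;>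
        simp only [Fin.zero_eta, Fin.mk_one, Fin.isValue, Matrix.submatrix_apply, hσ0, hσ1, hJ1c0, hJ1c1, hJ1r0, hJ1r1] <;>
        simp [Matrix.one_apply, hc01, Ne.symm hc01, hJ0def]
    · fin_cases i <;>
        simp only [Fin.zero_eta, Fin.mk_one, Fin.isValue, Matrix.submatrix_apply, hσ0, hσ1, hJ1r0, hJ1r1] <;>
        simp [Matrix.one_apply, (hσinr_ne_c0 j).symm, (hσinr_ne_c1 j).symm, Ne.symm (hσinr_ne_c0 j), Ne.symm (hσinr_ne_c1 j)]
    · fin_cases j <;>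
        simp only [Fin.zero_eta, Fin.mk_one, Fin.isValue, Matrix.submatrix_apply, hσ0, hσ1, hJ1c0, hJ1c1] <;>
        simp [Matrix.one_apply, hσinr_ne_c0 i, hσinr_ne_c1 i]
    · simp [hJ2def]
  have hCb : C1.submatrix σ σ = Matrix.fromBlocks (μ • (1 : Matrix (Fin 2) (Fin 2) ℝ)) 0 0 C2 := by
    ext i j
    rcases i with i | i <;> rcases j with j | j
    · fin_cases i <;> fin_cases j <;>
        simp only [Fin.zero_eta, Fin.mk_one, Fin.isValue, Matrix.submatrix_apply, hσ0, hσ1, hC1c0, hC1c1, hC1r0, hC1r1] <;>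
        simp [Matrix.one_apply, hc01, Ne.symm hc01]
    · fin_cases i <;>
        simp only [Fin.zero_eta, Fin.mk_one, Fin.isValue, Matrix.submatrix_apply, hσ0, hσ1, hC1r0, hC1r1] <;>
        simp [Matrix.one_apply, Ne.symm (hσinr_ne_c0 j), Ne.symm (hσinr_ne_c1 j)]
    · fin_cases j <;>
        simp only [Fin.zero_eta, Fin.mk_one, Fin.isValue, Matrix.submatrix_apply, hσ0, hσ1, hC1c0, hC1c1] <;>
        simp [Matrix.one_apply, hσinr_ne_c0 i, hσinr_ne_c1 i]
    · simp [hC2def]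
  -- properties of the sub-blocks
  have hsm : ∀ X Y : M (k+2), (X.submatrix σ σ) * (Y.submatrix σ σ) = (X*Y).submatrix σ σ := by
    intro X Y
    exact Matrix.submatrix_mul_equiv X Y σ σ σ
  have hJbJb : Matrix.fromBlocks J0 0 0 J2 * Matrix.fromBlocks J0 0 0 J2
      = Matrix.fromBlocks (-1) 0 0 (-1) := by
    rw [← hJb, hsm, hJ1J1]
    have : (-1 : Matrix (Fin 2 ⊕ Fin k) (Fin 2 ⊕ Fin k) ℝ)
        = Matrix.fromBlocks (-1) 0 0 (-1) := by
      rw [← Matrix.fromBlocks_one, Matrix.fromBlocks_neg]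
      norm_num
    rw [← this]
    ext i j
    simp [Matrix.submatrix_apply, Matrix.one_apply, EmbeddingLike.apply_eq_iff_eq]
  rw [Matrix.fromBlocks_multiply] at hJbJb
  have hJ2J2 : J2 * J2 = -1 := by
    have := congrArg Matrix.toBlocks₂₂ hJbJb
    simpa [Matrix.toBlocks_fromBlocks₂₂] using this
  have hJ0J0 : J0 * J0 = -1 := by
    have := congrArg Matrix.toBlocks₁₁ hJbJb
    simpa [Matrix.toBlocks_fromBlocks₁₁] using this
  have hJ2T : J2ᵀ = -J2 := by
    ext i j
    have h := congrFun (congrFun hJ1T (σ (Sum.inr i))) (σ (Sum.inr j))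
    simp only [Matrix.transpose_apply, Matrix.neg_apply] at h ⊢
    simpa [hJ2def, Matrix.submatrix_apply] using h
  have hC2T : C2ᵀ = C2 := by
    ext i j
    have h := congrFun (congrFun hC1T (σ (Sum.inr i))) (σ (Sum.inr j))
    simp only [Matrix.transpose_apply] at h ⊢
    simpa [hC2def, Matrix.submatrix_apply] using h
  have hCbJb : Matrix.fromBlocks (μ • (1:Matrix (Fin 2) (Fin 2) ℝ)) 0 0 C2
      * Matrix.fromBlocks J0 0 0 J2
      = Matrix.fromBlocks J0 0 0 J2
      * Matrix.fromBlocks (μ • (1:Matrix (Fin 2) (Fin 2) ℝ)) 0 0 C2 := by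
    rw [← hJb, ← hCb, hsm, hsm, hC1J1]
  rw [Matrix.fromBlocks_multiply, Matrix.fromBlocks_multiply] at hCbJb
  have hC2J2 : C2 * J2 = J2 * C2 := by
    have := congrArg Matrix.toBlocks₂₂ hCbJb
    simpa [Matrix.toBlocks_fromBlocks₂₂] using this
  -- apply the induction hypothesis
  obtain ⟨S2, hS2T, hS2C, hS2J, hS2det, hk2⟩ := ih k (by omega) J2 C2 hJ2J2 hJ2T hC2T hC2J2
  -- assemble
  set D0 : Matrix (Fin 2) (Fin 2) ℝ := !![1,0;0,-1] with hD0def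
  have hD0symm : D0ᵀ = D0 := by
    ext i j
    fin_cases i <;> fin_cases j <;> simp [hD0def]
  have hD0T : D0ᵀ * D0 = 1 := by
    rw [hD0symm]
    ext i j
    fin_cases i <;> fin_cases j <;>
      simp [hD0def, Matrix.mul_apply, Fin.sum_univ_two, Matrix.one_apply]
  have hD0J0 : D0 * J0 = -(J0 * D0) := by
    ext i j
    fin_cases i <;> fin_cases j <;>
      simp [hD0def, hJ0def, Matrix.mul_apply, Fin.sum_univ_two]
  have hD0μ : D0 * (μ • (1:Matrix (Fin 2) (Fin 2) ℝ)) = (μ • (1:Matrix (Fin 2) (Fin 2) ℝ)) * D0 := by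
    rw [mul_smul_comm, smul_mul_assoc, mul_one, one_mul]
  have hdetD0 : D0.det = -1 := by
    rw [hD0def, Matrix.det_fin_two_of]
    norm_num
  set Sb : Matrix (Fin 2 ⊕ Fin k) (Fin 2 ⊕ Fin k) ℝ := Matrix.fromBlocks D0 0 0 S2 with hSbdef
  have hSbT : Sbᵀ * Sb = 1 := by
    rw [hSbdef, Matrix.fromBlocks_transpose, Matrix.fromBlocks_multiply]
    simp only [Matrix.transpose_zero, Matrix.mul_zero, Matrix.zero_mul, add_zero, zero_add,
      Matrix.zero_mul]
    rw [hD0T, hS2T, Matrix.fromBlocks_one]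
  have hSbJb : Sb * Matrix.fromBlocks J0 0 0 J2 = -(Matrix.fromBlocks J0 0 0 J2 * Sb) := by
    rw [hSbdef, Matrix.fromBlocks_multiply, Matrix.fromBlocks_multiply, Matrix.fromBlocks_neg]
    simp only [Matrix.mul_zero, Matrix.zero_mul, add_zero, zero_add, neg_zero]
    rw [hD0J0, hS2J]
  have hSbCb : Sb * Matrix.fromBlocks (μ • (1:Matrix (Fin 2) (Fin 2) ℝ)) 0 0 C2
      = Matrix.fromBlocks (μ • (1:Matrix (Fin 2) (Fin 2) ℝ)) 0 0 C2 * Sb := by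
    rw [hSbdef, Matrix.fromBlocks_multiply, Matrix.fromBlocks_multiply]
    simp only [Matrix.mul_zero, Matrix.zero_mul, add_zero, zero_add]
    rw [hD0μ, hS2C]
  have hdetSb : Sb.det = (-1 : ℝ)^((k+2)/2) := by
    rw [hSbdef, Matrix.det_fromBlocks_zero₂₁, hdetD0, hS2det]
    have : (k+2)/2 = k/2 + 1 := by omega
    rw [this, pow_succ]
    ring
  -- transport back
  set S1 : M (k+2) := Sb.submatrix σ.symm σ.symm with hS1def
  have hsm' : ∀ (X Y : Matrix (Fin 2 ⊕ Fin k) (Fin 2 ⊕ Fin k) ℝ),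
      (X.submatrix σ.symm σ.symm) * (Y.submatrix σ.symm σ.symm) = (X*Y).submatrix σ.symm σ.symm :=
    fun X Y => Matrix.submatrix_mul_equiv X Y σ.symm σ.symm σ.symm
  have hJ1b : J1 = (Matrix.fromBlocks J0 0 0 J2).submatrix σ.symm σ.symm := by
    rw [← hJb, Matrix.submatrix_submatrix]
    simp [Equiv.self_comp_symm]
  have hC1b : C1 = (Matrix.fromBlocks (μ • (1:Matrix (Fin 2) (Fin 2) ℝ)) 0 0 C2).submatrix σ.symm σ.symm := by
    rw [← hCb, Matrix.submatrix_submatrix]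
    simp [Equiv.self_comp_symm]
  have hS1T : S1ᵀ * S1 = 1 := by
    rw [hS1def, Matrix.transpose_submatrix, hsm', hSbT]
    exact Matrix.submatrix_one_equiv σ.symm
  have hS1J1 : S1 * J1 = -(J1 * S1) := by
    rw [hS1def, hJ1b, hsm', hsm', hSbJb]
    ext i j
    simp [Matrix.submatrix_apply]
  have hS1C1 : S1 * C1 = C1 * S1 := by
    rw [hS1def, hC1b, hsm', hsm', hSbCb]
  have hdetS1 : S1.det = (-1:ℝ)^((k+2)/2) := by
    rw [hS1def, Matrix.det_submatrix_equiv_self, hdetSb]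
  -- conjugate by Q
  refine ⟨Q * S1 * Qᵀ, ?_, ?_, ?_, ?_, hme⟩
  · have ht : (Q * S1 * Qᵀ)ᵀ = Q * S1ᵀ * Qᵀ := by
      simp [Matrix.transpose_mul, mul_assoc]
    rw [ht]
    calc Q * S1ᵀ * Qᵀ * (Q * S1 * Qᵀ) = Q * S1ᵀ * (Qᵀ * Q) * (S1 * Qᵀ) := by
          simp only [mul_assoc]
      _ = Q * (S1ᵀ * S1) * Qᵀ := by rw [hQ, mul_one]; simp only [mul_assoc]
      _ = 1 := by rw [hS1T, mul_one, hQQT]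
  · have hC : C = Q * C1 * Qᵀ := by
      rw [hC1def]
      calc C = (Q * Qᵀ) * C * (Q * Qᵀ) := by rw [hQQT, one_mul, mul_one]
        _ = Q * (Qᵀ * C * Q) * Qᵀ := by simp only [mul_assoc]
    rw [hC]
    calc Q * S1 * Qᵀ * (Q * C1 * Qᵀ) = Q * S1 * (Qᵀ * Q) * (C1 * Qᵀ) := by
          simp only [mul_assoc]
      _ = Q * (S1 * C1) * Qᵀ := by rw [hQ, mul_one]; simp only [mul_assoc]
      _ = Q * (C1 * S1) * Qᵀ := by rw [hS1C1]
      _ = Q * C1 * (Qᵀ * Q) * (S1 * Qᵀ) := by rw [hQ, mul_one]; simp only [mul_assoc]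
      _ = Q * C1 * Qᵀ * (Q * S1 * Qᵀ) := by simp only [mul_assoc]
  · have hJd : J = Q * J1 * Qᵀ := by
      rw [hJ1def]
      calc J = (Q * Qᵀ) * J * (Q * Qᵀ) := by rw [hQQT, one_mul, mul_one]
        _ = Q * (Qᵀ * J * Q) * Qᵀ := by simp only [mul_assoc]
    rw [hJd]
    calc Q * S1 * Qᵀ * (Q * J1 * Qᵀ) = Q * S1 * (Qᵀ * Q) * (J1 * Qᵀ) := by
          simp only [mul_assoc]
      _ = Q * (S1 * J1) * Qᵀ := by rw [hQ, mul_one]; simp only [mul_assoc]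
      _ = Q * (-(J1 * S1)) * Qᵀ := by rw [hS1J1]
      _ = -(Q * J1 * (Qᵀ * Q) * (S1 * Qᵀ)) := by rw [hQ, mul_one]; simp only [mul_neg, neg_mul, mul_assoc]
      _ = -(Q * J1 * Qᵀ * (Q * S1 * Qᵀ)) := by simp only [mul_assoc]
  · have hQdet : Q.det * Q.det = 1 := by
      have := congrArg Matrix.det hQ
      rw [Matrix.det_mul, Matrix.det_transpose, Matrix.det_one] at this
      exact this
    rw [Matrix.det_mul, Matrix.det_mul, Matrix.det_transpose, hdetS1]
    calc Q.det * (-1:ℝ)^((k+2)/2) * Q.det = (Q.det * Q.det) * (-1:ℝ)^((k+2)/2) := by ring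
      _ = (-1:ℝ)^((k+2)/2) := by rw [hQdet, one_mul]



end SOnAux
namespace SOnAux
variable {n : ℕ}

lemma exists_J {T : M n} (hT : Tᵀ * T = 1) (hNi : IsUnit (T - Tᵀ).det) :
    ∃ J G : M n, J * J = -1 ∧ Jᵀ = -J ∧ (T + Tᵀ) * J = J * (T + Tᵀ) ∧
      G * J = T - Tᵀ ∧ IsUnit G.det ∧ (G * J = J * G) ∧
      (∀ S : M n, Sᵀ * S = 1 → S * (T + Tᵀ) = (T + Tᵀ) * S → S * G = G * S) := by
  have hTTT : T * Tᵀ = 1 := mul_eq_one_comm.mp hT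
  set N : M n := T - Tᵀ with hNdef
  set C : M n := T + Tᵀ with hCdef
  have hNT : Nᵀ = -N := by
    rw [hNdef, Matrix.transpose_sub, Matrix.transpose_transpose, neg_sub]
  have hTN : T * N = N * T := by
    rw [hNdef, mul_sub, sub_mul, hTTT, hT]
  have hTtN : Tᵀ * N = N * Tᵀ := by
    rw [hNdef, mul_sub, sub_mul, hTTT, hT]
  have hCN : C * N = N * C := by
    rw [hCdef, add_mul, mul_add, hTN, hTtN]
  have hB : (Nᵀ * N).PosSemidef := by
    have := Matrix.posSemidef_conjTranspose_mul_self N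
    rwa [real_transpose_eq_conjTranspose] at this
  set G : M n := hB.sqrt with hGdef
  have hGG : G * G = Nᵀ * N := hB.sqrt_mul_self
  have hGT : Gᵀ = G := by
    have h := hB.posSemidef_sqrt.1.eq
    rwa [real_transpose_eq_conjTranspose] at h
  have hNG : N * G = G * N := skew_commute_sqrt hNT hNi hB
  have hNdet : N.det ≠ 0 := by
    intro h
    rw [h] at hNi
    simp at hNi
  have hGdet : IsUnit G.det := by
    have h1 : G.det * G.det = N.det * N.det := by
      have := congrArg Matrix.det hGG
      rwa [Matrix.det_mul, Matrix.det_mul, Matrix.det_transpose] at this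
    rw [isUnit_iff_ne_zero]
    intro h
    rw [h, mul_zero] at h1
    exact hNdet (by nlinarith)
  have hGiG : G⁻¹ * G = 1 := Matrix.nonsing_inv_mul G hGdet
  have hGGi : G * G⁻¹ = 1 := Matrix.mul_nonsing_inv G hGdet
  have hcomminv : ∀ X : M n, X * G = G * X → X * G⁻¹ = G⁻¹ * X := by
    intro X h
    have e : G * (X * G⁻¹) = X := by
      rw [← mul_assoc, ← h, mul_assoc, hGGi, mul_one]
    conv_rhs => rw [← e]
    rw [← mul_assoc, hGiG, one_mul]
  set J : M n := G⁻¹ * N with hJdef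
  have hNGi : N * G⁻¹ = G⁻¹ * N := hcomminv N hNG
  have hGJ : G * J = N := by
    rw [hJdef, ← mul_assoc, hGGi, one_mul]
  have hJG : G * J = J * G := by
    rw [hGJ, hJdef, mul_assoc, hNG, ← mul_assoc, hGiG, one_mul]
  have hcancelGG : ∀ X Y : M n, (G * G) * X = (G * G) * Y → X = Y := by
    intro X Y h
    have e : ∀ Z : M n, G⁻¹ * (G⁻¹ * ((G * G) * Z)) = Z := by
      intro Z
      calc G⁻¹ * (G⁻¹ * (G * G * Z)) = G⁻¹ * ((G⁻¹ * G) * (G * Z)) := by simp only [mul_assoc]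
        _ = G⁻¹ * (G * Z) := by rw [hGiG, one_mul]
        _ = (G⁻¹ * G) * Z := by rw [mul_assoc]
        _ = Z := by rw [hGiG, one_mul]
    rw [← e X, ← e Y, h]
  have hJJ : J * J = -1 := by
    apply hcancelGG
    have hL : (G * G) * (J * J) = N * N := by
      calc (G*G)*(J*J) = G*((G*J)*J) := by simp only [mul_assoc]
        _ = G*(N*J) := by rw [hGJ]
        _ = (G*N)*J := by rw [mul_assoc]
        _ = (N*G)*J := by rw [hNG]
        _ = N*(G*J) := by rw [mul_assoc]
        _ = N*N := by rw [hGJ]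
    have hR : (G * G) * (-1 : M n) = N * N := by
      rw [hGG, hNT]
      simp [neg_mul, mul_neg]
    rw [hL, hR]
  have hJT : Jᵀ = -J := by
    rw [hJdef, Matrix.transpose_mul, Matrix.transpose_nonsing_inv, hGT, hNT, neg_mul, hNGi]
  have hTG : T * G = G * T := by
    apply orth_commute_sqrt hB hT
    rw [hNT]
    simp only [neg_mul, mul_neg, neg_inj]
    calc T*(N*N) = (T*N)*N := by rw [mul_assoc]
      _ = (N*T)*N := by rw [hTN]
      _ = N*(T*N) := by rw [mul_assoc]
      _ = N*(N*T) := by rw [hTN]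
      _ = (N*N)*T := by rw [mul_assoc]
  have hTtG : Tᵀ * G = G * Tᵀ := by
    apply orth_commute_sqrt hB (by rw [Matrix.transpose_transpose, hTTT])
    rw [hNT]
    simp only [neg_mul, mul_neg, neg_inj]
    calc Tᵀ*(N*N) = (Tᵀ*N)*N := by rw [mul_assoc]
      _ = (N*Tᵀ)*N := by rw [hTtN]
      _ = N*(Tᵀ*N) := by rw [mul_assoc]
      _ = N*(N*Tᵀ) := by rw [hTtN]
      _ = (N*N)*Tᵀ := by rw [mul_assoc]
  have hCG : C * G = G * C := by
    rw [hCdef, add_mul, mul_add, hTG, hTtG]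
  have hCGi : C * G⁻¹ = G⁻¹ * C := hcomminv C hCG
  have hCJ : C * J = J * C := by
    rw [hJdef, ← mul_assoc, hCGi, mul_assoc, hCN, ← mul_assoc]
  have hkey : Nᵀ * N = (4:ℝ) • (1 : M n) - C * C := by
    have e : Nᵀ * N + C * C = (Tᵀ*T) + (T*Tᵀ) + (Tᵀ*T) + (T*Tᵀ) := by
      rw [hNT, hNdef, hCdef]
      noncomm_ring
    rw [hT, hTTT] at e
    have e2 : (1 : M n) + 1 + 1 + 1 = (4:ℝ) • (1 : M n) := by
      ext i j
      simp only [Matrix.add_apply, Matrix.smul_apply, Matrix.one_apply, smul_eq_mul]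
      split_ifs <;> norm_num
    rw [e2] at e
    have := e
    calc Nᵀ * N = (Nᵀ * N + C * C) - C * C := by abel
      _ = (4:ℝ) • (1 : M n) - C * C := by rw [this]
  refine ⟨J, G, hJJ, hJT, hCJ, hGJ, hGdet, hJG, ?_⟩
  intro S hS hSC
  apply orth_commute_sqrt hB hS
  rw [hkey]
  rw [mul_sub, sub_mul, mul_smul_comm, smul_mul_assoc, mul_one, one_mul]
  congr 1
  calc S*(C*C) = (S*C)*C := by rw [mul_assoc]
    _ = (C*S)*C := by rw [hSC]
    _ = C*(S*C) := by rw [mul_assoc]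
    _ = C*(C*S) := by rw [hSC]
    _ = (C*C)*S := by rw [mul_assoc]

end SOnAux
namespace SOnAux
variable {n : ℕ}

lemma lemA {T : M n} (hT : Tᵀ * T = 1) (hNi : IsUnit (T - Tᵀ).det) :
    ∃ S : M n, Sᵀ * S = 1 ∧ S * T * Sᵀ = Tᵀ ∧ S.det = (-1:ℝ)^(n/2) ∧ n % 2 = 0 := by
  obtain ⟨J, G, hJJ, hJT, hCJ, hGJ, hGdet, hJG, hclo⟩ := exists_J hT hNi
  have hCT : (T + Tᵀ)ᵀ = T + Tᵀ := by
    rw [Matrix.transpose_add, Matrix.transpose_transpose, add_comm]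
  obtain ⟨S, hST, hSC, hSJ, hSdet, hn2⟩ := jlemma n J (T + Tᵀ) hJJ hJT hCT hCJ
  have hSG : S * G = G * S := hclo S hST hSC
  have hSN : S * (T - Tᵀ) = -((T - Tᵀ) * S) := by
    rw [← hGJ]
    calc S*(G*J) = (S*G)*J := by rw [mul_assoc]
      _ = (G*S)*J := by rw [hSG]
      _ = G*(S*J) := by rw [mul_assoc]
      _ = G*(-(J*S)) := by rw [hSJ]
      _ = -((G*J)*S) := by rw [mul_neg, mul_assoc]
  have hST2 : S * T = Tᵀ * S := by
    have h1 : S * (T+Tᵀ) + S * (T - Tᵀ) = (T+Tᵀ)*S + (-((T-Tᵀ)*S)) := by rw [hSC, hSN]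
    have h2 : S*T + S*T = Tᵀ*S + Tᵀ*S := by
      calc S*T + S*T = S*(T+Tᵀ) + S*(T-Tᵀ) := by noncomm_ring
        _ = (T+Tᵀ)*S + (-((T-Tᵀ)*S)) := h1
        _ = Tᵀ*S + Tᵀ*S := by noncomm_ring
    have h3 : (2:ℝ) • (S*T) = (2:ℝ) • (Tᵀ*S) := by
      rw [two_smul, two_smul]
      exact h2
    exact smul_right_injective (M n) (by norm_num : (2:ℝ) ≠ 0) h3
  have hSST : S * Sᵀ = 1 := mul_eq_one_comm.mp hST
  refine ⟨S, hST, ?_, hSdet, hn2⟩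
  rw [hST2, mul_assoc, hSST, mul_one]

lemma N_unit_of_no_eig {T : M n} (hT : Tᵀ * T = 1)
    (hno : ¬ ∃ v : Fin n → ℝ, v ≠ 0 ∧ (T *ᵥ v = v ∨ T *ᵥ v = -v)) :
    IsUnit (T - Tᵀ).det := by
  rw [isUnit_iff_ne_zero]
  intro hdet
  obtain ⟨v, hv0, hv⟩ := Matrix.exists_mulVec_eq_zero_iff.mpr hdet
  have hTv : T *ᵥ v = Tᵀ *ᵥ v := by
    have := hv
    rw [Matrix.sub_mulVec, sub_eq_zero] at this
    exact this
  have hT2 : T *ᵥ (T *ᵥ v) = v := by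
    rw [hTv, Matrix.mulVec_mulVec, mul_eq_one_comm.mp hT, Matrix.one_mulVec]
  rcases eq_or_ne (T *ᵥ v + v) 0 with hw | hw
  · apply hno
    refine ⟨v, hv0, Or.inr ?_⟩
    have : T *ᵥ v = -v := by
      have := hw
      rw [add_eq_zero_iff_eq_neg] at this
      exact this
    exact this
  · apply hno
    refine ⟨T *ᵥ v + v, hw, Or.inl ?_⟩
    rw [Matrix.mulVec_add, hT2]
    abel

lemma det_of_anticommute {J S : M n} (hJJ : J * J = -1) (hJT : Jᵀ = -J)
    (hST : Sᵀ * S = 1) (hSJ : S * J = -(J * S)) : S.det = (-1:ℝ)^(n/2) := by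
  obtain ⟨S0, hS0T, _, hS0J, hS0det, _⟩ := jlemma n J 0 hJJ hJT (by simp) (by simp)
  have hS0ST : S0 * S0ᵀ = 1 := mul_eq_one_comm.mp hS0T
  have hS0TJ : S0ᵀ * J = -(J * S0ᵀ) := by
    have h := congrArg Matrix.transpose hS0J
    rw [Matrix.transpose_mul, Matrix.transpose_neg, Matrix.transpose_mul, hJT] at h
    -- so -J*S0ᵀ... h : (-J)*S0ᵀ = -(S0ᵀ*(-J))
    rw [neg_mul, mul_neg, neg_neg] at h
    rw [h]
  have hYJ : (S * S0ᵀ) * J = J * (S * S0ᵀ) := by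
    calc (S*S0ᵀ)*J = S*(S0ᵀ*J) := by rw [mul_assoc]
      _ = S*(-(J*S0ᵀ)) := by rw [hS0TJ]
      _ = -((S*J)*S0ᵀ) := by rw [mul_neg, mul_assoc]
      _ = -((-(J*S))*S0ᵀ) := by rw [hSJ]
      _ = J*(S*S0ᵀ) := by rw [neg_mul, neg_neg, mul_assoc]
  have hYdet : 0 ≤ (S * S0ᵀ).det := det_nonneg_of_commute_complexStructure hJJ hYJ
  have hSdet1 : S.det * S.det = 1 := by
    have := congrArg Matrix.det hST
    rwa [Matrix.det_mul, Matrix.det_transpose, Matrix.det_one] at this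
  have hS0det1 : S0.det * S0.det = 1 := by
    have := congrArg Matrix.det hS0T
    rwa [Matrix.det_mul, Matrix.det_transpose, Matrix.det_one] at this
  rw [Matrix.det_mul, Matrix.det_transpose] at hYdet
  have hprod : S.det * S0.det = 1 := by nlinarith
  have : S.det = S0.det := by nlinarith
  rw [this, hS0det]

end SOnAux
namespace SOnAux

lemma split_step {k : ℕ} {T : M (k+1)} (hT : Tᵀ * T = 1) {v : Fin (k+1) → ℝ}
    (hv0 : v ≠ 0) {ε : ℝ} (hε : ε * ε = 1) (hv : T *ᵥ v = ε • v) :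
    ∃ (Q : M (k+1)) (T2 : M k) (σ : Fin 1 ⊕ Fin k ≃ Fin (k+1)),
      Qᵀ * Q = 1 ∧ Q * Qᵀ = 1 ∧ T2ᵀ * T2 = 1 ∧
      T = Q * ((Matrix.fromBlocks (ε • (1 : Matrix (Fin 1) (Fin 1) ℝ)) 0 0 T2).submatrix
        σ.symm σ.symm) * Qᵀ := by
  classical
  have hTTT : T * Tᵀ = 1 := mul_eq_one_comm.mp hT
  -- normalize v
  have hvv : 0 < v ⬝ᵥ v := by
    rcases (Finset.sum_nonneg (fun i _ => mul_self_nonneg (v i))).lt_or_eq with h | h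
    · exact h
    · exfalso
      apply hv0
      funext i
      have := Finset.sum_eq_zero_iff_of_nonneg (fun i _ => mul_self_nonneg (v i)) |>.mp h.symm
      have h2 := this i (Finset.mem_univ i)
      show v i = 0
      nlinarith [h2]
  set u : Fin (k+1) → ℝ := (Real.sqrt (v ⬝ᵥ v))⁻¹ • v with hudef
  have hsq : Real.sqrt (v ⬝ᵥ v) * Real.sqrt (v ⬝ᵥ v) = v ⬝ᵥ v := Real.mul_self_sqrt hvv.le
  have hsqpos : 0 < Real.sqrt (v ⬝ᵥ v) := Real.sqrt_pos.mpr hvv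
  have huu : u ⬝ᵥ u = 1 := by
    rw [hudef, smul_dotProduct, dotProduct_smul]
    field_simp
    simp only [smul_eq_mul]
    rw [show (1 / √(v ⬝ᵥ v)) * (1 / √(v ⬝ᵥ v) * (v ⬝ᵥ v)) = (v ⬝ᵥ v) / (√(v ⬝ᵥ v) * √(v ⬝ᵥ v)) by ring,
      hsq, div_self hvv.ne']
  have hTu : T *ᵥ u = ε • u := by
    rw [hudef, Matrix.mulVec_smul, hv, smul_comm]
  have hTtu : Tᵀ *ᵥ u = ε • u := by
    have h1 : Tᵀ *ᵥ (T *ᵥ u) = u := by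
      rw [Matrix.mulVec_mulVec, hT, Matrix.one_mulVec]
    rw [hTu, Matrix.mulVec_smul] at h1
    have := congrArg (fun x => ε • x) h1
    simp only [smul_smul, hε, one_smul] at this
    exact this
  -- extend to orthonormal basis
  have hr : 1 ≤ k + 1 := by omega
  obtain ⟨Q, hQ, hQcol⟩ := exists_extension_matrix hr ![u] (by
    intro i j
    fin_cases i <;> fin_cases j <;> simp [huu])
  have hQQT : Q * Qᵀ = 1 := mul_eq_one_comm.mp hQ
  set c0 : Fin (k+1) := Fin.castLE hr 0 with hc0
  have hu0 : (fun a => Q a c0) = u := by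
    funext i
    have := hQcol 0 i
    simpa [hc0] using this
  have hdotu : ∀ i j : Fin (k+1), (fun a => Q a i) ⬝ᵥ (fun a => Q a j) = (1 : M (k+1)) i j := by
    intro i j
    have h : (Qᵀ * Q) i j = (1 : M (k+1)) i j := by rw [hQ]
    rw [← h]
    simp [Matrix.mul_apply, dotProduct, Matrix.transpose_apply]
  set T1 : M (k+1) := Qᵀ * T * Q with hT1def
  have hT1c0 : ∀ i, T1 i c0 = ε * (1 : M (k+1)) i c0 := by
    intro i
    rw [hT1def, conj_entry, hu0, hTu, dotProduct_smul, ← hu0, hdotu]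
    rfl
  have hT1r0 : ∀ j, T1 c0 j = ε * (1 : M (k+1)) c0 j := by
    intro j
    rw [hT1def, conj_entry, hu0, dotProduct_mulVec, ← Matrix.mulVec_transpose, hTtu,
      smul_dotProduct, ← hu0, hdotu]
    rfl
  set σ : Fin 1 ⊕ Fin k ≃ Fin (k+1) := finSumFinEquiv.trans (finCongr (by omega)) with hσdef
  have hσ0 : σ (Sum.inl 0) = c0 := by
    apply Fin.ext
    simp [hσdef, hc0]
  have hσinr_ne_c0 : ∀ j : Fin k, σ (Sum.inr j) ≠ c0 := by
    intro j h
    have h2 := congrArg Fin.val h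
    have h3 : ((σ (Sum.inr j)) : ℕ) = 1 + j := by simp [hσdef]; omega
    have h4 : (c0 : ℕ) = 0 := rfl
    omega
  set T2 : Matrix (Fin k) (Fin k) ℝ := T1.submatrix (σ ∘ Sum.inr) (σ ∘ Sum.inr) with hT2def
  have hTb : T1.submatrix σ σ
      = Matrix.fromBlocks (ε • (1 : Matrix (Fin 1) (Fin 1) ℝ)) 0 0 T2 := by
    ext i j
    rcases i with i | i <;> rcases j with j | j
    · fin_cases i <;> fin_cases j <;>
        simp only [Fin.zero_eta, Fin.isValue, Matrix.submatrix_apply, hσ0, hT1c0] <;>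
        simp [Matrix.one_apply]
    · fin_cases i <;>
        simp only [Fin.zero_eta, Fin.isValue, Matrix.submatrix_apply, hσ0, hT1r0] <;>
        simp [Matrix.one_apply, Ne.symm (hσinr_ne_c0 j)]
    · fin_cases j <;>
        simp only [Fin.zero_eta, Fin.isValue, Matrix.submatrix_apply, hσ0, hT1c0] <;>
        simp [Matrix.one_apply, hσinr_ne_c0 i]
    · simp [hT2def]
  have hT1T : T1ᵀ * T1 = 1 := by
    have ht : T1ᵀ = Qᵀ * Tᵀ * Q := by
      rw [hT1def]
      simp [Matrix.transpose_mul, mul_assoc]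
    rw [ht, hT1def]
    calc Qᵀ * Tᵀ * Q * (Qᵀ * T * Q) = Qᵀ * Tᵀ * (Q * Qᵀ) * (T * Q) := by
          simp only [mul_assoc]
      _ = Qᵀ * (Tᵀ * T) * Q := by rw [hQQT, mul_one]; simp only [mul_assoc]
      _ = 1 := by rw [hT, mul_one, hQ]
  have hTbT : (T1.submatrix σ σ)ᵀ * (T1.submatrix σ σ) = 1 := by
    rw [Matrix.transpose_submatrix, Matrix.submatrix_mul_equiv, hT1T]
    exact Matrix.submatrix_one_equiv σ
  have hT2T : T2ᵀ * T2 = 1 := by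
    rw [hTb] at hTbT
    rw [Matrix.fromBlocks_transpose, Matrix.fromBlocks_multiply,
      show (1 : Matrix (Fin 1 ⊕ Fin k) (Fin 1 ⊕ Fin k) ℝ) = Matrix.fromBlocks 1 0 0 1 from
        Matrix.fromBlocks_one.symm] at hTbT
    have h2 := congrArg Matrix.toBlocks₂₂ hTbT
    rw [Matrix.toBlocks_fromBlocks₂₂, Matrix.toBlocks_fromBlocks₂₂] at h2
    simpa using h2
  refine ⟨Q, T2, σ, hQ, hQQT, hT2T, ?_⟩
  rw [← hTb, Matrix.submatrix_submatrix]
  simp only [Equiv.self_comp_symm, Matrix.submatrix_id_id]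
  rw [hT1def]
  calc T = (Q * Qᵀ) * T * (Q * Qᵀ) := by rw [hQQT, one_mul, mul_one]
    _ = Q * (Qᵀ * T * Q) * Qᵀ := by simp only [mul_assoc]

end SOnAux
namespace SOnAux

lemma assemble {k : ℕ} (Q : M (k+1)) (σ : Fin 1 ⊕ Fin k ≃ Fin (k+1)) (ε d : ℝ)
    (T2 S2 : Matrix (Fin k) (Fin k) ℝ)
    (hQ : Qᵀ * Q = 1) (hQQT : Q * Qᵀ = 1) (hd : d * d = 1)
    (hS2T : S2ᵀ * S2 = 1) (hS2rev : S2 * T2 * S2ᵀ = T2ᵀ) :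
    ∃ S : M (k+1), Sᵀ * S = 1 ∧
      S * (Q * ((Matrix.fromBlocks (ε • (1:Matrix (Fin 1) (Fin 1) ℝ)) 0 0 T2).submatrix
          σ.symm σ.symm) * Qᵀ) * Sᵀ
        = (Q * ((Matrix.fromBlocks (ε • (1:Matrix (Fin 1) (Fin 1) ℝ)) 0 0 T2).submatrix
          σ.symm σ.symm) * Qᵀ)ᵀ ∧
      S.det = d * S2.det := by
  set Tb : Matrix (Fin 1 ⊕ Fin k) (Fin 1 ⊕ Fin k) ℝ :=
    Matrix.fromBlocks (ε • (1:Matrix (Fin 1) (Fin 1) ℝ)) 0 0 T2 with hTbdef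
  set Sb : Matrix (Fin 1 ⊕ Fin k) (Fin 1 ⊕ Fin k) ℝ :=
    Matrix.fromBlocks (d • (1:Matrix (Fin 1) (Fin 1) ℝ)) 0 0 S2 with hSbdef
  have hmul : ∀ X Y : Matrix (Fin 1 ⊕ Fin k) (Fin 1 ⊕ Fin k) ℝ,
      (X.submatrix σ.symm σ.symm) * (Y.submatrix σ.symm σ.symm)
        = (X * Y).submatrix σ.symm σ.symm :=
    fun X Y => Matrix.submatrix_mul_equiv X Y σ.symm σ.symm σ.symm
  have hSbT : Sbᵀ * Sb = 1 := by
    rw [hSbdef, Matrix.fromBlocks_transpose, Matrix.fromBlocks_multiply]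
    simp only [Matrix.mul_zero, Matrix.zero_mul, add_zero, zero_add, Matrix.transpose_zero,
      Matrix.transpose_smul, Matrix.transpose_one]
    rw [hS2T, smul_mul_smul_comm, one_mul, hd, one_smul, Matrix.fromBlocks_one]
  have hSbTSb : Sb * Tb * Sbᵀ = Tbᵀ := by
    rw [hSbdef, hTbdef, Matrix.fromBlocks_transpose, Matrix.fromBlocks_transpose,
      Matrix.fromBlocks_multiply, Matrix.fromBlocks_multiply]
    simp only [Matrix.mul_zero, Matrix.zero_mul, add_zero, zero_add, Matrix.transpose_zero,
      Matrix.transpose_smul, Matrix.transpose_one]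
    rw [hS2rev, smul_mul_smul_comm, smul_mul_smul_comm, one_mul, one_mul]
    rw [show d * ε * d = ε by rw [mul_comm d ε, mul_assoc, hd, mul_one]]
  refine ⟨Q * (Sb.submatrix σ.symm σ.symm) * Qᵀ, ?_, ?_, ?_⟩
  · have ht : (Q * (Sb.submatrix σ.symm σ.symm) * Qᵀ)ᵀ
        = Q * ((Sbᵀ).submatrix σ.symm σ.symm) * Qᵀ := by
      rw [Matrix.transpose_mul, Matrix.transpose_mul, Matrix.transpose_transpose,
        Matrix.transpose_submatrix, mul_assoc]
    rw [ht]
    calc Q * (Sbᵀ.submatrix σ.symm σ.symm) * Qᵀ * (Q * (Sb.submatrix σ.symm σ.symm) * Qᵀ)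
        = Q * (Sbᵀ.submatrix σ.symm σ.symm) * (Qᵀ * Q) * ((Sb.submatrix σ.symm σ.symm) * Qᵀ) := by
          simp only [mul_assoc]
      _ = Q * ((Sbᵀ.submatrix σ.symm σ.symm) * (Sb.submatrix σ.symm σ.symm)) * Qᵀ := by
          rw [hQ, mul_one]; simp only [mul_assoc]
      _ = Q * ((Sbᵀ * Sb).submatrix σ.symm σ.symm) * Qᵀ := by rw [hmul]
      _ = 1 := by rw [hSbT, Matrix.submatrix_one_equiv, mul_one, hQQT]
  · have ht : (Q * (Sb.submatrix σ.symm σ.symm) * Qᵀ)ᵀ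
        = Q * ((Sbᵀ).submatrix σ.symm σ.symm) * Qᵀ := by
      rw [Matrix.transpose_mul, Matrix.transpose_mul, Matrix.transpose_transpose,
        Matrix.transpose_submatrix, mul_assoc]
    have ht2 : (Q * (Tb.submatrix σ.symm σ.symm) * Qᵀ)ᵀ
        = Q * ((Tbᵀ).submatrix σ.symm σ.symm) * Qᵀ := by
      rw [Matrix.transpose_mul, Matrix.transpose_mul, Matrix.transpose_transpose,
        Matrix.transpose_submatrix, mul_assoc]
    rw [ht, ht2]
    calc Q * (Sb.submatrix σ.symm σ.symm) * Qᵀ * (Q * (Tb.submatrix σ.symm σ.symm) * Qᵀ)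
          * (Q * (Sbᵀ.submatrix σ.symm σ.symm) * Qᵀ)
        = Q * (Sb.submatrix σ.symm σ.symm) * (Qᵀ * Q) * ((Tb.submatrix σ.symm σ.symm))
          * (Qᵀ * Q) * ((Sbᵀ.submatrix σ.symm σ.symm) * Qᵀ) := by simp only [mul_assoc]
      _ = Q * ((Sb.submatrix σ.symm σ.symm) * (Tb.submatrix σ.symm σ.symm)
          * (Sbᵀ.submatrix σ.symm σ.symm)) * Qᵀ := by
          rw [hQ, mul_one, mul_one]; simp only [mul_assoc]
      _ = Q * ((Sb * Tb * Sbᵀ).submatrix σ.symm σ.symm) * Qᵀ := by rw [hmul, hmul]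
      _ = Q * (Tbᵀ.submatrix σ.symm σ.symm) * Qᵀ := by rw [hSbTSb]
  · have hQdet : Q.det * Q.det = 1 := by
      have := congrArg Matrix.det hQ
      rwa [Matrix.det_mul, Matrix.det_transpose, Matrix.det_one] at this
    rw [Matrix.det_mul, Matrix.det_mul, Matrix.det_transpose,
      Matrix.det_submatrix_equiv_self, hSbdef, Matrix.det_fromBlocks_zero₂₁]
    have hdd : (d • (1:Matrix (Fin 1) (Fin 1) ℝ)).det = d := by
      rw [Matrix.det_smul, Matrix.det_one]
      simp
    rw [hdd]
    calc Q.det * (d * S2.det) * Q.det = (Q.det * Q.det) * (d * S2.det) := by ring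
      _ = d * S2.det := by rw [hQdet, one_mul]

lemma lemRevAux : ∀ (n : ℕ) (T : M n), Tᵀ * T = 1 →
    ∃ S : M n, Sᵀ * S = 1 ∧ S * T * Sᵀ = Tᵀ := by
  intro n
  induction n using Nat.strong_induction_on with
  | _ n ih =>
  intro T hT
  by_cases hex : ∃ v : Fin n → ℝ, v ≠ 0 ∧ (T *ᵥ v = v ∨ T *ᵥ v = -v)
  · obtain ⟨v, hv0, hv⟩ := hex
    have hn : n ≠ 0 := by
      rintro rfl
      exact hv0 (funext fun i => i.elim0)
    obtain ⟨k, rfl⟩ : ∃ k, n = k + 1 := ⟨n-1, by omega⟩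
    obtain ⟨ε, hε, hvε⟩ : ∃ ε : ℝ, ε * ε = 1 ∧ T *ᵥ v = ε • v := by
      rcases hv with h | h
      · exact ⟨1, by norm_num, by simpa using h⟩
      · refine ⟨-1, by norm_num, ?_⟩
        rw [h]
        ext i
        simp
    obtain ⟨Q, T2, σ, hQ, hQQT, hT2T, hTeq⟩ := split_step hT hv0 hε hvε
    obtain ⟨S2, hS2T, hS2rev⟩ := ih k (by omega) T2 hT2T
    obtain ⟨S, h1, h2, _⟩ := assemble Q σ ε 1 T2 S2 hQ hQQT (by norm_num) hS2T hS2rev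
    rw [← hTeq] at h2
    exact ⟨S, h1, h2⟩
  · rcases Nat.eq_zero_or_pos n with rfl | hn
    · refine ⟨1, by simp, ?_⟩
      ext i j
      exact i.elim0
    · obtain ⟨S, h1, h2, _, _⟩ := lemA hT (N_unit_of_no_eig hT hex)
      exact ⟨S, h1, h2⟩

lemma lemRev {n : ℕ} (T : M n) (hT : Tᵀ * T = 1)
    (hex : ∃ v : Fin n → ℝ, v ≠ 0 ∧ (T *ᵥ v = v ∨ T *ᵥ v = -v)) :
    ∃ S : M n, Sᵀ * S = 1 ∧ S * T * Sᵀ = Tᵀ ∧ S.det = 1 := by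
  obtain ⟨v, hv0, hv⟩ := hex
  have hn : n ≠ 0 := by
    rintro rfl
    exact hv0 (funext fun i => i.elim0)
  obtain ⟨k, rfl⟩ : ∃ k, n = k + 1 := ⟨n-1, by omega⟩
  obtain ⟨ε, hε, hvε⟩ : ∃ ε : ℝ, ε * ε = 1 ∧ T *ᵥ v = ε • v := by
    rcases hv with h | h
    · exact ⟨1, by norm_num, by simpa using h⟩
    · refine ⟨-1, by norm_num, ?_⟩
      rw [h]
      ext i
      simp
  obtain ⟨Q, T2, σ, hQ, hQQT, hT2T, hTeq⟩ := split_step hT hv0 hε hvε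
  obtain ⟨S2, hS2T, hS2rev⟩ := lemRevAux k T2 hT2T
  have hS2det : S2.det * S2.det = 1 := by
    have := congrArg Matrix.det hS2T
    rwa [Matrix.det_mul, Matrix.det_transpose, Matrix.det_one] at this
  obtain ⟨S, h1, h2, h3⟩ := assemble Q σ ε S2.det T2 S2 hQ hQQT hS2det hS2T hS2rev
  rw [← hTeq] at h2
  exact ⟨S, h1, h2, by rw [h3, hS2det]⟩

end SOnAux
open SOnAux in
/-- An element `T ∈ SO(n)` is conjugate in `SO(n)` to its inverse if and only
if either `n ≢ 2 (mod 4)`, or `T` has `1` or `−1` as an eigenvalue. -/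
theorem real_in_SOn_iff (n : ℕ)
    (T : Matrix (Fin n) (Fin n) ℝ) (hTo : Tᵀ * T = 1) (hTdet : T.det = 1) :
    (∃ S : Matrix (Fin n) (Fin n) ℝ,
        Sᵀ * S = 1 ∧ S.det = 1 ∧ S * T * S⁻¹ = T⁻¹) ↔
      (¬ (n % 4 = 2) ∨
        ∃ v : Fin n → ℝ, v ≠ 0 ∧ (T.mulVec v = v ∨ T.mulVec v = -v)) := by
  have hTinv : T⁻¹ = Tᵀ := Matrix.inv_eq_left_inv hTo
  constructor
  · rintro ⟨S, hST, hSdet, hrev⟩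
    by_contra hcon
    push_neg at hcon
    obtain ⟨hn4, hno⟩ := hcon
    have hno' : ¬ ∃ v : Fin n → ℝ, v ≠ 0 ∧ (T *ᵥ v = v ∨ T *ᵥ v = -v) := by
      rintro ⟨v, h1, h2⟩
      rcases h2 with h2 | h2
      · exact (hno v h1).1 h2
      · exact (hno v h1).2 h2
    have hNi := N_unit_of_no_eig hTo hno'
    obtain ⟨J, G, hJJ, hJT, hCJ, hGJ, hGdet, hJG, hclo⟩ := exists_J hTo hNi
    have hSinv : S⁻¹ = Sᵀ := Matrix.inv_eq_left_inv hST
    rw [hSinv, hTinv] at hrev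
    have hSST : S * Sᵀ = 1 := mul_eq_one_comm.mp hST
    have hrevT : S * Tᵀ * Sᵀ = T := by
      have h := congrArg Matrix.transpose hrev
      rw [Matrix.transpose_mul, Matrix.transpose_mul, Matrix.transpose_transpose,
        Matrix.transpose_transpose] at h
      rw [← mul_assoc] at h
      exact h
    have hSC : S * (T + Tᵀ) = (T + Tᵀ) * S := by
      have h1 : S * (T + Tᵀ) * Sᵀ = Tᵀ + T := by
        rw [mul_add, add_mul, hrev, hrevT]
      have h2 := congrArg (fun X => X * S) h1
      beta_reduce at h2
      rw [mul_assoc (S * (T + Tᵀ)) Sᵀ S, hST, mul_one] at h2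
      rw [h2, add_comm]
    have hSN : S * (T - Tᵀ) = -((T - Tᵀ) * S) := by
      have h1 : S * (T - Tᵀ) * Sᵀ = Tᵀ - T := by
        rw [mul_sub, sub_mul, hrev, hrevT]
      have h2 := congrArg (fun X => X * S) h1
      beta_reduce at h2
      rw [mul_assoc (S * (T - Tᵀ)) Sᵀ S, hST, mul_one] at h2
      rw [h2, show Tᵀ - T = -(T - Tᵀ) from (neg_sub _ _).symm, neg_mul]
    have hSG : S * G = G * S := hclo S hST hSC
    have hSJ : S * J = -(J * S) := by
      have hGiG : G⁻¹ * G = 1 := Matrix.nonsing_inv_mul G hGdet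
      have hcan : ∀ X Y : Matrix (Fin n) (Fin n) ℝ, G * X = G * Y → X = Y := by
        intro X Y hxy
        have h := congrArg (fun Z => G⁻¹ * Z) hxy
        simpa [← mul_assoc, hGiG, one_mul] using h
      apply hcan
      calc G * (S * J) = (G * S) * J := by rw [mul_assoc]
        _ = (S * G) * J := by rw [hSG]
        _ = S * (G * J) := by rw [mul_assoc]
        _ = S * (T - Tᵀ) := by rw [hGJ]
        _ = -((T - Tᵀ) * S) := hSN
        _ = -((G * J) * S) := by rw [hGJ]
        _ = G * (-(J * S)) := by rw [mul_neg, mul_assoc]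
    have hdetS := det_of_anticommute hJJ hJT hST hSJ
    have hn2 : n % 2 = 0 := by
      have hdetJ : (J.det)^2 = (-1:ℝ)^n := by
        rw [sq, ← Matrix.det_mul, hJJ]
        have h : (-1 : Matrix (Fin n) (Fin n) ℝ) = (-1 : ℝ) • (1 : Matrix (Fin n) (Fin n) ℝ) := by
          simp
        rw [h, Matrix.det_smul, Matrix.det_one, mul_one, Fintype.card_fin]
      rcases Nat.even_or_odd n with h | h
      · exact Nat.even_iff.mp h
      · exfalso
        rw [Odd.neg_one_pow h] at hdetJ
        nlinarith [sq_nonneg J.det]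
    have hodd : Odd (n / 2) := Nat.odd_iff.mpr (by omega)
    rw [Odd.neg_one_pow hodd] at hdetS
    rw [hdetS] at hSdet
    norm_num at hSdet
  · intro h
    by_cases hex : ∃ v : Fin n → ℝ, v ≠ 0 ∧ (T *ᵥ v = v ∨ T *ᵥ v = -v)
    · obtain ⟨S, h1, h2, h3⟩ := lemRev T hTo hex
      refine ⟨S, h1, h3, ?_⟩
      rw [Matrix.inv_eq_left_inv h1, hTinv]
      exact h2
    · have hn4 : ¬ (n % 4 = 2) := h.resolve_right hex
      obtain ⟨S, h1, h2, h3, hn2⟩ := lemA hTo (N_unit_of_no_eig hTo hex)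
      refine ⟨S, h1, ?_, ?_⟩
      · rw [h3]
        exact Even.neg_one_pow (Nat.even_iff.mpr (by omega))
      · rw [Matrix.inv_eq_left_inv h1, hTinv]
        exact h2
end

section
/- Every element of SO(n) is real in SO(n) (conjugate in SO(n) to its inverse) if and only if n ≢ 2 (mod 4). -/
open Matrix

/-- cross-block vanishing for distinct rotation angles -/
lemma cross_zero (cj sj ck sk p q r t : ℝ) (hΔ : ck ≠ cj)
    (E1 : p*ck + q*sk = cj*p + sj*r)
    (E2 : -(p*sk) + q*ck = cj*q + sj*t)
    (E3 : r*ck + t*sk = -(sj*p) + cj*r)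
    (E4 : -(r*sk) + t*ck = -(sj*q) + cj*t) :
    p = 0 ∧ q = 0 ∧ r = 0 ∧ t = 0 := by
  have hΔ' : ck - cj ≠ 0 := sub_ne_zero.2 hΔ
  have h2 : 0 < (ck - cj)^2 := by positivity
  have A1 : p*(ck-cj) = sj*r - q*sk := by linear_combination E1
  have A2 : q*(ck-cj) = p*sk + sj*t := by linear_combination E2
  have A3 : r*(ck-cj) = -(sj*p) - t*sk := by linear_combination E3
  have A4 : t*(ck-cj) = r*sk - sj*q := by linear_combination E4
  have B1 : p*((ck-cj)^2 + sj^2 + sk^2) = -(2*sj*sk*t) := by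
    linear_combination (ck - cj) * A1 + sj * A3 - sk * A2
  have B2 : t*((ck-cj)^2 + sj^2 + sk^2) = -(2*sj*sk*p) := by
    linear_combination (ck - cj) * A4 + sk * A3 - sj * A2
  set α := (ck-cj)^2 + sj^2 + sk^2 with hα
  have hαpos : 0 < α := by positivity
  have hp0 : p * (α^2 - (2*sj*sk)^2) = 0 := by
    linear_combination α * B1 - (2*sj*sk) * B2
  have hfac : α^2 - (2*sj*sk)^2 = ((ck-cj)^2 + (sj-sk)^2) * ((ck-cj)^2 + (sj+sk)^2) := by
    rw [hα]; ring
  have hfacpos : 0 < α^2 - (2*sj*sk)^2 := by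
    rw [hfac]
    have h3 : 0 < (ck-cj)^2 + (sj-sk)^2 := by positivity
    have h4 : 0 < (ck-cj)^2 + (sj+sk)^2 := by positivity
    positivity
  have hp : p = 0 := by
    rcases mul_eq_zero.1 hp0 with h | h
    · exact h
    · exact absurd h hfacpos.ne'
  have ht : t = 0 := by
    have := B2
    rw [hp] at this
    have h5 : t * α = 0 := by linarith [this]
    rcases mul_eq_zero.1 h5 with h | h
    · exact h
    · exact absurd h hαpos.ne'
  have hq : q = 0 := by
    have := A2; rw [hp, ht] at this
    have h5 : q * (ck - cj) = 0 := by linarith [this]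
    rcases mul_eq_zero.1 h5 with h | h
    · exact h
    · exact absurd h hΔ'
  have hr : r = 0 := by
    have := A3; rw [hp, ht] at this
    have h5 : r * (ck - cj) = 0 := by linarith [this]
    rcases mul_eq_zero.1 h5 with h | h
    · exact h
    · exact absurd h hΔ'
  exact ⟨hp, hq, hr, ht⟩

section Converse
variable (m : ℕ)

noncomputable def tv (j : Fin m) : ℝ := (j : ℝ) + 1
noncomputable def cv (j : Fin m) : ℝ := (1 - tv m j ^ 2) / (1 + tv m j ^ 2)
noncomputable def sv (j : Fin m) : ℝ := 2 * tv m j / (1 + tv m j ^ 2)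

lemma tv_pos (j : Fin m) : 0 < tv m j := by
  have : (0:ℝ) ≤ (j:ℝ) := Nat.cast_nonneg _
  simp only [tv]; linarith

lemma den_pos (j : Fin m) : 0 < 1 + tv m j ^ 2 := by positivity

lemma sv_pos (j : Fin m) : 0 < sv m j := by
  have := tv_pos m j; have := den_pos m j
  exact div_pos (by linarith) (den_pos m j)

lemma cs_sq (j : Fin m) : cv m j ^ 2 + sv m j ^ 2 = 1 := by
  have h := (den_pos m j).ne'
  rw [cv, sv, div_pow, div_pow, ← add_div, div_eq_one_iff_eq (pow_ne_zero 2 h)]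
  ring

lemma cv_inj {j k : Fin m} (h : cv m j = cv m k) : j = k := by
  have hj := den_pos m j
  have hk := den_pos m k
  have h1 : (1 - tv m j ^ 2) * (1 + tv m k ^ 2) = (1 - tv m k ^ 2) * (1 + tv m j ^ 2) := by
    have := (div_eq_div_iff hj.ne' hk.ne').1 h
    linarith [this]
  have h2 : tv m j ^ 2 = tv m k ^ 2 := by nlinarith [h1]
  have h3 : tv m j = tv m k := by
    nlinarith [tv_pos m j, tv_pos m k, sq_nonneg (tv m j - tv m k)]
  have h4 : (j : ℝ) = (k : ℝ) := by simp only [tv] at h3; linarith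
  exact Fin.ext (Nat.cast_injective h4)

noncomputable def Rv (j : Fin m) : Matrix (Fin 2) (Fin 2) ℝ :=
  !![cv m j, -sv m j; sv m j, cv m j]

lemma Rv_orth (j : Fin m) : (Rv m j)ᵀ * Rv m j = 1 := by
  have h := cs_sq m j
  rw [Rv, show (!![cv m j, -sv m j; sv m j, cv m j])ᵀ
      = !![cv m j, sv m j; -sv m j, cv m j] by ext a b; fin_cases a <;> fin_cases b <;> simp,
    mul_fin_two]
  ext a b; fin_cases a <;> fin_cases b <;> simp [Matrix.one_apply] <;> nlinarith [h]

lemma Rv_det (j : Fin m) : (Rv m j).det = 1 := by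
  rw [Rv, det_fin_two_of]
  nlinarith [cs_sq m j]

end Converse

lemma converse_dir (n m : ℕ) (hm : n = 2 * m) (hmo : m % 2 = 1) :
    ¬ (∀ T : Matrix (Fin n) (Fin n) ℝ, Tᵀ * T = 1 → T.det = 1 →
      ∃ S : Matrix (Fin n) (Fin n) ℝ,
        Sᵀ * S = 1 ∧ S.det = 1 ∧ S * T * S⁻¹ = T⁻¹) := by
  intro hall
  have e : Fin 2 × Fin m ≃ Fin n := (finProdFinEquiv).trans (finCongr (by omega))
  set T : Matrix (Fin n) (Fin n) ℝ := (blockDiagonal (Rv m)).submatrix e.symm e.symm with hTdef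
  have hTo : Tᵀ * T = 1 := by
    rw [hTdef, transpose_submatrix, submatrix_mul_equiv, blockDiagonal_transpose,
      ← blockDiagonal_mul]
    have : (fun k => (Rv m k)ᵀ * Rv m k) = fun _ => (1 : Matrix (Fin 2) (Fin 2) ℝ) := by
      funext k; exact Rv_orth m k
    rw [this, show (fun _ : Fin m => (1 : Matrix (Fin 2) (Fin 2) ℝ)) = 1 from rfl,
      blockDiagonal_one, submatrix_one_equiv]
  have hTdet : T.det = 1 := by
    rw [hTdef, det_submatrix_equiv_self, det_blockDiagonal]
    simp [Rv_det]
  obtain ⟨S, hSo, hSdet, hconj⟩ := hall T hTo hTdet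
  have hTinv : T⁻¹ = Tᵀ := inv_eq_left_inv hTo
  have hSinv : S⁻¹ = Sᵀ := inv_eq_left_inv hSo
  have hST : S * T = Tᵀ * S := by
    have h1 : S * T * Sᵀ = Tᵀ := by rw [← hSinv, ← hTinv]; exact hconj
    calc S * T = S * T * (Sᵀ * S) := by rw [hSo, mul_one]
    _ = (S * T * Sᵀ) * S := (mul_assoc (S*T) Sᵀ S).symm
    _ = Tᵀ * S := by rw [h1]
  set S₀ : Matrix (Fin 2 × Fin m) (Fin 2 × Fin m) ℝ := S.submatrix e e with hS₀def
  have hsub : T.submatrix e e = blockDiagonal (Rv m) := by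
    rw [hTdef, submatrix_submatrix]
    simp
  have hS₀T : S₀ * blockDiagonal (Rv m) = (blockDiagonal (Rv m))ᵀ * S₀ := by
    calc S₀ * blockDiagonal (Rv m) = S.submatrix e e * T.submatrix e e := by rw [hsub]
    _ = (S * T).submatrix e e := by rw [submatrix_mul_equiv]
    _ = (Tᵀ * S).submatrix e e := by rw [hST]
    _ = Tᵀ.submatrix e e * S.submatrix e e := by rw [submatrix_mul_equiv]
    _ = (blockDiagonal (Rv m))ᵀ * S₀ := by
          have hsubT : Tᵀ.submatrix ⇑e ⇑e = (blockDiagonal (Rv m))ᵀ := by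
            rw [← transpose_submatrix]; exact congrArg Matrix.transpose hsub
          rw [hsubT]
  have hentry : ∀ (j k : Fin m) (x y : Fin 2),
      S₀ (x, j) (0, k) * Rv m k 0 y + S₀ (x, j) (1, k) * Rv m k 1 y
      = Rv m j 0 x * S₀ (0, j) (y, k) + Rv m j 1 x * S₀ (1, j) (y, k) := by
    intro j k x y
    have h := congrFun (congrFun hS₀T (x, j)) (y, k)
    simp only [mul_apply, transpose_apply, Fintype.sum_prod_type, blockDiagonal_apply,
      mul_ite, mul_zero, ite_mul, zero_mul, Finset.sum_ite_eq, Finset.sum_ite_eq',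
      Finset.mem_univ, if_true, Fin.sum_univ_two] at h
    linear_combination h
  have hcross : ∀ j k, j ≠ k → ∀ x y, S₀ (x, j) (y, k) = 0 := by
    intro j k hjk
    have hΔ : cv m k ≠ cv m j := fun h => hjk ((cv_inj m h).symm)
    obtain ⟨hp, hq, hr, ht⟩ := cross_zero (cv m j) (sv m j) (cv m k) (sv m k)
      (S₀ (0, j) (0, k)) (S₀ (0, j) (1, k)) (S₀ (1, j) (0, k)) (S₀ (1, j) (1, k)) hΔ
      (by have h := hentry j k 0 0; simp only [Rv, cons_val', cons_val_zero, cons_val_one,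
            head_cons, head_fin_const, empty_val', cons_val_fin_one, of_apply] at h
          linear_combination h)
      (by have h := hentry j k 0 1; simp only [Rv, cons_val', cons_val_zero, cons_val_one,
            head_cons, head_fin_const, empty_val', cons_val_fin_one, of_apply] at h
          linear_combination h)
      (by have h := hentry j k 1 0; simp only [Rv, cons_val', cons_val_zero, cons_val_one,
            head_cons, head_fin_const, empty_val', cons_val_fin_one, of_apply] at h
          linear_combination h)
      (by have h := hentry j k 1 1; simp only [Rv, cons_val', cons_val_zero, cons_val_one,
            head_cons, head_fin_const, empty_val', cons_val_fin_one, of_apply] at h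
          linear_combination h)
    intro x y
    fin_cases x <;> fin_cases y <;> assumption
  have hdiag : ∀ j, S₀ (1, j) (0, j) = S₀ (0, j) (1, j) ∧ S₀ (1, j) (1, j) = -S₀ (0, j) (0, j) := by
    intro j
    have h1 := hentry j j 0 0
    have h2 := hentry j j 0 1
    simp only [Rv, cons_val', cons_val_zero, cons_val_one, head_cons, head_fin_const,
      empty_val', cons_val_fin_one, of_apply] at h1 h2
    have hs := (sv_pos m j).ne'
    constructor
    · have h3 : sv m j * (S₀ (0, j) (1, j) - S₀ (1, j) (0, j)) = 0 := by linear_combination h1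
      rcases mul_eq_zero.1 h3 with h | h
      · exact absurd h hs
      · linarith
    · have h3 : sv m j * (S₀ (1, j) (1, j) + S₀ (0, j) (0, j)) = 0 := by linear_combination -h2
      rcases mul_eq_zero.1 h3 with h | h
      · exact absurd h hs
      · linarith
  set Pd : Fin m → Matrix (Fin 2) (Fin 2) ℝ :=
    fun j => Matrix.of (fun x y => S₀ (x, j) (y, j)) with hPddef
  have hblock : S₀ = blockDiagonal Pd := by
    ext ⟨x, j⟩ ⟨y, k⟩
    by_cases h : j = k
    · subst h; simp [blockDiagonal_apply, hPddef]
    · simp only [blockDiagonal_apply, h, if_false]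
      exact hcross j k h x y
  have hdetS₀ : S₀.det = 1 := by rw [hS₀def, det_submatrix_equiv_self]; exact hSdet
  rw [hblock, det_blockDiagonal] at hdetS₀
  have hdetfac : ∀ j, (Pd j).det = -1 * ((S₀ (0, j) (0, j))^2 + (S₀ (0, j) (1, j))^2) := by
    intro j
    rw [det_fin_two]
    have e1 : Pd j 0 0 = S₀ (0, j) (0, j) := rfl
    have e2 : Pd j 0 1 = S₀ (0, j) (1, j) := rfl
    have e3 : Pd j 1 0 = S₀ (1, j) (0, j) := rfl
    have e4 : Pd j 1 1 = S₀ (1, j) (1, j) := rfl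
    rw [e1, e2, e3, e4, (hdiag j).1, (hdiag j).2]
    ring
  rw [Finset.prod_congr rfl (fun j _ => hdetfac j), Finset.prod_mul_distrib,
    Finset.prod_const, Finset.card_univ, Fintype.card_fin,
    (Nat.odd_iff.mpr hmo).neg_one_pow] at hdetS₀
  have hnn : (0:ℝ) ≤ ∏ j, ((S₀ (0, j) (0, j))^2 + (S₀ (0, j) (1, j))^2) :=
    Finset.prod_nonneg (fun j _ => by positivity)
  nlinarith [hdetS₀, hnn]


section Forward

variable {ι κ : Type*} [Fintype ι] [DecidableEq ι] [Fintype κ] [DecidableEq κ]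

/-- The key property produced by the structural induction. -/
def Good (D K S : Matrix ι ι ℝ) (k : ℕ) : Prop :=
  Sᵀ * S = 1 ∧ S * D = D * S ∧ S * K = -(K * S) ∧ S.det = (-1)^k ∧
    (Fintype.card ι = 2 * k ∨ ∃ (v : ι → ℝ) (μ : ℝ), v ≠ 0 ∧ K *ᵥ v = 0 ∧ D *ᵥ v = μ • v)

lemma good_conj {D K U S : Matrix ι ι ℝ} {k : ℕ} (hU : Uᵀ * U = 1)
    (h : Good (Uᵀ * D * U) (Uᵀ * K * U) S k) : Good D K (U * S * Uᵀ) k := by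
  obtain ⟨h1, h2, h3, h4, h5⟩ := h
  have hUU : U * Uᵀ = 1 := mul_eq_one_comm.mp hU
  have hL : ∀ Z : Matrix ι ι ℝ, Uᵀ * (U * Z) = Z := fun Z => by
    rw [← mul_assoc, hU, one_mul]
  have hsand : ∀ X Y : Matrix ι ι ℝ, (U * X * Uᵀ) * (U * Y * Uᵀ) = U * (X * Y) * Uᵀ := by
    intro X Y; simp only [mul_assoc]; rw [hL]
  have htrans : (U * S * Uᵀ)ᵀ = U * Sᵀ * Uᵀ := by
    simp [Matrix.transpose_mul, mul_assoc]
  have hrecD : U * (Uᵀ * D * U) * Uᵀ = D := by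
    simp only [mul_assoc]; rw [hUU, mul_one, ← mul_assoc, hUU, one_mul]
  have hrecK : U * (Uᵀ * K * U) * Uᵀ = K := by
    simp only [mul_assoc]; rw [hUU, mul_one, ← mul_assoc, hUU, one_mul]
  refine ⟨?_, ?_, ?_, ?_, ?_⟩
  · rw [htrans, hsand, h1, mul_one, hUU]
  · calc (U * S * Uᵀ) * D = (U * S * Uᵀ) * (U * (Uᵀ * D * U) * Uᵀ) := by rw [hrecD]
    _ = U * (S * (Uᵀ * D * U)) * Uᵀ := hsand _ _
    _ = U * ((Uᵀ * D * U) * S) * Uᵀ := by rw [h2]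
    _ = (U * (Uᵀ * D * U) * Uᵀ) * (U * S * Uᵀ) := (hsand _ _).symm
    _ = D * (U * S * Uᵀ) := by rw [hrecD]
  · calc (U * S * Uᵀ) * K = (U * S * Uᵀ) * (U * (Uᵀ * K * U) * Uᵀ) := by rw [hrecK]
    _ = U * (S * (Uᵀ * K * U)) * Uᵀ := hsand _ _
    _ = U * (-((Uᵀ * K * U) * S)) * Uᵀ := by rw [h3]
    _ = -(U * ((Uᵀ * K * U) * S) * Uᵀ) := by rw [Matrix.mul_neg, Matrix.neg_mul]
    _ = -((U * (Uᵀ * K * U) * Uᵀ) * (U * S * Uᵀ)) := by rw [hsand]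
    _ = -(K * (U * S * Uᵀ)) := by rw [hrecK]
  · have hdetU : U.det * Uᵀ.det = 1 := by
      rw [← det_mul, hUU, det_one]
    calc (U * S * Uᵀ).det = U.det * S.det * Uᵀ.det := by rw [det_mul, det_mul]
    _ = (U.det * Uᵀ.det) * S.det := by ring
    _ = (-1)^k := by rw [hdetU, one_mul, h4]
  · rcases h5 with h5 | ⟨v, μ, hv0, hKv, hDv⟩
    · exact Or.inl h5
    · refine Or.inr ⟨U *ᵥ v, μ, ?_, ?_, ?_⟩
      · intro h
        apply hv0
        have : Uᵀ *ᵥ (U *ᵥ v) = v := by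
          rw [mulVec_mulVec, hU, one_mulVec]
        rw [h, mulVec_zero] at this
        exact this.symm
      · have hKU : K * U = U * (Uᵀ * K * U) := by
          simp only [mul_assoc]; rw [← mul_assoc, hUU, one_mul]
        rw [mulVec_mulVec, hKU, ← mulVec_mulVec, hKv, mulVec_zero]
      · have hDU : D * U = U * (Uᵀ * D * U) := by
          simp only [mul_assoc]; rw [← mul_assoc, hUU, one_mul]
        rw [mulVec_mulVec, hDU, ← mulVec_mulVec, hDv, mulVec_smul]
lemma good_equiv (g : ι ≃ κ) {D K S : Matrix κ κ ℝ} {k : ℕ} (h : Good D K S k) :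
    Good (D.submatrix g g) (K.submatrix g g) (S.submatrix g g) k := by
  obtain ⟨h1, h2, h3, h4, h5⟩ := h
  refine ⟨?_, ?_, ?_, ?_, ?_⟩
  · rw [transpose_submatrix, submatrix_mul_equiv, h1, submatrix_one_equiv]
  · rw [submatrix_mul_equiv, submatrix_mul_equiv, h2]
  · rw [submatrix_mul_equiv, submatrix_mul_equiv, h3]
    ext i j; simp
  · rw [det_submatrix_equiv_self, h4]
  · rcases h5 with h5 | ⟨v, μ, hv0, hKv, hDv⟩
    · exact Or.inl (by rw [Fintype.card_congr g, h5])
    · refine Or.inr ⟨v ∘ g, μ, ?_, ?_, ?_⟩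
      · intro h
        apply hv0
        funext x
        have := congrFun h (g.symm x)
        simpa using this
      · rw [submatrix_mulVec_equiv]
        have : (v ∘ ⇑g) ∘ ⇑g.symm = v := by funext x; simp
        rw [this, hKv]
        funext x; simp
      · rw [submatrix_mulVec_equiv]
        have : (v ∘ ⇑g) ∘ ⇑g.symm = v := by funext x; simp
        rw [this, hDv]
        funext x; simp [Pi.smul_apply]

end Forward

section Blocks
variable {q : ℕ}

lemma elim_zero_zero {a b : ℕ} : (Sum.elim (0 : Fin a → ℝ) (0 : Fin b → ℝ)) = 0 := by
  funext x; rcases x with x | x <;> simp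

lemma good_blocks1 (μ : ℝ) {D'' K'' S'' : Matrix (Fin q) (Fin q) ℝ} {k : ℕ}
    (h1 : S''ᵀ * S'' = 1) (h2 : S'' * D'' = D'' * S'') (h3 : S'' * K'' = -(K'' * S''))
    (h4 : S''.det = (-1)^k) :
    Good (fromBlocks (μ • (1 : Matrix (Fin 1) (Fin 1) ℝ)) 0 0 D'')
      (fromBlocks 0 0 0 K'') (fromBlocks 1 0 0 S'') k := by
  refine ⟨?_, ?_, ?_, ?_, ?_⟩
  · rw [fromBlocks_transpose, fromBlocks_multiply]
    simp only [transpose_zero, transpose_one, Matrix.mul_zero, Matrix.zero_mul,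
      Matrix.mul_one, Matrix.one_mul, add_zero, zero_add, h1]
    exact fromBlocks_one
  · rw [fromBlocks_multiply, fromBlocks_multiply]
    simp only [Matrix.mul_zero, Matrix.zero_mul, Matrix.mul_one, Matrix.one_mul,
      add_zero, zero_add, h2, mul_smul_comm, smul_mul_assoc]
  · rw [fromBlocks_multiply, fromBlocks_multiply]
    simp only [Matrix.mul_zero, Matrix.zero_mul, add_zero, zero_add, h3]
    ext i j
    rcases i with i | i <;> rcases j with j | j <;> simp
  · rw [det_fromBlocks_zero₂₁, det_one, one_mul, h4]
  · refine Or.inr ⟨Sum.elim (fun _ => (1:ℝ)) 0, μ, ?_, ?_, ?_⟩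
    · intro h
      have := congrFun h (Sum.inl 0)
      simp at this
    · rw [fromBlocks_mulVec]
      simp [elim_zero_zero]
    · rw [fromBlocks_mulVec]
      funext x
      rcases x with x | x <;> simp [smul_mulVec, one_mulVec]
lemma good_blocks2 (μ s : ℝ) {D'' K'' S'' : Matrix (Fin q) (Fin q) ℝ} {k : ℕ}
    (h1 : S''ᵀ * S'' = 1) (h2 : S'' * D'' = D'' * S'') (h3 : S'' * K'' = -(K'' * S''))
    (h4 : S''.det = (-1)^k)
    (h5 : q = 2 * k ∨ ∃ (v : Fin q → ℝ) (ν : ℝ), v ≠ 0 ∧ K'' *ᵥ v = 0 ∧ D'' *ᵥ v = ν • v) :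
    Good (fromBlocks (μ • (1 : Matrix (Fin 2) (Fin 2) ℝ)) 0 0 D'')
      (fromBlocks !![0,-s;s,0] 0 0 K'') (fromBlocks !![1,0;0,(-1:ℝ)] 0 0 S'') (k+1) := by
  have hB2t : (!![1,0;0,(-1:ℝ)])ᵀ = !![1,0;0,(-1:ℝ)] := by
    ext i j; fin_cases i <;> fin_cases j <;> simp
  have hB2sq : !![1,0;0,(-1:ℝ)] * !![1,0;0,(-1:ℝ)] = 1 := by
    rw [mul_fin_two, Matrix.one_fin_two]; norm_num
  have hB2A2 : !![1,0;0,(-1:ℝ)] * !![0,-s;s,0] = -(!![0,-s;s,0] * !![1,0;0,(-1:ℝ)]) := by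
    rw [mul_fin_two, mul_fin_two]
    ext i j; fin_cases i <;> fin_cases j <;> simp
  refine ⟨?_, ?_, ?_, ?_, ?_⟩
  · rw [fromBlocks_transpose, fromBlocks_multiply]
    simp only [transpose_zero, Matrix.mul_zero, Matrix.zero_mul,
      add_zero, zero_add, h1, hB2t, hB2sq]
    exact fromBlocks_one
  · rw [fromBlocks_multiply, fromBlocks_multiply]
    simp only [Matrix.mul_zero, Matrix.zero_mul, Matrix.mul_one, Matrix.one_mul,
      add_zero, zero_add, h2, mul_smul_comm, smul_mul_assoc]
  · rw [fromBlocks_multiply, fromBlocks_multiply]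
    simp only [Matrix.mul_zero, Matrix.zero_mul, add_zero, zero_add, h3, hB2A2]
    ext i j
    rcases i with i | i <;> rcases j with j | j
    · fin_cases i <;> fin_cases j <;> simp
    · simp
    · simp
    · simp
  · rw [det_fromBlocks_zero₂₁, h4, det_fin_two_of]
    ring
  · rcases h5 with h5 | ⟨v, ν, hv0, hKv, hDv⟩
    · refine Or.inl ?_
      simp only [Fintype.card_sum, Fintype.card_fin, h5]
      omega
    · refine Or.inr ⟨Sum.elim 0 v, ν, ?_, ?_, ?_⟩
      · intro h
        apply hv0
        funext x
        have := congrFun h (Sum.inr x)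
        simpa using this
      · rw [fromBlocks_mulVec]
        simp [hKv, elim_zero_zero]
      · rw [fromBlocks_mulVec]
        simp only [mulVec_zero, zero_mulVec, add_zero, zero_add, hDv]
        funext x; rcases x with x | x <;> simp [hDv]

end Blocks

section BasisU
variable {n : ℕ} (b : OrthonormalBasis (Fin n) ℝ (EuclideanSpace ℝ (Fin n)))

lemma bdot (j k : Fin n) :
    (fun i => b j i) ⬝ᵥ (fun i => b k i) = if j = k then (1:ℝ) else 0 := by
  have h := orthonormal_iff_ite.mp b.orthonormal j k
  rw [← h, PiLp.inner_apply]
  simp [dotProduct, RCLike.inner_apply, mul_comm]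

lemma orthU : (Matrix.of fun i j => b j i)ᵀ * (Matrix.of fun i j => b j i) = 1 := by
  ext j k
  have h := bdot b j k
  simpa [mul_apply, dotProduct, one_apply] using h

lemma conj_entry (M : Matrix (Fin n) (Fin n) ℝ) (j k : Fin n) :
    ((Matrix.of fun i j => b j i)ᵀ * M * (Matrix.of fun i j => b j i)) j k
      = (fun i => b j i) ⬝ᵥ (M *ᵥ fun i => b k i) := by
  simp only [mul_apply, dotProduct, mulVec, transpose_apply, Matrix.of_apply,
    Finset.sum_mul, Finset.mul_sum]
  rw [Finset.sum_comm]
  apply Finset.sum_congr rfl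
  intro i _
  apply Finset.sum_congr rfl
  intro l _
  ring

lemma orthonormal_pair {j0 j1 : Fin n} (hne : j0 ≠ j1) (x y : EuclideanSpace ℝ (Fin n))
    (hxx : (inner ℝ x x) = 1) (hyy : (inner ℝ y y) = 1) (hxy : (inner ℝ x y) = 0) :
    Orthonormal ℝ (({j0, j1} : Set (Fin n)).restrict (fun i => if i = j0 then x else y)) := by
  rw [orthonormal_iff_ite]
  rintro ⟨a, ha⟩ ⟨c, hc⟩
  simp only [Set.mem_insert_iff, Set.mem_singleton_iff] at ha hc
  have hyx : (inner ℝ y x) = 0 := by rw [real_inner_comm]; exact hxy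
  rcases ha with ha | ha <;> rcases hc with hc | hc <;>
    simp [Set.restrict_apply, ha, hc, hne, hne.symm, hxx, hyy, hxy, hyx, Subtype.mk.injEq, Set.restrict, -inner_self_eq_norm_sq_to_K]

lemma orthonormal_single (j0 : Fin n) (x : EuclideanSpace ℝ (Fin n))
    (hxx : (inner ℝ x x) = 1) :
    Orthonormal ℝ (({j0} : Set (Fin n)).restrict (fun _ => x)) := by
  rw [orthonormal_iff_ite]
  rintro ⟨a, ha⟩ ⟨c, hc⟩
  simp only [Set.mem_singleton_iff] at ha hc
  subst ha; subst hc
  simp [Set.restrict_apply, hxx, Set.restrict, -inner_self_eq_norm_sq_to_K]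

end BasisU

lemma dotProduct_self_nonneg {n : ℕ} (v : Fin n → ℝ) : 0 ≤ v ⬝ᵥ v :=
  Finset.sum_nonneg (fun i _ => mul_self_nonneg _)

lemma sub_toBlocks₂₂ {a b : Type*} (X Y : Matrix (a ⊕ b) (a ⊕ b) ℝ) :
    (X - Y).toBlocks₂₂ = X.toBlocks₂₂ - Y.toBlocks₂₂ := rfl

lemma lemmaB : ∀ n : ℕ, ∀ D K : Matrix (Fin n) (Fin n) ℝ, Dᵀ = D → Kᵀ = -K →
    D * K = K * D → K * K = D * D - (4:ℝ) • 1 →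
    ∃ (S : Matrix (Fin n) (Fin n) ℝ) (k : ℕ), Good D K S k := by
  intro n
  induction n using Nat.strong_induction_on with
  | _ n ih =>
  intro D K hDs hKs hDK hKK
  rcases Nat.eq_zero_or_pos n with hn0 | hn
  · subst hn0
    exact ⟨1, 0, by simp, by simp,
      by ext i j; exact absurd i.2 (by omega), by simp, Or.inl (by simp)⟩
  have hDh : D.IsHermitian := by
    rw [Matrix.IsHermitian, conjTranspose_eq_transpose_of_trivial, hDs]
  set i0 : Fin n := ⟨0, hn⟩ with hi0
  set e : Fin n → ℝ := fun i => hDh.eigenvectorBasis i0 i with he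
  set μ : ℝ := hDh.eigenvalues i0 with hμ
  have hDe : D *ᵥ e = μ • e := hDh.mulVec_eigenvectorBasis i0
  have hee : e ⬝ᵥ e = 1 := by
    have h := bdot hDh.eigenvectorBasis i0 i0
    simpa using h
  have hinner_ee : (inner ℝ (hDh.eigenvectorBasis i0) (hDh.eigenvectorBasis i0)) = 1 := by
    rw [PiLp.inner_apply]
    simpa [RCLike.inner_apply, dotProduct, mul_comm, he, ← pow_two] using hee
  by_cases hKe : K *ᵥ e = 0
  · -- 1-dimensional invariant direction
    have hcast : n = 1 + (n - 1) := by omega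
    set g : Fin n ≃ Fin 1 ⊕ Fin (n-1) := (finCongr hcast).trans finSumFinEquiv.symm with hg
    set j0 : Fin n := g.symm (Sum.inl 0) with hj0
    have hj0v : (j0 : ℕ) = 0 := by simp [hj0, hg, finSumFinEquiv]
    have hinrv : ∀ a : Fin (n-1), ((g.symm (Sum.inr a) : Fin n) : ℕ) = 1 + a := by
      intro a; simp [hg, finSumFinEquiv]
    have hinr0 : ∀ a : Fin (n-1), g.symm (Sum.inr a) ≠ j0 := by
      intro a h
      have := congrArg Fin.val h
      rw [hinrv a, hj0v] at this; omega
    obtain ⟨b, hb⟩ := (orthonormal_single j0 (hDh.eigenvectorBasis i0)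
      hinner_ee).exists_orthonormalBasis_extension_of_card_eq (by simp)
    have hbj0 : (fun i => b j0 i) = e := by
      funext i
      rw [hb j0 (by simp)]
    set U : Matrix (Fin n) (Fin n) ℝ := Matrix.of (fun i j => b j i) with hU
    have hUo : Uᵀ * U = 1 := orthU b
    have hUU : U * Uᵀ = 1 := mul_eq_one_comm.mp hUo
    set D' : Matrix (Fin n) (Fin n) ℝ := Uᵀ * D * U with hD'
    set K' : Matrix (Fin n) (Fin n) ℝ := Uᵀ * K * U with hK'
    have hD'col : ∀ j, D' j j0 = if j = j0 then μ else 0 := by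
      intro j
      rw [hD', conj_entry b D j j0, hbj0, hDe]
      rw [dotProduct_smul]
      have := bdot b j j0
      rw [hbj0] at this
      rw [this]
      by_cases h : j = j0 <;> simp [h]
    have hK'col : ∀ j, K' j j0 = 0 := by
      intro j
      rw [hK', conj_entry b K j j0, hbj0, hKe, dotProduct_zero]
    have hD's : D'ᵀ = D' := by
      rw [hD']
      simp [Matrix.transpose_mul, hDs, mul_assoc]
    have hK's : K'ᵀ = -K' := by
      rw [hK']
      simp [Matrix.transpose_mul, hKs, mul_assoc]
    have hD'row : ∀ j, D' j0 j = if j = j0 then μ else 0 := by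
      intro j
      have h := congrFun (congrFun hD's j) j0
      simp only [transpose_apply] at h
      exact h.trans (hD'col j)
    have hK'row : ∀ j, K' j0 j = 0 := by
      intro j
      have h := congrFun (congrFun hK's j) j0
      simp only [transpose_apply, Matrix.neg_apply] at h
      rw [hK'col j] at h
      simpa using h
    set D2 : Matrix (Fin (n-1)) (Fin (n-1)) ℝ :=
      Matrix.of (fun a c => D' (g.symm (Sum.inr a)) (g.symm (Sum.inr c))) with hD2
    set K2 : Matrix (Fin (n-1)) (Fin (n-1)) ℝ :=
      Matrix.of (fun a c => K' (g.symm (Sum.inr a)) (g.symm (Sum.inr c))) with hK2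
    have hC : D'.submatrix g.symm g.symm
        = fromBlocks (μ • (1 : Matrix (Fin 1) (Fin 1) ℝ)) 0 0 D2 := by
      ext i j
      rcases i with x | a <;> rcases j with y | c
      · obtain rfl : x = 0 := Subsingleton.elim x 0
        obtain rfl : y = 0 := Subsingleton.elim y 0
        simp only [submatrix_apply, fromBlocks_apply₁₁]
        rw [← hj0, hD'col j0, if_pos rfl]
        simp
      · obtain rfl : x = 0 := Subsingleton.elim x 0
        simp only [submatrix_apply, fromBlocks_apply₁₂]
        rw [← hj0, hD'row _, if_neg (hinr0 c)]
        simp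
      · obtain rfl : y = 0 := Subsingleton.elim y 0
        simp only [submatrix_apply, fromBlocks_apply₂₁]
        rw [← hj0, hD'col _, if_neg (hinr0 a)]
        simp
      · simp [submatrix_apply, hD2]
    have hL : K'.submatrix g.symm g.symm = fromBlocks 0 0 0 K2 := by
      ext i j
      rcases i with x | a <;> rcases j with y | c
      · obtain rfl : x = 0 := Subsingleton.elim x 0
        obtain rfl : y = 0 := Subsingleton.elim y 0
        simp only [submatrix_apply, fromBlocks_apply₁₁]
        rw [← hj0, hK'col j0]
        simp
      · obtain rfl : x = 0 := Subsingleton.elim x 0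
        simp only [submatrix_apply, fromBlocks_apply₁₂]
        rw [← hj0, hK'row _]
        simp
      · obtain rfl : y = 0 := Subsingleton.elim y 0
        simp only [submatrix_apply, fromBlocks_apply₂₁]
        rw [← hj0, hK'col _]
        simp
      · simp [submatrix_apply, hK2]
    have hLred : ∀ Z : Matrix (Fin n) (Fin n) ℝ, U * (Uᵀ * Z) = Z := fun Z => by
      rw [← mul_assoc, hUU, one_mul]
    have hsand : ∀ X Y : Matrix (Fin n) (Fin n) ℝ,
        (Uᵀ*X*U)*(Uᵀ*Y*U) = Uᵀ*(X*Y)*U := by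
      intro X Y; simp only [mul_assoc]; rw [hLred]
    have hD'K' : D' * K' = K' * D' := by
      rw [hD', hK', hsand, hsand, hDK]
    have h41 : Uᵀ * ((4:ℝ)•(1 : Matrix (Fin n) (Fin n) ℝ)) * U = (4:ℝ)•1 := by
      rw [Matrix.mul_smul, Matrix.mul_one, Matrix.smul_mul, hUo]
    have hK'K' : K' * K' = D' * D' - (4:ℝ)•1 := by
      rw [hK', hsand, hKK, Matrix.mul_sub, Matrix.sub_mul, h41, hD']
      rw [hsand]
    have hD2s : D2ᵀ = D2 := by
      ext a c
      exact congrFun (congrFun hD's (g.symm (Sum.inr a))) (g.symm (Sum.inr c))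
    have hK2s : K2ᵀ = -K2 := by
      ext a c
      exact congrFun (congrFun hK's (g.symm (Sum.inr a))) (g.symm (Sum.inr c))
    have hDK2 : D2 * K2 = K2 * D2 := by
      have h := congrArg (fun M => M.submatrix ⇑g.symm ⇑g.symm) hD'K'
      rw [← submatrix_mul_equiv D' K' ⇑g.symm g.symm ⇑g.symm,
        ← submatrix_mul_equiv K' D' ⇑g.symm g.symm ⇑g.symm, hC, hL,
        fromBlocks_multiply, fromBlocks_multiply] at h
      have h2 := congrArg Matrix.toBlocks₂₂ h
      simpa [toBlocks_fromBlocks₂₂] using h2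
    have h1₂₂ : ((4:ℝ)•(1 : Matrix (Fin 1 ⊕ Fin (n-1)) (Fin 1 ⊕ Fin (n-1)) ℝ)).toBlocks₂₂
        = (4:ℝ)•(1 : Matrix (Fin (n-1)) (Fin (n-1)) ℝ) := by
      ext a c
      by_cases h : a = c <;> simp [Matrix.toBlocks₂₂, one_apply, h]
    have hKK2 : K2*K2 = D2*D2 - (4:ℝ)•1 := by
      have h := congrArg (fun M => M.submatrix ⇑g.symm ⇑g.symm) hK'K'
      rw [← submatrix_mul_equiv K' K' ⇑g.symm g.symm ⇑g.symm] at h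
      have hsub : (D' * D' - (4:ℝ)•1).submatrix ⇑g.symm ⇑g.symm
          = (D'*D').submatrix ⇑g.symm ⇑g.symm - ((4:ℝ)•(1:Matrix (Fin n) (Fin n) ℝ)).submatrix ⇑g.symm ⇑g.symm := by
        ext i j; simp [submatrix_apply]
      rw [hsub, ← submatrix_mul_equiv D' D' ⇑g.symm g.symm ⇑g.symm, hC, hL,
        fromBlocks_multiply, fromBlocks_multiply] at h
      have hsm : ((4:ℝ)•(1:Matrix (Fin n) (Fin n) ℝ)).submatrix ⇑g.symm ⇑g.symm
          = (4:ℝ)•(1 : Matrix (Fin 1 ⊕ Fin (n-1)) (Fin 1 ⊕ Fin (n-1)) ℝ) := by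
        ext i j
        by_cases hij : i = j <;>
          simp [submatrix_apply, one_apply, hij, (Equiv.injective g.symm).eq_iff]
      rw [hsm] at h
      have h2 := congrArg Matrix.toBlocks₂₂ h
      rw [sub_toBlocks₂₂] at h2
      simpa [toBlocks_fromBlocks₂₂, h1₂₂] using h2
    obtain ⟨S2, k2, hG1, hG2, hG3, hG4, _⟩ := ih (n-1) (by omega) D2 K2 hD2s hK2s hDK2 hKK2
    have good1 := good_blocks1 μ hG1 hG2 hG3 hG4
    have geq := good_equiv g good1
    have hCget : (fromBlocks (μ • (1 : Matrix (Fin 1) (Fin 1) ℝ)) 0 0 D2).submatrix ⇑g ⇑g = D' := by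
      rw [← hC, submatrix_submatrix]
      simp [Equiv.symm_comp_self]
    have hLget : (fromBlocks (0 : Matrix (Fin 1) (Fin 1) ℝ) 0 0 K2).submatrix ⇑g ⇑g = K' := by
      rw [← hL, submatrix_submatrix]
      simp [Equiv.symm_comp_self]
    rw [hCget, hLget, hD', hK'] at geq
    exact ⟨_, _, good_conj hUo geq⟩
  · -- rotation plane case
    have h2n : 2 ≤ n := by
      by_contra hcon
      have hn1 : n = 1 := by omega
      apply hKe
      subst hn1
      have hK0 : K = 0 := by
        ext i j
        have h1 := congrFun (congrFun hKs i) j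
        simp only [transpose_apply, Matrix.neg_apply] at h1
        obtain rfl : j = i := Subsingleton.elim j i
        simp only [Matrix.zero_apply]
        linarith
      rw [hK0, zero_mulVec]
    set c : ℝ := (K *ᵥ e) ⬝ᵥ (K *ᵥ e) with hc
    have hKtK : Kᵀ * K = (4:ℝ)•1 - D*D := by
      rw [hKs, Matrix.neg_mul, hKK, neg_sub]
    have hKKe : Kᵀ *ᵥ (K *ᵥ e) = (4 - μ^2) • e := by
      rw [mulVec_mulVec, hKtK, sub_mulVec, smul_mulVec, one_mulVec, ← mulVec_mulVec,
        hDe, mulVec_smul, hDe, smul_smul]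
      have h4 : (4:ℝ) - μ^2 = 4 - μ*μ := by ring
      rw [h4, sub_smul]
    have hcval : c = 4 - μ^2 := by
      rw [hc, dotProduct_mulVec, ← mulVec_transpose, hKKe, smul_dotProduct, hee,
        smul_eq_mul, mul_one]
    have hcpos : 0 < c := by
      rcases (dotProduct_self_nonneg (K *ᵥ e)).lt_or_eq with h | h
      · exact h
      · exact absurd (dotProduct_self_eq_zero.mp h.symm) hKe
    set s : ℝ := Real.sqrt c with hsdef
    have hspos : 0 < s := Real.sqrt_pos.mpr hcpos
    have hs2 : s^2 = c := Real.sq_sqrt hcpos.le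
    set f : Fin n → ℝ := s⁻¹ • (K *ᵥ e) with hf
    have hKe' : K *ᵥ e = s • f := by
      rw [hf, smul_smul, mul_inv_cancel₀ hspos.ne', one_smul]
    have hKf : K *ᵥ f = (-s) • e := by
      rw [hf, mulVec_smul, mulVec_mulVec, hKK, sub_mulVec, smul_mulVec, one_mulVec,
        ← mulVec_mulVec, hDe, mulVec_smul, hDe, smul_smul]
      have h4 : (μ * μ) • e - (4:ℝ) • e = (μ^2 - 4) • e := by
        rw [← sub_smul]
        norm_num [pow_two]
      rw [h4, smul_smul]
      have hsc : s⁻¹ * (μ^2 - 4) = -s := by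
        have hc4 : μ^2 - 4 = -c := by rw [hcval]; ring
        rw [hc4, ← hs2]
        field_simp
      rw [hsc]
    have hDf : D *ᵥ f = μ • f := by
      rw [hf, mulVec_smul, mulVec_mulVec, hDK, ← mulVec_mulVec, hDe, mulVec_smul]
      rw [smul_comm]
    have hef : e ⬝ᵥ (K *ᵥ e) = 0 := by
      have h1 : e ⬝ᵥ (K *ᵥ e) = (Kᵀ *ᵥ e) ⬝ᵥ e := by
        rw [dotProduct_mulVec, ← mulVec_transpose]
      rw [hKs, neg_mulVec, neg_dotProduct] at h1
      have h2 := dotProduct_comm e (K *ᵥ e)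
      linarith
    have hef' : e ⬝ᵥ f = 0 := by
      rw [hf, dotProduct_smul, hef, smul_zero]
    have hff : f ⬝ᵥ f = 1 := by
      rw [hf, smul_dotProduct, dotProduct_smul, smul_eq_mul, smul_eq_mul, ← hc, ← hs2]
      field_simp
    set f' : EuclideanSpace ℝ (Fin n) := WithLp.toLp 2 f with hf'
    have hinner_ff : (inner ℝ f' f') = 1 := by
      rw [PiLp.inner_apply]
      simpa [RCLike.inner_apply, dotProduct, mul_comm, hf', ← pow_two] using hff
    have hinner_ef : (inner ℝ (hDh.eigenvectorBasis i0) f') = 0 := by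
      rw [PiLp.inner_apply]
      simpa [RCLike.inner_apply, dotProduct, mul_comm] using hef'
    have hcast : n = 2 + (n - 2) := by omega
    set g : Fin n ≃ Fin 2 ⊕ Fin (n-2) := (finCongr hcast).trans finSumFinEquiv.symm with hg
    set j0 : Fin n := g.symm (Sum.inl 0) with hj0
    set j1 : Fin n := g.symm (Sum.inl 1) with hj1
    have hj0v : (j0 : ℕ) = 0 := by simp [hj0, hg, finSumFinEquiv]
    have hj1v : (j1 : ℕ) = 1 := by simp [hj1, hg, finSumFinEquiv]
    have hne : j0 ≠ j1 := by
      intro h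
      have := congrArg Fin.val h
      rw [hj0v, hj1v] at this
      omega
    have hinrv : ∀ a : Fin (n-2), ((g.symm (Sum.inr a)) : ℕ) = 2 + a := by
      intro a; simp [hg, finSumFinEquiv]
    have hinr0 : ∀ a : Fin (n-2), g.symm (Sum.inr a) ≠ j0 := by
      intro a h
      have := congrArg Fin.val h
      rw [hinrv a, hj0v] at this; omega
    have hinr1 : ∀ a : Fin (n-2), g.symm (Sum.inr a) ≠ j1 := by
      intro a h
      have := congrArg Fin.val h
      rw [hinrv a, hj1v] at this; omega
    obtain ⟨b, hb⟩ := (orthonormal_pair hne (hDh.eigenvectorBasis i0) f'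
      hinner_ee hinner_ff hinner_ef).exists_orthonormalBasis_extension_of_card_eq (by simp)
    have hbj0 : (fun i => b j0 i) = e := by
      funext i
      rw [hb j0 (by simp)]
      simp
      rfl
    have hbj1 : (fun i => b j1 i) = f := by
      funext i
      rw [hb j1 (by simp)]
      simp [hne.symm]
      rfl
    set U : Matrix (Fin n) (Fin n) ℝ := Matrix.of (fun i j => b j i) with hU
    have hUo : Uᵀ * U = 1 := orthU b
    have hUU : U * Uᵀ = 1 := mul_eq_one_comm.mp hUo
    set D' : Matrix (Fin n) (Fin n) ℝ := Uᵀ * D * U with hD'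
    set K' : Matrix (Fin n) (Fin n) ℝ := Uᵀ * K * U with hK'
    have hbdot_e : ∀ j, (fun i => b j i) ⬝ᵥ e = if j = j0 then 1 else 0 := by
      intro j
      rw [← hbj0]
      exact bdot b j j0
    have hbdot_f : ∀ j, (fun i => b j i) ⬝ᵥ f = if j = j1 then 1 else 0 := by
      intro j
      rw [← hbj1]
      exact bdot b j j1
    have hD'c0 : ∀ j, D' j j0 = if j = j0 then μ else 0 := by
      intro j
      rw [hD', conj_entry b D j j0, hbj0, hDe, dotProduct_smul, hbdot_e j]
      by_cases h : j = j0 <;> simp [h]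
    have hD'c1 : ∀ j, D' j j1 = if j = j1 then μ else 0 := by
      intro j
      rw [hD', conj_entry b D j j1, hbj1, hDf, dotProduct_smul, hbdot_f j]
      by_cases h : j = j1 <;> simp [h]
    have hK'c0 : ∀ j, K' j j0 = if j = j1 then s else 0 := by
      intro j
      rw [hK', conj_entry b K j j0, hbj0, hKe', dotProduct_smul, hbdot_f j]
      by_cases h : j = j1 <;> simp [h]
    have hK'c1 : ∀ j, K' j j1 = if j = j0 then -s else 0 := by
      intro j
      rw [hK', conj_entry b K j j1, hbj1, hKf, dotProduct_smul, hbdot_e j]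
      by_cases h : j = j0 <;> simp [h]
    have hD's : D'ᵀ = D' := by
      rw [hD']
      simp [Matrix.transpose_mul, hDs, mul_assoc]
    have hK's : K'ᵀ = -K' := by
      rw [hK']
      simp [Matrix.transpose_mul, hKs, mul_assoc]
    have hD'r0 : ∀ j, D' j0 j = if j = j0 then μ else 0 := by
      intro j
      have h := congrFun (congrFun hD's j) j0
      simp only [transpose_apply] at h
      exact h.trans (hD'c0 j)
    have hD'r1 : ∀ j, D' j1 j = if j = j1 then μ else 0 := by
      intro j
      have h := congrFun (congrFun hD's j) j1
      simp only [transpose_apply] at h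
      exact h.trans (hD'c1 j)
    have hK'r0 : ∀ j, K' j0 j = if j = j1 then -s else 0 := by
      intro j
      have h := congrFun (congrFun hK's j) j0
      simp only [transpose_apply, Matrix.neg_apply] at h
      rw [hK'c0 j] at h
      rw [h]
      by_cases hc1 : j = j1 <;> simp [hc1]
    have hK'r1 : ∀ j, K' j1 j = if j = j0 then s else 0 := by
      intro j
      have h := congrFun (congrFun hK's j) j1
      simp only [transpose_apply, Matrix.neg_apply] at h
      rw [hK'c1 j] at h
      rw [h]
      by_cases hc1 : j = j0 <;> simp [hc1]
    set D2 : Matrix (Fin (n-2)) (Fin (n-2)) ℝ :=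
      Matrix.of (fun a c => D' (g.symm (Sum.inr a)) (g.symm (Sum.inr c))) with hD2
    set K2 : Matrix (Fin (n-2)) (Fin (n-2)) ℝ :=
      Matrix.of (fun a c => K' (g.symm (Sum.inr a)) (g.symm (Sum.inr c))) with hK2
    have hC : D'.submatrix g.symm g.symm
        = fromBlocks (μ • (1 : Matrix (Fin 2) (Fin 2) ℝ)) 0 0 D2 := by
      ext i j
      rcases i with x | a <;> rcases j with y | cc
      · fin_cases x <;> fin_cases y
        · show D' j0 j0 = (μ • (1 : Matrix (Fin 2) (Fin 2) ℝ)) 0 0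
          rw [hD'c0 j0, if_pos rfl]; simp
        · show D' j0 j1 = (μ • (1 : Matrix (Fin 2) (Fin 2) ℝ)) 0 1
          rw [hD'c1 j0, if_neg hne]; simp
        · show D' j1 j0 = (μ • (1 : Matrix (Fin 2) (Fin 2) ℝ)) 1 0
          rw [hD'c0 j1, if_neg hne.symm]; simp
        · show D' j1 j1 = (μ • (1 : Matrix (Fin 2) (Fin 2) ℝ)) 1 1
          rw [hD'c1 j1, if_pos rfl]; simp
      · fin_cases x
        · show D' j0 (g.symm (Sum.inr cc)) = 0
          rw [hD'r0 _, if_neg (hinr0 cc)]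
        · show D' j1 (g.symm (Sum.inr cc)) = 0
          rw [hD'r1 _, if_neg (hinr1 cc)]
      · fin_cases y
        · show D' (g.symm (Sum.inr a)) j0 = 0
          rw [hD'c0 _, if_neg (hinr0 a)]
        · show D' (g.symm (Sum.inr a)) j1 = 0
          rw [hD'c1 _, if_neg (hinr1 a)]
      · simp [submatrix_apply, hD2]
    have hL : K'.submatrix g.symm g.symm = fromBlocks !![0,-s;s,0] 0 0 K2 := by
      ext i j
      rcases i with x | a <;> rcases j with y | cc
      · fin_cases x <;> fin_cases y
        · show K' j0 j0 = !![(0:ℝ),-s;s,0] 0 0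
          rw [hK'c0 j0, if_neg hne]; simp
        · show K' j0 j1 = !![(0:ℝ),-s;s,0] 0 1
          rw [hK'c1 j0, if_pos rfl]; simp
        · show K' j1 j0 = !![(0:ℝ),-s;s,0] 1 0
          rw [hK'c0 j1, if_pos rfl]; simp
        · show K' j1 j1 = !![(0:ℝ),-s;s,0] 1 1
          rw [hK'c1 j1, if_neg hne.symm]; simp
      · fin_cases x
        · show K' j0 (g.symm (Sum.inr cc)) = 0
          rw [hK'r0 _, if_neg (hinr1 cc)]
        · show K' j1 (g.symm (Sum.inr cc)) = 0
          rw [hK'r1 _, if_neg (hinr0 cc)]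
      · fin_cases y
        · show K' (g.symm (Sum.inr a)) j0 = 0
          rw [hK'c0 _, if_neg (hinr1 a)]
        · show K' (g.symm (Sum.inr a)) j1 = 0
          rw [hK'c1 _, if_neg (hinr0 a)]
      · simp [submatrix_apply, hK2]
    have hLred : ∀ Z : Matrix (Fin n) (Fin n) ℝ, U * (Uᵀ * Z) = Z := fun Z => by
      rw [← mul_assoc, hUU, one_mul]
    have hsand : ∀ X Y : Matrix (Fin n) (Fin n) ℝ,
        (Uᵀ*X*U)*(Uᵀ*Y*U) = Uᵀ*(X*Y)*U := by
      intro X Y; simp only [mul_assoc]; rw [hLred]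
    have hD'K' : D' * K' = K' * D' := by
      rw [hD', hK', hsand, hsand, hDK]
    have h41 : Uᵀ * ((4:ℝ)•(1 : Matrix (Fin n) (Fin n) ℝ)) * U = (4:ℝ)•1 := by
      rw [Matrix.mul_smul, Matrix.mul_one, Matrix.smul_mul, hUo]
    have hK'K' : K' * K' = D' * D' - (4:ℝ)•1 := by
      rw [hK', hsand, hKK, Matrix.mul_sub, Matrix.sub_mul, h41, hD']
      rw [hsand]
    have hD2s : D2ᵀ = D2 := by
      ext a cc
      exact congrFun (congrFun hD's (g.symm (Sum.inr a))) (g.symm (Sum.inr cc))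
    have hK2s : K2ᵀ = -K2 := by
      ext a cc
      exact congrFun (congrFun hK's (g.symm (Sum.inr a))) (g.symm (Sum.inr cc))
    have hDK2 : D2 * K2 = K2 * D2 := by
      have h := congrArg (fun M => M.submatrix ⇑g.symm ⇑g.symm) hD'K'
      rw [← submatrix_mul_equiv D' K' ⇑g.symm g.symm ⇑g.symm,
        ← submatrix_mul_equiv K' D' ⇑g.symm g.symm ⇑g.symm, hC, hL,
        fromBlocks_multiply, fromBlocks_multiply] at h
      have h2 := congrArg Matrix.toBlocks₂₂ h
      simpa [toBlocks_fromBlocks₂₂] using h2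
    have h1₂₂ : ((4:ℝ)•(1 : Matrix (Fin 2 ⊕ Fin (n-2)) (Fin 2 ⊕ Fin (n-2)) ℝ)).toBlocks₂₂
        = (4:ℝ)•(1 : Matrix (Fin (n-2)) (Fin (n-2)) ℝ) := by
      ext a cc
      by_cases h : a = cc <;> simp [Matrix.toBlocks₂₂, one_apply, h]
    have hKK2 : K2*K2 = D2*D2 - (4:ℝ)•1 := by
      have h := congrArg (fun M => M.submatrix ⇑g.symm ⇑g.symm) hK'K'
      rw [← submatrix_mul_equiv K' K' ⇑g.symm g.symm ⇑g.symm] at h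
      have hsub : (D' * D' - (4:ℝ)•1).submatrix ⇑g.symm ⇑g.symm
          = (D'*D').submatrix ⇑g.symm ⇑g.symm
            - ((4:ℝ)•(1:Matrix (Fin n) (Fin n) ℝ)).submatrix ⇑g.symm ⇑g.symm := by
        ext i j; simp [submatrix_apply]
      rw [hsub, ← submatrix_mul_equiv D' D' ⇑g.symm g.symm ⇑g.symm, hC, hL,
        fromBlocks_multiply, fromBlocks_multiply] at h
      have hsm : ((4:ℝ)•(1:Matrix (Fin n) (Fin n) ℝ)).submatrix ⇑g.symm ⇑g.symm
          = (4:ℝ)•(1 : Matrix (Fin 2 ⊕ Fin (n-2)) (Fin 2 ⊕ Fin (n-2)) ℝ) := by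
        ext i j
        by_cases hij : i = j <;>
          simp [submatrix_apply, one_apply, hij, (Equiv.injective g.symm).eq_iff]
      rw [hsm] at h
      have h2 := congrArg Matrix.toBlocks₂₂ h
      rw [sub_toBlocks₂₂] at h2
      simpa [toBlocks_fromBlocks₂₂, h1₂₂] using h2
    obtain ⟨S2, k2, hG1, hG2, hG3, hG4, hG5⟩ := ih (n-2) (by omega) D2 K2 hD2s hK2s hDK2 hKK2
    have good2 := good_blocks2 μ s hG1 hG2 hG3 hG4 (by simpa using hG5)
    have geq := good_equiv g good2
    have hCget : (fromBlocks (μ • (1 : Matrix (Fin 2) (Fin 2) ℝ)) 0 0 D2).submatrix ⇑g ⇑g = D' := by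
      rw [← hC, submatrix_submatrix]
      simp [Equiv.symm_comp_self]
    have hLget : (fromBlocks !![0,-s;s,0] 0 0 K2).submatrix ⇑g ⇑g = K' := by
      rw [← hL, submatrix_submatrix]
      simp [Equiv.symm_comp_self]
    rw [hCget, hLget, hD', hK'] at geq
    exact ⟨_, _, good_conj hUo geq⟩


lemma commK_to_ST {n : ℕ} (T S : Matrix (Fin n) (Fin n) ℝ)
    (h2 : S*(T+Tᵀ) = (T+Tᵀ)*S) (h3 : S*(T-Tᵀ) = -((T-Tᵀ)*S)) : S*T = Tᵀ*S := by
  have e1 : S*((2:ℝ)•T) = ((2:ℝ)•Tᵀ)*S := by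
    have d1 : (2:ℝ)•T = (T+Tᵀ) + (T-Tᵀ) := by module
    have d2 : (2:ℝ)•Tᵀ = (T+Tᵀ) - (T-Tᵀ) := by module
    rw [d1, d2, mul_add, sub_mul, h2, h3]
    abel
  rw [mul_smul_comm, smul_mul_assoc] at e1
  exact smul_right_injective (Matrix (Fin n) (Fin n) ℝ) (two_ne_zero) e1

lemma forward_dir (n : ℕ) (hmod : ¬ n % 4 = 2) (T : Matrix (Fin n) (Fin n) ℝ)
    (hT : Tᵀ * T = 1) (hdet : T.det = 1) :
    ∃ S : Matrix (Fin n) (Fin n) ℝ, Sᵀ * S = 1 ∧ S.det = 1 ∧ S * T * S⁻¹ = T⁻¹ := by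
  have hTT : T * Tᵀ = 1 := mul_eq_one_comm.mp hT
  have hDs : (T + Tᵀ)ᵀ = T + Tᵀ := by rw [transpose_add, transpose_transpose, add_comm]
  have hKs : (T - Tᵀ)ᵀ = -(T - Tᵀ) := by rw [transpose_sub, transpose_transpose, neg_sub]
  have hDK : (T+Tᵀ)*(T-Tᵀ) = (T-Tᵀ)*(T+Tᵀ) := by
    simp only [mul_add, add_mul, mul_sub, sub_mul, hT, hTT]
    abel
  have hKK : (T-Tᵀ)*(T-Tᵀ) = (T+Tᵀ)*(T+Tᵀ) - (4:ℝ)•1 := by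
    simp only [mul_add, add_mul, mul_sub, sub_mul, hT, hTT]
    module
  obtain ⟨S₀, k, hS1, hS2, hS3, hS4, hS5⟩ := lemmaB n (T+Tᵀ) (T-Tᵀ) hDs hKs hDK hKK
  rcases Nat.even_or_odd k with hk | hk
  · have hST := commK_to_ST T S₀ hS2 hS3
    refine ⟨S₀, hS1, by rw [hS4, hk.neg_one_pow], ?_⟩
    rw [inv_eq_left_inv hT, inv_eq_left_inv hS1, hST, mul_assoc,
      mul_eq_one_comm.mp hS1, mul_one]
  · have hn2k : ¬ n = 2*k := by
      intro h
      rw [Nat.odd_iff] at hk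
      omega
    rcases hS5 with h | ⟨v, ν, hv0, hKv, hDv⟩
    · exact absurd (by simpa using h) hn2k
    · set cv : ℝ := v ⬝ᵥ v with hcv
      have hcvpos : 0 < cv := by
        rcases (dotProduct_self_nonneg v).lt_or_eq with h | h
        · exact h
        · exact absurd (dotProduct_self_eq_zero.mp h.symm) hv0
      set a : ℝ := 2 / cv with ha
      set W : Matrix (Fin n) (Fin n) ℝ := vecMulVec v v with hW
      have hWcr : W = replicateCol Unit v * replicateRow Unit v := vecMulVec_eq Unit v v
      have hvK : v ᵥ* (T-Tᵀ) = 0 := by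
        rw [← mulVec_transpose, hKs, neg_mulVec, hKv, neg_zero]
      have hvD : v ᵥ* (T+Tᵀ) = ν • v := by rw [← mulVec_transpose, hDs, hDv]
      have hWt : Wᵀ = W := by
        ext i j; simp [hW, vecMulVec_apply, mul_comm]
      have hWK : W * (T-Tᵀ) = 0 := by
        rw [hWcr, Matrix.mul_assoc, ← replicateRow_vecMul, hvK, replicateRow_zero, Matrix.mul_zero]
      have hKW : (T-Tᵀ) * W = 0 := by
        rw [hWcr, ← Matrix.mul_assoc, ← replicateCol_mulVec, hKv, replicateCol_zero, Matrix.zero_mul]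
      have hWD : W * (T+Tᵀ) = ν • W := by
        rw [hWcr, Matrix.mul_assoc, ← replicateRow_vecMul, hvD, replicateRow_smul, Matrix.mul_smul, ← hWcr]
      have hDW : (T+Tᵀ) * W = ν • W := by
        rw [hWcr, ← Matrix.mul_assoc, ← replicateCol_mulVec, hDv, replicateCol_smul, Matrix.smul_mul, ← hWcr]
      have hrc : replicateRow Unit v * replicateCol Unit v = cv • (1 : Matrix Unit Unit ℝ) := by
        ext i j
        simp [Matrix.one_apply, Subsingleton.elim i j, hcv]
      have hWW : W * W = cv • W := by
        rw [hWcr, Matrix.mul_assoc, ← Matrix.mul_assoc (replicateRow Unit v), hrc, Matrix.smul_mul,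
          Matrix.one_mul, Matrix.mul_smul, ← hWcr]
      have hFt : ((1:Matrix (Fin n) (Fin n) ℝ) - a•W)ᵀ = 1 - a•W := by
        rw [transpose_sub, transpose_one, transpose_smul, hWt]
      have haa : a * (a * cv) = a + a := by
        rw [ha]; field_simp; ring
      have hsq : (a•W)*(a•W) = (a*(a*cv))•W := by
        rw [Matrix.smul_mul, Matrix.mul_smul, hWW, smul_smul, smul_smul, mul_assoc]
      have hFF : ((1:Matrix (Fin n) (Fin n) ℝ) - a•W) * (1 - a•W) = 1 := by
        rw [mul_sub, mul_one, sub_mul, Matrix.one_mul, hsq, haa]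
        module
      have hcol : (1:Matrix (Fin n) (Fin n) ℝ) - a•W
          = 1 + replicateCol Unit ((-a) • v) * replicateRow Unit v := by
        ext i j
        simp [hW, vecMulVec_apply, Matrix.mul_apply, Matrix.replicateCol_apply, Matrix.replicateRow_apply,
          Matrix.one_apply, Finset.univ_unique, Finset.sum_singleton]
        ring
      have hdetF : ((1:Matrix (Fin n) (Fin n) ℝ) - a•W).det = -1 := by
        rw [hcol, det_one_add_replicateCol_mul_replicateRow, dotProduct_smul, smul_eq_mul, ← hcv, ha]
        field_simp
        ring
      have hFD : ((1:Matrix (Fin n) (Fin n) ℝ) - a•W) * (T+Tᵀ) = (T+Tᵀ) * (1 - a•W) := by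
        have l1 : ((1:Matrix (Fin n) (Fin n) ℝ) - a•W) * (T+Tᵀ)
            = (T+Tᵀ) - a•(W*(T+Tᵀ)) := by
          rw [sub_mul, Matrix.one_mul, Matrix.smul_mul]
        have l2 : (T+Tᵀ) * ((1:Matrix (Fin n) (Fin n) ℝ) - a•W)
            = (T+Tᵀ) - a•((T+Tᵀ)*W) := by
          rw [mul_sub, Matrix.mul_one, Matrix.mul_smul]
        rw [l1, l2, hWD, hDW]
      have hFK : ((1:Matrix (Fin n) (Fin n) ℝ) - a•W) * (T-Tᵀ) = (T-Tᵀ) * (1 - a•W) := by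
        have l1 : ((1:Matrix (Fin n) (Fin n) ℝ) - a•W) * (T-Tᵀ)
            = (T-Tᵀ) - a•(W*(T-Tᵀ)) := by
          rw [sub_mul, Matrix.one_mul, Matrix.smul_mul]
        have l2 : (T-Tᵀ) * ((1:Matrix (Fin n) (Fin n) ℝ) - a•W)
            = (T-Tᵀ) - a•((T-Tᵀ)*W) := by
          rw [mul_sub, Matrix.mul_one, Matrix.mul_smul]
        rw [l1, l2, hWK, hKW]
      have hSo : (((1:Matrix (Fin n) (Fin n) ℝ) - a•W)*S₀)ᵀ*((1 - a•W)*S₀) = 1 := by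
        rw [transpose_mul, hFt, mul_assoc, ← mul_assoc (1 - a•W) (1 - a•W) S₀, hFF,
          Matrix.one_mul, hS1]
      have hdet' : (((1:Matrix (Fin n) (Fin n) ℝ) - a•W)*S₀).det = 1 := by
        rw [det_mul, hdetF, hS4, hk.neg_one_pow]
        norm_num
      have hS₀T := commK_to_ST T S₀ hS2 hS3
      have hFT' : ((1:Matrix (Fin n) (Fin n) ℝ) - a•W) * Tᵀ = Tᵀ * (1 - a•W) := by
        have d2 : (2:ℝ)•Tᵀ = (T+Tᵀ) - (T-Tᵀ) := by module
        have h2T : ((1:Matrix (Fin n) (Fin n) ℝ) - a•W) * ((2:ℝ)•Tᵀ)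
            = ((2:ℝ)•Tᵀ) * (1 - a•W) := by
          rw [d2, mul_sub, hFD, hFK, ← sub_mul]
        rw [mul_smul_comm, smul_mul_assoc] at h2T
        exact smul_right_injective (Matrix (Fin n) (Fin n) ℝ) (two_ne_zero) h2T
      have hST : (((1:Matrix (Fin n) (Fin n) ℝ) - a•W)*S₀)*T = Tᵀ*((1 - a•W)*S₀) := by
        rw [mul_assoc, hS₀T, ← mul_assoc, hFT', mul_assoc]
      exact ⟨(1 - a•W)*S₀, hSo, hdet', by
        rw [inv_eq_left_inv hT, inv_eq_left_inv hSo, hST, mul_assoc,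
          mul_eq_one_comm.mp hSo, mul_one]⟩


/-- Every element of `SO(n)` is real in `SO(n)` (conjugate in `SO(n)` to its
inverse) if and only if `n ≢ 2 (mod 4)`. -/
theorem every_element_of_SOn_real_iff (n : ℕ) :
    (∀ T : Matrix (Fin n) (Fin n) ℝ, Tᵀ * T = 1 → T.det = 1 →
      ∃ S : Matrix (Fin n) (Fin n) ℝ,
        Sᵀ * S = 1 ∧ S.det = 1 ∧ S * T * S⁻¹ = T⁻¹) ↔ ¬ (n % 4 = 2) := by
  constructor
  · intro hall hmod
    exact converse_dir n (n/2) (by omega) (by omega) hall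
  · intro hmod T hT hdet
    exact forward_dir n hmod T hT hdet
end

section
/- Let T be an orthogonal transformation of ℝⁿ and suppose the complexification of T interchanges the eigenspaces V_θ and V_{−θ} under conjugation in the following sense: if S is orthogonal with STS⁻¹ = T⁻¹, T has only eigenvalues e^{±iθ} (θ ≠ 0, π) each of multiplicity m with n = 2m, then det S = (−1)^m. -/
open Matrix Polynomial

private lemma detBlocksAux {m : ℕ} {R : Type*} [CommRing R] (B C : Matrix (Fin m) (Fin m) R) :
    (Matrix.fromBlocks 0 C B 0).det = (-1 : R) ^ m * B.det * C.det := by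
  have h2 : Matrix.fromBlocks (1 : Matrix (Fin m) (Fin m) R) (1 : Matrix (Fin m) (Fin m) R)
      (0 : Matrix (Fin m) (Fin m) R) (1 : Matrix (Fin m) (Fin m) R) *
      Matrix.fromBlocks (1 : Matrix (Fin m) (Fin m) R) (0 : Matrix (Fin m) (Fin m) R)
      (-1 : Matrix (Fin m) (Fin m) R) (1 : Matrix (Fin m) (Fin m) R) *
      Matrix.fromBlocks (1 : Matrix (Fin m) (Fin m) R) (1 : Matrix (Fin m) (Fin m) R)
      (0 : Matrix (Fin m) (Fin m) R) (1 : Matrix (Fin m) (Fin m) R) =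
      Matrix.fromBlocks (0 : Matrix (Fin m) (Fin m) R) (1 : Matrix (Fin m) (Fin m) R)
      (-1 : Matrix (Fin m) (Fin m) R) (0 : Matrix (Fin m) (Fin m) R) := by
    rw [Matrix.fromBlocks_multiply, Matrix.fromBlocks_multiply]
    simp
  have h1 : Matrix.fromBlocks (0 : Matrix (Fin m) (Fin m) R) (1 : Matrix (Fin m) (Fin m) R)
      (-1 : Matrix (Fin m) (Fin m) R) (0 : Matrix (Fin m) (Fin m) R) *
      Matrix.fromBlocks (-B) 0 0 C = Matrix.fromBlocks 0 C B 0 := by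
    rw [Matrix.fromBlocks_multiply]
    simp
  rw [← h1, Matrix.det_mul, ← h2, Matrix.det_mul, Matrix.det_mul]
  simp only [Matrix.det_fromBlocks_zero₂₁, Matrix.det_fromBlocks_zero₁₂, Matrix.det_neg,
    Matrix.det_one, Fintype.card_fin]
  ring

set_option maxHeartbeats 1000000 in
/-- Let `T` be orthogonal with characteristic polynomial
`(X² − 2cos θ · X + 1)^m`, `0 < θ < π`, `n = 2m`.  Then any orthogonal `S`
with `S T S⁻¹ = T⁻¹` has determinant `(−1)^m`. -/
theorem det_of_reversing_element (n m : ℕ) (θ : ℝ)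
    (hθ0 : 0 < θ) (hθπ : θ < Real.pi) (hnm : n = 2 * m)
    (T : Matrix (Fin n) (Fin n) ℝ) (hTo : Tᵀ * T = 1)
    (hchar : T.charpoly = (X ^ 2 - C (2 * Real.cos θ) * X + 1) ^ m)
    (S : Matrix (Fin n) (Fin n) ℝ) (hSo : Sᵀ * S = 1)
    (hST : S * T * S⁻¹ = T⁻¹) :
    S.det = (-1 : ℝ) ^ m := by
  classical
  -- handle the degenerate case m = 0
  rcases Nat.eq_zero_or_pos m with hm0 | hmpos
  · subst hm0
    simp only [Nat.mul_zero] at hnm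
    subst hnm
    simp [Matrix.det_fin_zero]
  -- basic determinant facts
  have hdetS : S.det * S.det = 1 := by
    have := congrArg Matrix.det hSo
    rwa [Matrix.det_mul, Matrix.det_transpose, Matrix.det_one] at this
  have hdetT : T.det * T.det = 1 := by
    have := congrArg Matrix.det hTo
    rwa [Matrix.det_mul, Matrix.det_transpose, Matrix.det_one] at this
  have hSu : IsUnit S.det := IsUnit.of_mul_eq_one _ hdetS
  have hTu : IsUnit T.det := IsUnit.of_mul_eq_one _ hdetT
  -- the key conjugation-free relation T * S * T = S
  have hTST : T * S * T = S := by
    have h1 : S * T = T⁻¹ * S := by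
      calc S * T = S * T * (S⁻¹ * S) := by rw [Matrix.nonsing_inv_mul _ hSu, mul_one]
      _ = T⁻¹ * S := by rw [← mul_assoc, hST]
    calc T * S * T = T * (T⁻¹ * S) := by rw [mul_assoc, h1]
    _ = S := by rw [← mul_assoc, Matrix.mul_nonsing_inv _ hTu, one_mul]
  -- complexify
  set ρ : ℝ →+* ℂ := Complex.ofRealHom with hρ
  set Tc : Matrix (Fin n) (Fin n) ℂ := T.map ρ with hTc
  set Sc : Matrix (Fin n) (Fin n) ℂ := S.map ρ with hSc
  have hTSTc : Tc * Sc * Tc = Sc := by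
    rw [hTc, hSc, ← Matrix.map_mul, ← Matrix.map_mul, hTST]
  -- the eigenvalue a = e^{iθ}
  set a : ℂ := ⟨Real.cos θ, Real.sin θ⟩ with ha
  have hare : a.re = Real.cos θ := by rw [ha]
  have haim : a.im = Real.sin θ := by rw [ha]
  have hsin : Real.sin θ ≠ 0 := ne_of_gt (Real.sin_pos_of_pos_of_lt_pi hθ0 hθπ)
  have hmula : a * (starRingEnd ℂ) a = 1 := by
    rw [Complex.mul_conj]
    have h1 : Complex.normSq a = 1 := by
      rw [ha, Complex.normSq_mk]
      nlinarith [Real.sin_sq_add_cos_sq θ]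
    rw [h1, Complex.ofReal_one]
  have hadda : a + (starRingEnd ℂ) a = ((2 * Real.cos θ : ℝ) : ℂ) := by
    apply Complex.ext
    · simp only [Complex.add_re, Complex.conj_re, Complex.ofReal_re, hare]
      ring
    · simp only [Complex.add_im, Complex.conj_im, Complex.ofReal_im, haim]
      ring
  have hane : a ≠ (starRingEnd ℂ) a := by
    intro h
    have h2 := congrArg Complex.im h
    rw [Complex.conj_im] at h2
    apply hsin
    rw [← haim]
    linarith
  -- characteristic polynomial over ℂ
  have hfact : (X - C a) * (X - C ((starRingEnd ℂ) a)) =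
      X ^ 2 - C ((2 * Real.cos θ : ℝ) : ℂ) * X + 1 := by
    have h1 : (X - C a) * (X - C ((starRingEnd ℂ) a)) =
        X ^ 2 - (C a + C ((starRingEnd ℂ) a)) * X + C a * C ((starRingEnd ℂ) a) := by ring
    rw [h1, ← C_add, ← C_mul, hadda, hmula, Polynomial.C_1]
  have hcharc : Tc.charpoly = ((X - C a) * (X - C ((starRingEnd ℂ) a))) ^ m := by
    rw [hTc, Matrix.charpoly_map, hchar, Polynomial.map_pow]
    congr 1
    rw [hfact]
    simp only [Polynomial.map_add, Polynomial.map_sub, Polynomial.map_mul,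
      Polynomial.map_pow, Polynomial.map_X, Polynomial.map_C, Polynomial.map_one]
    norm_cast
  -- Cayley-Hamilton
  set P : ℂ[X] := (X - C a) ^ m with hP
  set Q : ℂ[X] := (X - C ((starRingEnd ℂ) a)) ^ m with hQ
  set A : Matrix (Fin n) (Fin n) ℂ := aeval Tc P with hA
  set A' : Matrix (Fin n) (Fin n) ℂ := aeval Tc Q with hA'
  have hAA' : A * A' = 0 := by
    rw [hA, hA', ← _root_.map_mul, hP, hQ, ← mul_pow, ← hcharc]
    exact Matrix.aeval_self_charpoly Tc
  -- the two generalized eigenspaces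
  set W : Submodule ℂ (Fin n → ℂ) := LinearMap.ker A.mulVecLin with hW
  set W' : Submodule ℂ (Fin n → ℂ) := LinearMap.ker A'.mulVecLin with hW'
  -- coprimality and Bezout
  have hcop : IsCoprime P Q :=
    (Polynomial.isCoprime_X_sub_C_of_isUnit_sub ((sub_ne_zero.mpr hane).isUnit)).pow
  obtain ⟨p, q, hpq⟩ := hcop
  have hsum : aeval Tc (p * P) + aeval Tc (q * Q) = 1 := by
    rw [← _root_.map_add, hpq, _root_.map_one]
  have hinf : W ⊓ W' = ⊥ := by
    rw [eq_bot_iff]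
    rintro x ⟨hx1, hx2⟩
    simp only [hW, hW', SetLike.mem_coe, LinearMap.mem_ker,
      Matrix.mulVecLin_apply] at hx1 hx2
    have hx : x = (aeval Tc (p * P) + aeval Tc (q * Q)) *ᵥ x := by
      rw [hsum, Matrix.one_mulVec]
    rw [Matrix.add_mulVec, _root_.map_mul, _root_.map_mul, ← hA, ← hA',
      ← Matrix.mulVec_mulVec, hx1, ← Matrix.mulVec_mulVec, hx2] at hx
    simpa using hx
  have hsup : W ⊔ W' = ⊤ := by
    rw [eq_top_iff]
    intro x _
    rw [Submodule.mem_sup]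
    refine ⟨aeval Tc (q * Q) *ᵥ x, ?_, aeval Tc (p * P) *ᵥ x, ?_, ?_⟩
    · simp only [hW, LinearMap.mem_ker, Matrix.mulVecLin_apply, Matrix.mulVec_mulVec]
      have h3 : A * aeval Tc (q * Q) = aeval Tc q * (A * A') := by
        rw [hA, hA', ← _root_.map_mul, ← _root_.map_mul, ← _root_.map_mul]
        congr 1
        ring
      rw [h3, hAA', mul_zero, Matrix.zero_mulVec]
    · simp only [hW', LinearMap.mem_ker, Matrix.mulVecLin_apply, Matrix.mulVec_mulVec]
      have h3 : A' * aeval Tc (p * P) = aeval Tc p * (A * A') := by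
        rw [hA, hA', ← _root_.map_mul, ← _root_.map_mul, ← _root_.map_mul]
        congr 1
        ring
      rw [h3, hAA', mul_zero, Matrix.zero_mulVec]
    · rw [← Matrix.add_mulVec, add_comm (aeval Tc (q*Q)) (aeval Tc (p*P)), hsum,
        Matrix.one_mulVec]
  -- explicit form of A and A'
  set G : Matrix (Fin n) (Fin n) ℂ := Tc - a • 1 with hG
  set G' : Matrix (Fin n) (Fin n) ℂ := Tc - ((starRingEnd ℂ) a) • 1 with hG'
  have hAG : A = G ^ m := by
    rw [hA, hP, _root_.map_pow, _root_.map_sub, aeval_X, aeval_C, hG,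
      Algebra.algebraMap_eq_smul_one]
  have hAG' : A' = G' ^ m := by
    rw [hA', hQ, _root_.map_pow, _root_.map_sub, aeval_X, aeval_C, hG',
      Algebra.algebraMap_eq_smul_one]
  -- conjugation relations
  have hstar_mulVec : ∀ (M : Matrix (Fin n) (Fin n) ℂ) (v : Fin n → ℂ),
      star (M *ᵥ v) = (M.map (starRingEnd ℂ)) *ᵥ (star v) := by
    intro M v
    funext i
    simp [Matrix.mulVec, dotProduct, Matrix.map_apply, map_sum]
  have hGconj : G.map (starRingEnd ℂ) = G' := by
    rw [hG, hG']
    ext i j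
    simp [Matrix.map_apply, Matrix.sub_apply, Matrix.smul_apply, Matrix.one_apply,
      smul_eq_mul, map_sub, _root_.map_mul, apply_ite (starRingEnd ℂ), hTc, hρ,
      Complex.ofRealHom_eq_coe, Complex.conj_ofReal]
  have hA'conj : A' = A.map (starRingEnd ℂ) := by
    rw [hAG, hAG', ← hGconj, ← RingHom.mapMatrix_apply, ← RingHom.mapMatrix_apply,
      _root_.map_pow]
  have hAconj : A = A'.map (starRingEnd ℂ) := by
    rw [hA'conj]
    ext i j
    simp [Matrix.map_apply]
  -- dimension count
  have hrank : A'.rank = A.rank := by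
    have h1 : A' = (Aᴴ)ᵀ := by
      rw [hA'conj]
      ext i j
      simp [Matrix.conjTranspose_apply, Matrix.map_apply, Matrix.transpose_apply]
    rw [h1, Matrix.rank_transpose]
    open ComplexOrder in exact Matrix.rank_conjTranspose A
  have hfinW : Module.finrank ℂ W + A.rank = n := by
    have h := LinearMap.finrank_range_add_finrank_ker A.mulVecLin
    rw [Module.finrank_pi, Fintype.card_fin, ← hW] at h
    have h2 : A.rank = Module.finrank ℂ (LinearMap.range A.mulVecLin) := rfl
    rw [h2]
    linarith
  have hfinW' : Module.finrank ℂ W' + A.rank = n := by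
    have h := LinearMap.finrank_range_add_finrank_ker A'.mulVecLin
    rw [Module.finrank_pi, Fintype.card_fin, ← hW'] at h
    have h2 : A'.rank = Module.finrank ℂ (LinearMap.range A'.mulVecLin) := rfl
    rw [← hrank, h2]
    linarith
  have hWm : Module.finrank ℂ W = m := by
    have h1 := Submodule.finrank_sup_add_finrank_inf_eq W W'
    rw [hsup, hinf, finrank_top, finrank_bot, Module.finrank_pi, Fintype.card_fin] at h1
    linarith
  -- basis of W and its conjugate
  set bW : Module.Basis (Fin m) ℂ W := Module.finBasisOfFinrankEq ℂ W hWm with hbW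
  set u : Fin m → (Fin n → ℂ) := fun i => (bW i : Fin n → ℂ) with hu
  set w : Fin m → (Fin n → ℂ) := fun i => star (u i) with hw
  have hu_mem : ∀ i, u i ∈ W := fun i => (bW i).2
  have hstar_u : ∀ i, star (w i) = u i := by
    intro i
    rw [hw]
    exact star_star _
  have hu_li : LinearIndependent ℂ u :=
    bW.linearIndependent.map' W.subtype (Submodule.ker_subtype W)
  have hspan_u : Submodule.span ℂ (Set.range u) = W := by
    have h1 := bW.span_eq
    have h2 : Set.range u = W.subtype '' Set.range bW := by
      rw [← Set.range_comp]
      rfl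
    rw [h2, ← Submodule.map_span, h1, Submodule.map_top, Submodule.range_subtype]
  -- reality of S
  have hSc_real : Sc.map (starRingEnd ℂ) = Sc := by
    rw [hSc]
    ext i j
    simp [Matrix.map_apply, hρ, Complex.ofRealHom_eq_coe, Complex.conj_ofReal]
  -- the anticommutation relation, iterated
  have hsingle : G' * Sc = (-((starRingEnd ℂ) a)) • (Tc * Sc * G) := by
    have e1 : (((starRingEnd ℂ) a) • (1 : Matrix (Fin n) (Fin n) ℂ)) * Sc
        = ((starRingEnd ℂ) a) • Sc := by rw [smul_mul_assoc, one_mul]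
    have e2 : (Tc * Sc) * (a • (1 : Matrix (Fin n) (Fin n) ℂ)) = a • (Tc * Sc) := by
      rw [mul_smul_comm, mul_one]
    have e3 : (-((starRingEnd ℂ) a)) * a = -1 := by
      rw [neg_mul, mul_comm, hmula]
    rw [hG', hG, sub_mul, e1, mul_sub, e2, hTSTc, smul_sub, smul_smul, e3]
    rw [neg_one_smul, sub_neg_eq_add, neg_smul]
    abel
  have hcommG'Tc : Commute G' Tc := by
    rw [hG']
    exact (Commute.refl Tc).sub_left ((Commute.one_left Tc).smul_left _)
  have hind : ∀ k : ℕ, G' ^ k * Sc = ((-((starRingEnd ℂ) a)) ^ k) • (Tc ^ k * Sc * G ^ k) := by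
    intro k
    induction k with
    | zero => simp
    | succ k ih =>
      have h1 : G' ^ (k+1) * Sc = G' * (G' ^ k * Sc) := by
        rw [pow_succ', mul_assoc]
      have h2 : G' * (Tc ^ k * Sc * G ^ k) = Tc ^ k * (G' * Sc) * G ^ k := by
        rw [← mul_assoc, ← mul_assoc, (hcommG'Tc.pow_right k).eq, mul_assoc (Tc ^ k) G' Sc]
      rw [h1, ih, mul_smul_comm, h2, hsingle, mul_smul_comm, smul_mul_assoc, smul_smul,
        ← pow_succ]
      congr 1
      calc Tc ^ k * (Tc * Sc * G) * G ^ k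
          = Tc ^ k * Tc * Sc * (G * G ^ k) := by simp only [mul_assoc]
      _ = Tc ^ (k+1) * Sc * G ^ (k+1) := by rw [← pow_succ, ← pow_succ']
  have hstep : A' * Sc = ((-((starRingEnd ℂ) a)) ^ m) • (Tc ^ m * Sc * A) := by
    rw [hAG, hAG']
    exact hind m
  -- S maps W into W'
  have hmapS : ∀ v ∈ W, Sc *ᵥ v ∈ W' := by
    intro v hv
    rw [hW, LinearMap.mem_ker, Matrix.mulVecLin_apply] at hv
    rw [hW', LinearMap.mem_ker, Matrix.mulVecLin_apply]
    rw [Matrix.mulVec_mulVec, hstep, Matrix.smul_mulVec, mul_assoc,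
      ← Matrix.mulVec_mulVec, ← Matrix.mulVec_mulVec, hv, Matrix.mulVec_zero,
      Matrix.mulVec_zero, smul_zero]
  -- w i lies in W'
  have hw_mem : ∀ i, w i ∈ W' := by
    intro i
    rw [hW', LinearMap.mem_ker, Matrix.mulVecLin_apply]
    rw [hw, hA'conj, ← hstar_mulVec]
    have h1 : A *ᵥ u i = 0 := by
      have h2 := hu_mem i
      rw [hW, LinearMap.mem_ker, Matrix.mulVecLin_apply] at h2
      exact h2
    rw [h1]
    simp
  -- span of w is W'
  have hstar_span : ∀ y ∈ Submodule.span ℂ (Set.range u),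
      star y ∈ Submodule.span ℂ (Set.range w) := by
    intro y hy
    induction hy using Submodule.span_induction with
    | mem x hx =>
      obtain ⟨i, rfl⟩ := hx
      exact Submodule.subset_span ⟨i, rfl⟩
    | zero => simp
    | add x y _ _ hx hy => rw [star_add]; exact Submodule.add_mem _ hx hy
    | smul c x _ hx =>
      rw [star_smul]
      exact Submodule.smul_mem _ _ hx
  have hspan_w : Submodule.span ℂ (Set.range w) = W' := by
    apply le_antisymm
    · rw [Submodule.span_le]
      rintro x ⟨i, rfl⟩
      exact hw_mem i
    · intro x hx
      have hsx : star x ∈ W := by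
        rw [hW, LinearMap.mem_ker, Matrix.mulVecLin_apply]
        rw [hAconj, ← hstar_mulVec]
        have h1 : A' *ᵥ x = 0 := by
          rw [hW', LinearMap.mem_ker, Matrix.mulVecLin_apply] at hx
          exact hx
        rw [h1]
        simp
      have h2 := hstar_span (star x) (by rwa [hspan_u])
      rwa [star_star] at h2
  -- linear independence of w
  have hw_li : LinearIndependent ℂ w := by
    rw [Fintype.linearIndependent_iff]
    intro g hg i
    have h1 : ∑ j, (starRingEnd ℂ) (g j) • u j = 0 := by
      have h2 := congrArg star hg
      rw [star_sum] at h2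
      simpa [hw, star_smul, star_star] using h2
    have h3 := (Fintype.linearIndependent_iff.mp hu_li) (fun j => (starRingEnd ℂ) (g j)) h1 i
    simpa using congrArg star h3
  -- combined basis
  set e : Fin m ⊕ Fin m → (Fin n → ℂ) := Sum.elim u w with he
  have hli : LinearIndependent ℂ e := by
    apply LinearIndependent.sum_type hu_li hw_li
    rw [hspan_u, hspan_w]
    exact disjoint_iff.mpr hinf
  haveI : Nonempty (Fin m) := ⟨⟨0, hmpos⟩⟩
  have hcard : Fintype.card (Fin m ⊕ Fin m) = Module.finrank ℂ (Fin n → ℂ) := by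
    rw [Module.finrank_pi, Fintype.card_fin, Fintype.card_sum, Fintype.card_fin]
    omega
  set be : Module.Basis (Fin m ⊕ Fin m) ℂ (Fin n → ℂ) :=
    basisOfLinearIndependentOfCardEqFinrank hli hcard with hbe
  have hbe_eq : ∀ i, be i = e i := by
    intro i
    rw [hbe, coe_basisOfLinearIndependentOfCardEqFinrank]
  -- coordinates of elements of W' vanish on the inl block
  have hvan : ∀ x ∈ W', ∀ k, be.repr x (Sum.inl k) = 0 := by
    intro x hx k
    rw [← hspan_w] at hx
    have hker : Submodule.span ℂ (Set.range w) ≤ LinearMap.ker (be.coord (Sum.inl k)) := by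
      rw [Submodule.span_le]
      rintro y ⟨i, rfl⟩
      simp only [SetLike.mem_coe, LinearMap.mem_ker, Module.Basis.coord_apply]
      have h1 : w i = be (Sum.inr i) := by rw [hbe_eq (Sum.inr i), he]; rfl
      rw [h1, Module.Basis.repr_self]
      simp [Finsupp.single_apply]
    have h2 := hker hx
    simpa [Module.Basis.coord_apply] using h2
  -- the block matrix entries
  set B : Matrix (Fin m) (Fin m) ℂ := Matrix.of fun j i => be.repr (Sc *ᵥ u i) (Sum.inr j)
    with hB
  have hSu_expand : ∀ i, Sc *ᵥ u i = ∑ j, B j i • w j := by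
    intro i
    have hmem : Sc *ᵥ u i ∈ W' := hmapS _ (hu_mem i)
    have h1 := be.sum_repr (Sc *ᵥ u i)
    rw [Fintype.sum_sum_type] at h1
    have h2 : ∀ j : Fin m, be.repr (Sc *ᵥ u i) (Sum.inl j) • be (Sum.inl j) = 0 := by
      intro j
      rw [hvan _ hmem j, zero_smul]
    rw [Finset.sum_congr rfl (fun j _ => h2 j), Finset.sum_const_zero, zero_add] at h1
    rw [← h1]
    apply Finset.sum_congr rfl
    intro j _
    rw [hB, hbe_eq (Sum.inr j), he]
    rfl
  have hSw_expand : ∀ i, Sc *ᵥ w i = ∑ j, (starRingEnd ℂ) (B j i) • u j := by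
    intro i
    have h1 : Sc *ᵥ w i = star (Sc *ᵥ u i) := by
      rw [hstar_mulVec, hSc_real, hw]
    rw [h1, hSu_expand i, star_sum]
    apply Finset.sum_congr rfl
    intro j _
    rw [star_smul, hstar_u]
    rfl
  -- matrix of Sc in the basis be
  have hM : LinearMap.toMatrix be be Sc.mulVecLin =
      Matrix.fromBlocks 0 (B.map (starRingEnd ℂ)) B 0 := by
    ext r c
    rw [LinearMap.toMatrix_apply, Matrix.mulVecLin_apply]
    cases c with
    | inl i =>
      have h1 : Sc *ᵥ be (Sum.inl i) = ∑ j, B j i • be (Sum.inr j) := by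
        rw [hbe_eq (Sum.inl i), he]
        show Sc *ᵥ u i = _
        rw [hSu_expand i]
        exact Finset.sum_congr rfl fun j _ => by rw [hbe_eq (Sum.inr j), he]; rfl
      rw [h1, map_sum]
      cases r with
      | inl k =>
        simp [Module.Basis.repr_self, Finsupp.single_apply, Matrix.fromBlocks]
      | inr k =>
        simp [Module.Basis.repr_self, Finsupp.single_apply, Matrix.fromBlocks]
    | inr i =>
      have h1 : Sc *ᵥ be (Sum.inr i) = ∑ j, (starRingEnd ℂ) (B j i) • be (Sum.inl j) := by
        rw [hbe_eq (Sum.inr i), he]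
        show Sc *ᵥ w i = _
        rw [hSw_expand i]
        exact Finset.sum_congr rfl fun j _ => by rw [hbe_eq (Sum.inl j), he]; rfl
      rw [h1, map_sum]
      cases r with
      | inl k =>
        simp [Module.Basis.repr_self, Finsupp.single_apply, Matrix.fromBlocks, Matrix.map_apply]
      | inr k =>
        simp [Module.Basis.repr_self, Finsupp.single_apply, Matrix.fromBlocks]
  -- compute the determinant
  have hdet1 : Sc.det = (LinearMap.toMatrix be be Sc.mulVecLin).det := by
    rw [LinearMap.det_toMatrix, ← Matrix.toLin'_apply', LinearMap.det_toLin']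
  have hdet2 : Sc.det = (-1 : ℂ) ^ m * B.det * (B.map (starRingEnd ℂ)).det := by
    rw [hdet1, hM, detBlocksAux]
  have hdet3 : (B.map (starRingEnd ℂ)).det = (starRingEnd ℂ) B.det := by
    have h := RingHom.map_det (starRingEnd ℂ) B
    rw [RingHom.mapMatrix_apply] at h
    exact h.symm
  have hdetSc : (S.det : ℂ) = Sc.det := by
    have h := RingHom.map_det ρ S
    rw [RingHom.mapMatrix_apply] at h
    rw [hSc]
    exact h
  -- conclude
  have hfinal : (S.det : ℂ) = (((-1 : ℝ) ^ m * Complex.normSq B.det : ℝ) : ℂ) := by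
    rw [hdetSc, hdet2, hdet3, mul_assoc, Complex.mul_conj]
    push_cast
    ring
  have hreal : S.det = (-1 : ℝ) ^ m * Complex.normSq B.det := by
    exact_mod_cast hfinal
  have hns : (0 : ℝ) ≤ Complex.normSq B.det := Complex.normSq_nonneg _
  have hone : Complex.normSq B.det = 1 := by
    have h1 : S.det ^ 2 = 1 := by
      rw [sq]
      exact hdetS
    rw [hreal] at h1
    have h2 : ((-1 : ℝ) ^ m) ^ 2 = 1 := by
      rw [← pow_mul, mul_comm, pow_mul]
      norm_num
    have h3 : (Complex.normSq B.det : ℝ) ^ 2 = 1 := by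
      calc (Complex.normSq B.det : ℝ) ^ 2
          = ((-1 : ℝ) ^ m) ^ 2 * (Complex.normSq B.det : ℝ) ^ 2 := by rw [h2, one_mul]
      _ = ((-1 : ℝ) ^ m * Complex.normSq B.det) ^ 2 := by ring
      _ = 1 := h1
    nlinarith
  rw [hreal, hone, mul_one]
end
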